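/- arXiv:0806.4730 — 8 statements merged into one kernel-verified Lean document; each statement's English description precedes it below -/
import Mathlib

section
/- Let f : [0,1] → ℝ be a measurable bounded function and f* its increasing rearrangement. Then f and f* are equimeasurable: for every y ∈ ℝ, Leb{x ∈ [0,1] : f(x) ≤ y} = Leb{x ∈ [0,1] : f*(x) ≤ y}. -/
open MeasureTheory

/-- Increasing rearrangement of a function on [0,1]. -/
noncomputable def rearr (f : ℝ → ℝ) (x : ℝ) : ℝ :=
  sInf {y : ℝ | x ≤ (volume (Set.Icc (0:ℝ) 1 ∩ {u : ℝ | f u ≤ y})).toReal}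

/-- `f` and its increasing rearrangement `f*` are equimeasurable. -/
theorem rearr_equimeasurable (f : ℝ → ℝ) (hf : Measurable f)
    (hbd : ∃ M : ℝ, ∀ x ∈ Set.Icc (0:ℝ) 1, |f x| ≤ M) :
    ∀ y : ℝ,
      volume (Set.Icc (0:ℝ) 1 ∩ {x : ℝ | f x ≤ y}) =
        volume (Set.Icc (0:ℝ) 1 ∩ {x : ℝ | rearr f x ≤ y}) := by
  obtain ⟨M, hM⟩ := hbd
  set F : ℝ → ℝ := fun y => (volume (Set.Icc (0:ℝ) 1 ∩ {u : ℝ | f u ≤ y})).toReal with hFdef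
  have hfin : ∀ y : ℝ, volume (Set.Icc (0:ℝ) 1 ∩ {u : ℝ | f u ≤ y}) ≠ ⊤ := by
    intro y
    have h1 : volume (Set.Icc (0:ℝ) 1 ∩ {u : ℝ | f u ≤ y}) ≤ volume (Set.Icc (0:ℝ) 1) :=
      measure_mono Set.inter_subset_left
    have h2 : volume (Set.Icc (0:ℝ) 1) = 1 := by simp [Real.volume_Icc]
    exact ne_top_of_le_ne_top (by simp [h2]) h1
  have hmono : Monotone F := by
    intro a b hab
    exact ENNReal.toReal_mono (hfin b)
      (measure_mono (Set.inter_subset_inter_right _ (fun u hu => le_trans hu hab)))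
  have hFM : ∀ z : ℝ, M ≤ z → F z = 1 := by
    intro z hz
    have h : Set.Icc (0:ℝ) 1 ∩ {u : ℝ | f u ≤ z} = Set.Icc 0 1 := by
      apply Set.inter_eq_left.mpr
      intro u hu
      exact le_trans (le_trans (le_abs_self _) (hM u hu)) hz
    simp [hFdef, h, Real.volume_Icc]
  have hF1 : ∀ y : ℝ, F y ≤ 1 := by
    intro y
    have h1 : volume (Set.Icc (0:ℝ) 1 ∩ {u : ℝ | f u ≤ y}) ≤ volume (Set.Icc (0:ℝ) 1) :=
      measure_mono Set.inter_subset_left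
    have := ENNReal.toReal_mono (by simp [Real.volume_Icc]) h1
    simpa [Real.volume_Icc] using this
  -- right continuity of F
  have hrc : ∀ y x : ℝ, (∀ ε > (0:ℝ), x ≤ F (y + ε)) → x ≤ F y := by
    intro y x hx
    set A : ℕ → Set ℝ := fun n => Set.Icc (0:ℝ) 1 ∩ {u : ℝ | f u ≤ y + 1 / (n + 1)} with hA
    have hInter : (⋂ n, A n) = Set.Icc (0:ℝ) 1 ∩ {u : ℝ | f u ≤ y} := by
      ext u
      simp only [Set.mem_iInter, hA, Set.mem_inter_iff, Set.mem_setOf_eq]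
      constructor
      · intro h
        refine ⟨(h 0).1, ?_⟩
        have : ∀ ε > (0:ℝ), f u ≤ y + ε := by
          intro ε hε
          obtain ⟨n, hn⟩ := exists_nat_one_div_lt hε
          exact le_trans (h n).2 (by linarith)
        linarith [le_of_forall_pos_le_add this]
      · intro ⟨h1, h2⟩ n
        have hp : (0:ℝ) < 1 / (n + 1) := by positivity
        exact ⟨h1, by linarith⟩
    have hmeasure : volume (⋂ n, A n) = ⨅ n, volume (A n) := by
      apply Directed.measure_iInter
      · exact fun n => (measurableSet_Icc.inter (hf measurableSet_Iic)).nullMeasurableSet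
      · intro a b
        refine ⟨max a b, ?_, ?_⟩ <;>
        · apply Set.inter_subset_inter_right
          intro u hu
          refine le_trans hu (add_le_add_right ?_ y)
          apply one_div_le_one_div_of_le (by positivity)
          push_cast
          simp [le_max_iff]
      · exact ⟨0, hfin _⟩
    have hle : x ≤ ⨅ n : ℕ, F (y + 1 / (n + 1)) := by
      apply le_ciInf
      intro n
      exact hx _ (by positivity)
    calc x ≤ ⨅ n : ℕ, F (y + 1 / (n + 1)) := hle
      _ = (⨅ n : ℕ, volume (A n)).toReal := by
          rw [ENNReal.toReal_iInf (fun n => hfin _)]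
      _ = F y := by rw [← hmeasure, hInter]
  -- the key equivalence
  have hkey : ∀ x ∈ Set.Ioc (0:ℝ) 1, ∀ y : ℝ, (rearr f x ≤ y ↔ x ≤ F y) := by
    intro x hx y
    set S : Set ℝ := {z : ℝ | x ≤ F z} with hS
    have hSne : S.Nonempty := ⟨M, by simp [hS, hFM M le_rfl, hx.2]⟩
    have hSbdd : BddBelow S := by
      refine ⟨-M, fun z hz => ?_⟩
      by_contra hc
      push_neg at hc
      have hempty : Set.Icc (0:ℝ) 1 ∩ {u : ℝ | f u ≤ z} = ∅ := by
        ext u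
        simp only [Set.mem_inter_iff, Set.mem_setOf_eq, Set.mem_empty_iff_false, iff_false]
        rintro ⟨hu, hfu⟩
        have := abs_le.mp (hM u hu)
        linarith
      have : F z = 0 := by simp [hFdef, hempty]
      have := hz
      simp only [hS, Set.mem_setOf_eq] at this
      linarith [hx.1]
    constructor
    · intro h
      apply hrc
      intro ε hε
      have : sInf S < y + ε := lt_of_le_of_lt h (by linarith)
      obtain ⟨z, hzS, hz⟩ := exists_lt_of_csInf_lt hSne this
      exact le_trans hzS (hmono (le_of_lt hz))
    · intro h
      exact csInf_le hSbdd h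
  intro y
  have hset : Set.Ioc (0:ℝ) 1 ∩ {x : ℝ | rearr f x ≤ y} = Set.Ioc 0 (F y) := by
    ext x
    simp only [Set.mem_inter_iff, Set.mem_Ioc, Set.mem_setOf_eq]
    constructor
    · rintro ⟨⟨h0, h1⟩, hr⟩
      exact ⟨h0, (hkey x ⟨h0, h1⟩ y).mp hr⟩
    · rintro ⟨h0, ht⟩
      have h1 : x ≤ 1 := le_trans ht (hF1 y)
      exact ⟨⟨h0, h1⟩, (hkey x ⟨h0, h1⟩ y).mpr ht⟩
  have hae : (Set.Icc (0:ℝ) 1 ∩ {x : ℝ | rearr f x ≤ y} : Set ℝ) =ᵐ[volume]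
      (Set.Ioc (0:ℝ) 1 ∩ {x : ℝ | rearr f x ≤ y} : Set ℝ) :=
    Filter.EventuallyEq.inter
      ((MeasureTheory.Ioc_ae_eq_Icc (μ := volume) (a := (0:ℝ)) (b := 1)).symm)
      (Filter.EventuallyEq.refl _ {x : ℝ | rearr f x ≤ y})
  rw [measure_congr hae, hset, Real.volume_Ioc]
  rw [sub_zero, hFdef]
  exact (ENNReal.ofReal_toReal (hfin y)).symm
end

section
/- For every p ∈ [1,∞), the function L(v,t) = |v - t|^p on ℝ² is submodular: for all (v,t), (v',t'), |min(v,v') - min(t,t')|^p + |max(v,v') - max(t,t')|^p ≤ |v-t|^p + |v'-t'|^p. -/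
lemma convexOn_abs_rpow (p : ℝ) (hp : 1 ≤ p) :
    ConvexOn ℝ Set.univ (fun x : ℝ => |x| ^ p) := by
  have himg : (fun x : ℝ => |x|) '' Set.univ = Set.Ici 0 := by
    ext x
    simp only [Set.image_univ, Set.mem_range, Set.mem_Ici]
    constructor
    · rintro ⟨y, rfl⟩; exact abs_nonneg y
    · intro hx; exact ⟨x, abs_of_nonneg hx⟩
  have hg : ConvexOn ℝ ((fun x : ℝ => |x|) '' Set.univ) (fun x : ℝ => x ^ p) := by
    rw [himg]; exact convexOn_rpow hp
  have hmono : MonotoneOn (fun x : ℝ => x ^ p) ((fun x : ℝ => |x|) '' Set.univ) := by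
    rw [himg]
    intro a ha b hb hab
    exact Real.rpow_le_rpow ha hab (by linarith)
  have habs : ConvexOn ℝ Set.univ (fun x : ℝ => |x|) := by
    have := convexOn_univ_norm (E := ℝ)
    exact this
  exact hg.comp habs hmono

lemma convex_shift_key (f : ℝ → ℝ) (hf : ConvexOn ℝ Set.univ f) {x y c : ℝ}
    (hxy : x ≤ y) (hc : 0 ≤ c) : f (x + c) + f y ≤ f x + f (y + c) := by
  rcases hc.eq_or_lt with rfl | hc
  · simp
  have h1 : (f (x + c) - f x) / (x + c - x) ≤ (f (y + c) - f x) / (y + c - x) :=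
    hf.secant_mono (Set.mem_univ _) (Set.mem_univ _) (Set.mem_univ _)
      (by intro h; nlinarith) (by intro h; nlinarith) (by linarith)
  have h2 : (f x - f (y + c)) / (x - (y + c)) ≤ (f y - f (y + c)) / (y - (y + c)) :=
    hf.secant_mono (Set.mem_univ _) (Set.mem_univ _) (Set.mem_univ _)
      (by intro h; nlinarith) (by intro h; nlinarith) hxy
  have e0 : (f x - f (y + c)) / (x - (y + c)) = (f (y + c) - f x) / (y + c - x) := by
    rw [← neg_sub (f (y + c)) (f x), ← neg_sub (y + c) x, neg_div_neg_eq]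
  have e0' : (f y - f (y + c)) / (y - (y + c)) = (f (y + c) - f y) / (y + c - y) := by
    rw [← neg_sub (f (y + c)) (f y), ← neg_sub (y + c) y, neg_div_neg_eq]
  rw [e0, e0'] at h2
  have h3 : (f (x + c) - f x) / (x + c - x) ≤ (f (y + c) - f y) / (y + c - y) :=
    h1.trans h2
  have e1 : x + c - x = c := by ring
  have e2 : y + c - y = c := by ring
  rw [e1, e2, div_le_div_iff_of_pos_right hc] at h3
  linarith

/-- For every `p ∈ [1, ∞)`, the function `L(v,t) = |v - t|^p` is submodular. -/
theorem abs_rpow_submodular (p : ℝ) (hp : 1 ≤ p) :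
    ∀ v t v' t' : ℝ,
      |min v v' - min t t'| ^ p + |max v v' - max t t'| ^ p ≤
        |v - t| ^ p + |v' - t'| ^ p := by
  intro v t v' t'
  set f : ℝ → ℝ := fun x => |x| ^ p with hf
  have hconv : ConvexOn ℝ Set.univ f := convexOn_abs_rpow p hp
  rcases le_total v v' with hv | hv <;> rcases le_total t t' with ht | ht
  · rw [min_eq_left hv, min_eq_left ht, max_eq_right hv, max_eq_right ht]
  · rw [min_eq_left hv, min_eq_right ht, max_eq_right hv, max_eq_left ht]
    have := convex_shift_key f hconv (x := v - t) (y := v' - t) (c := t - t')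
      (by linarith) (by linarith)
    have e1 : v - t + (t - t') = v - t' := by ring
    have e2 : v' - t + (t - t') = v' - t' := by ring
    rw [e1, e2] at this
    linarith
  · rw [min_eq_right hv, min_eq_left ht, max_eq_left hv, max_eq_right ht]
    have := convex_shift_key f hconv (x := v' - t') (y := v - t') (c := t' - t)
      (by linarith) (by linarith)
    have e1 : v' - t' + (t' - t) = v' - t := by ring
    have e2 : v - t' + (t' - t) = v - t := by ring
    rw [e1, e2] at this
    linarith
  · rw [min_eq_right hv, min_eq_right ht, max_eq_left hv, max_eq_left ht]
    linarith
end

section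
/- For p ∈ (1,∞) and ε > 0, let K ⊂ ℝ be a compact set. Then η_p := inf { |v - t'|^p + |v' - t|^p - |v - t|^p - |v' - t'|^p : v, v', t, t' ∈ K, v' ≥ v + ε, t' ≥ t + ε } is strictly positive. -/
lemma strictConvexOn_abs_rpow {p : ℝ} (hp : 1 < p) :
    StrictConvexOn ℝ Set.univ (fun x : ℝ => |x| ^ p) := by
  have hp0 : (0:ℝ) < p := lt_trans zero_lt_one hp
  refine ⟨convex_univ, ?_⟩
  intro x _ y _ hxy a b ha hb hab
  simp only [smul_eq_mul]
  have habs : |a * x + b * y| ≤ a * |x| + b * |y| := by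
    calc |a * x + b * y| ≤ |a * x| + |b * y| := abs_add_le _ _
    _ = a * |x| + b * |y| := by
        rw [abs_mul, abs_mul, abs_of_pos ha, abs_of_pos hb]
  have hconv : (a * |x| + b * |y|) ^ p ≤ a * |x| ^ p + b * |y| ^ p ∨
      (a * |x| + b * |y|) ^ p < a * |x| ^ p + b * |y| ^ p := by
    rcases eq_or_ne |x| |y| with h | h
    · left
      have := (convexOn_rpow hp.le).2 (Set.mem_Ici.mpr (abs_nonneg x))
        (Set.mem_Ici.mpr (abs_nonneg y)) ha.le hb.le hab
      simpa using this
    · right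
      have := (strictConvexOn_rpow hp).2 (Set.mem_Ici.mpr (abs_nonneg x))
        (Set.mem_Ici.mpr (abs_nonneg y)) h ha hb hab
      simpa using this
  rcases lt_or_eq_of_le habs with hlt | heq
  · have h1 : |a * x + b * y| ^ p < (a * |x| + b * |y|) ^ p :=
      Real.rpow_lt_rpow (abs_nonneg _) hlt hp0
    rcases hconv with h2 | h2
    · exact lt_of_lt_of_le h1 h2
    · exact lt_trans h1 h2
  · have hne : |x| ≠ |y| := by
      intro h
      rcases abs_eq_abs.mp h with h' | h'
      · exact hxy h'
      · subst h'
        have hy0 : y ≠ 0 := by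
          intro h0; apply hxy; simp [h0]
        have hre : a * -y + b * y = (b - a) * y := by ring
        rw [hre, abs_mul, abs_neg] at heq
        have hd : |b - a| < a + b := abs_sub_lt_iff.mpr ⟨by linarith, by linarith⟩
        have hyy : (0:ℝ) < |y| := abs_pos.mpr hy0
        nlinarith [abs_nonneg (b - a)]
    have := (strictConvexOn_rpow hp).2 (Set.mem_Ici.mpr (abs_nonneg x))
      (Set.mem_Ici.mpr (abs_nonneg y)) hne ha hb hab
    rw [heq]
    simpa [smul_eq_mul] using this

lemma key_rpow {p : ℝ} (hp : 1 < p) {a b c d : ℝ} (hab : a < b) (hac : a < c)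
    (hsum : a + d = b + c) : |b| ^ p + |c| ^ p < |a| ^ p + |d| ^ p := by
  have hbd : b < d := by linarith
  have had : a < d := lt_trans hab hbd
  set lb : ℝ := (d - b) / (d - a) with hlb
  have hda : (0:ℝ) < d - a := by linarith
  have hlb0 : 0 < lb := div_pos (by linarith) hda
  have hlb1 : lb < 1 := (div_lt_one hda).mpr (by linarith)
  have hbval : lb • a + (1 - lb) • d = b := by
    simp only [smul_eq_mul, hlb]; field_simp; ring
  have hcval : (1 - lb) • a + lb • d = c := by
    simp only [smul_eq_mul, hlb]; field_simp; nlinarith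
  have f := strictConvexOn_abs_rpow hp
  have h1 := f.2 (Set.mem_univ a) (Set.mem_univ d) (ne_of_lt had) hlb0
    (by linarith : (0:ℝ) < 1 - lb) (by ring)
  have h2 := f.2 (Set.mem_univ a) (Set.mem_univ d) (ne_of_lt had)
    (by linarith : (0:ℝ) < 1 - lb) hlb0 (by ring)
  rw [hbval] at h1
  rw [hcval] at h2
  dsimp at h1 h2
  nlinarith

/-- Strict submodularity modulus of `|v - t|^p` over a compact set:
the infimal gain from sorting an `ε`-discordant pair is strictly positive. -/
theorem eta_p_pos (p : ℝ) (hp1 : 1 < p) (ε : ℝ) (hε : 0 < ε)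
    (K : Set ℝ) (hK : IsCompact K)
    (hne : ∃ v v' : ℝ, v ∈ K ∧ v' ∈ K ∧ v + ε ≤ v') :
    0 < sInf {r : ℝ | ∃ v v' t t' : ℝ, v ∈ K ∧ v' ∈ K ∧ t ∈ K ∧ t' ∈ K ∧
      v + ε ≤ v' ∧ t + ε ≤ t' ∧
      r = |v - t'| ^ p + |v' - t| ^ p - |v - t| ^ p - |v' - t'| ^ p} := by
  have hp0 : (0:ℝ) ≤ p := by linarith
  set f : ℝ × ℝ × ℝ × ℝ → ℝ := fun q =>
    |q.1 - q.2.2.2| ^ p + |q.2.1 - q.2.2.1| ^ p - |q.1 - q.2.2.1| ^ p - |q.2.1 - q.2.2.2| ^ p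
    with hf
  set S : Set (ℝ × ℝ × ℝ × ℝ) := {q | q.1 ∈ K ∧ q.2.1 ∈ K ∧ q.2.2.1 ∈ K ∧ q.2.2.2 ∈ K ∧
    q.1 + ε ≤ q.2.1 ∧ q.2.2.1 + ε ≤ q.2.2.2} with hS
  have hAeq : {r : ℝ | ∃ v v' t t' : ℝ, v ∈ K ∧ v' ∈ K ∧ t ∈ K ∧ t' ∈ K ∧
      v + ε ≤ v' ∧ t + ε ≤ t' ∧
      r = |v - t'| ^ p + |v' - t| ^ p - |v - t| ^ p - |v' - t'| ^ p} = f '' S := by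
    ext r
    constructor
    · rintro ⟨v, v', t, t', h1, h2, h3, h4, h5, h6, h7⟩
      exact ⟨(v, v', t, t'), ⟨h1, h2, h3, h4, h5, h6⟩, h7.symm⟩
    · rintro ⟨⟨v, v', t, t'⟩, ⟨h1, h2, h3, h4, h5, h6⟩, h7⟩
      exact ⟨v, v', t, t', h1, h2, h3, h4, h5, h6, h7.symm⟩
  have habs : ∀ (g : ℝ × ℝ × ℝ × ℝ → ℝ), Continuous g →
      Continuous (fun q => |g q| ^ p) := by
    intro g hg
    exact (hg.abs).rpow_const (fun _ => Or.inr hp0)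
  have c1 : Continuous fun q : ℝ × ℝ × ℝ × ℝ => |q.1 - q.2.2.2| ^ p :=
    habs _ (by fun_prop)
  have c2 : Continuous fun q : ℝ × ℝ × ℝ × ℝ => |q.2.1 - q.2.2.1| ^ p :=
    habs _ (by fun_prop)
  have c3 : Continuous fun q : ℝ × ℝ × ℝ × ℝ => |q.1 - q.2.2.1| ^ p :=
    habs _ (by fun_prop)
  have c4 : Continuous fun q : ℝ × ℝ × ℝ × ℝ => |q.2.1 - q.2.2.2| ^ p :=
    habs _ (by fun_prop)
  have hfc : Continuous f := ((c1.add c2).sub c3).sub c4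
  have hc := hK.isClosed
  have hSclosed : IsClosed S := by
    rw [hS]
    simp only [Set.setOf_and]
    exact (hc.preimage continuous_fst).inter ((hc.preimage continuous_snd.fst).inter
      ((hc.preimage continuous_snd.snd.fst).inter ((hc.preimage continuous_snd.snd.snd).inter
      ((isClosed_le (continuous_fst.add continuous_const) continuous_snd.fst).inter
      (isClosed_le (continuous_snd.snd.fst.add continuous_const) continuous_snd.snd.snd)))))
  have hScpt : IsCompact S := by
    refine (hK.prod (hK.prod (hK.prod hK))).of_isClosed_subset hSclosed ?_
    rintro ⟨v, v', t, t'⟩ ⟨h1, h2, h3, h4, _, _⟩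
    exact ⟨h1, h2, h3, h4⟩
  obtain ⟨v₀, v₀', hv₀, hv₀', hvv₀⟩ := hne
  have hSne : S.Nonempty := ⟨(v₀, v₀', v₀, v₀'), hv₀, hv₀', hv₀, hv₀', hvv₀, hvv₀⟩
  rw [hAeq]
  have hmem := (hScpt.image hfc).sInf_mem (hSne.image f)
  obtain ⟨⟨v, v', t, t'⟩, ⟨h1, h2, h3, h4, h5, h6⟩, hr⟩ := hmem
  rw [← hr]
  have hk := key_rpow hp1 (a := v - t') (b := v - t) (c := v' - t') (d := v' - t)
    (by linarith) (by linarith) (by ring)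
  show 0 < |v - t'| ^ p + |v' - t| ^ p - |v - t| ^ p - |v' - t'| ^ p
  linarith
end

section
/- (Lorentz inequality, finite version.) Let q, g ∈ ℝⁿ be vectors, and let q*, g* denote the vectors with the same entries sorted in increasing order. Then for any submodular function L : ℝ² → [0,∞), ∑ᵢ L(q*ᵢ, g*ᵢ) ≤ ∑ᵢ L(qᵢ, gᵢ). -/
open Finset Equiv Equiv.Perm Function

/-- Key lemma (adapted from Mathlib's rearrangement inequality proof): if `f` and `g`
monovary on `s`, then for a submodular `L` the aligned sum is minimal among permutations. -/
private theorem lorentz_key {ι : Type*} [DecidableEq ι] (L : ℝ → ℝ → ℝ)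
    (hsub : ∀ v t v' t' : ℝ,
      L (min v v') (min t t') + L (max v v') (max t t') ≤ L v t + L v' t')
    {f g : ι → ℝ} {s : Finset ι} (hfg : MonovaryOn f g s) {σ : Perm ι}
    (hσ : {x | σ x ≠ x} ⊆ s) :
    ∑ i ∈ s, L (f i) (g i) ≤ ∑ i ∈ s, L (f i) (g (σ i)) := by
  classical
  revert hσ σ hfg
  apply Finset.induction_on_max_value (fun i ↦ toLex (g i, f i))
    (motive := fun t ↦ MonovaryOn f g t → ∀ {σ : Perm ι}, {x | σ x ≠ x} ⊆ t →
      ∑ i ∈ t, L (f i) (g i) ≤ ∑ i ∈ t, L (f i) (g (σ i))) s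
  · simp only [le_rfl, Finset.sum_empty, imp_true_iff]
  intro a s has hamax hind hfg σ hσ
  set τ : Perm ι := σ.trans (swap a (σ a)) with hτ
  have hτs : {x | τ x ≠ x} ⊆ s := by
    intro x hx
    simp only [τ, Ne, Set.mem_setOf_eq, Equiv.coe_trans, Equiv.swap_comp_apply] at hx
    split_ifs at hx with h₁ h₂
    · obtain rfl | hax := eq_or_ne x a
      · contradiction
      · exact mem_of_mem_insert_of_ne (hσ fun h ↦ hax <| h.symm.trans h₁) hax
    · exact (hx <| σ.injective h₂.symm).elim
    · exact mem_of_mem_insert_of_ne (hσ hx) (ne_of_apply_ne _ h₂)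
  specialize hind (hfg.subset <| subset_insert _ _) hτs
  simp_rw [sum_insert has]
  refine le_trans (add_le_add_right hind _) ?_
  obtain hσa | hσa := eq_or_ne a (σ a)
  · rw [hτ, ← hσa, swap_self, trans_refl]
  have h1s : σ⁻¹ a ∈ s := by
    rw [Ne, ← inv_eq_iff_eq] at hσa
    refine mem_of_mem_insert_of_ne (hσ fun h ↦ hσa ?_) hσa
    rwa [((Equiv.Perm.eq_inv_iff_eq (f := σ) (x := σ⁻¹ a) (y := a)).mp rfl), eq_comm] at h
  simp only [← s.sum_erase_add _ h1s, add_comm]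
  rw [← add_assoc, ← add_assoc]
  simp only [hτ, swap_apply_left, Function.comp_apply, Equiv.coe_trans, ((Equiv.Perm.eq_inv_iff_eq (f := σ) (x := σ⁻¹ a) (y := a)).mp rfl)]
  refine add_le_add ?_ (sum_congr rfl fun x hx ↦ ?_).le
  · -- two-element submodular step
    have hf : f (σ⁻¹ a) ≤ f a := by
      specialize hamax (σ⁻¹ a) h1s
      rw [Prod.Lex.le_iff] at hamax
      rcases hamax with hamax | hamax
      · exact hfg (mem_insert_of_mem h1s) (mem_insert_self _ _) hamax
      · exact hamax.2
    have hg : g (σ a) ≤ g a := by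
      specialize hamax (σ a) (mem_of_mem_insert_of_ne (hσ <| σ.injective.ne hσa.symm) hσa.symm)
      rw [Prod.Lex.le_iff] at hamax
      rcases hamax with hamax | hamax
      · exact hamax.le
      · exact hamax.1.le
    have := hsub (f a) (g (σ a)) (f (σ⁻¹ a)) (g a)
    rw [min_eq_right hf, max_eq_left hf, min_eq_left hg, max_eq_right hg] at this
    linarith
  · rw [mem_erase, Ne, eq_inv_iff_eq] at hx
    rw [swap_apply_of_ne_of_ne hx.1 (σ.injective.ne _)]
    rintro rfl
    exact has hx.2

/-- Lorentz inequality, finite version: sorting both vectors in increasing order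
weakly reduces the sum of any submodular discrepancy. -/
theorem lorentz_finite (n : ℕ) (q g : Fin n → ℝ) (L : ℝ → ℝ → ℝ)
    (hL0 : ∀ v t, 0 ≤ L v t)
    (hsub : ∀ v t v' t' : ℝ,
      L (min v v') (min t t') + L (max v v') (max t t') ≤ L v t + L v' t') :
    ∑ i : Fin n, L (q (Tuple.sort q i)) (g (Tuple.sort g i)) ≤
      ∑ i : Fin n, L (q i) (g i) := by
  classical
  set σq := Tuple.sort q
  set σg := Tuple.sort g
  have hf : Monotone (q ∘ σq) := Tuple.monotone_sort q
  have hh : Monotone (g ∘ σg) := Tuple.monotone_sort g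
  have hrhs : ∑ i : Fin n, L (q i) (g i)
      = ∑ i : Fin n, L (q (σq i)) (g (σq i)) :=
    (Equiv.sum_comp σq (fun i => L (q i) (g i))).symm
  rw [hrhs]
  have key := lorentz_key L hsub (s := Finset.univ)
    ((hf.monovary hh).monovaryOn _) (σ := σq.trans σg⁻¹)
    (fun x _ => Finset.mem_univ x)
  simpa using key
end

section
/- Let f₀ : [0,1] → K be weakly increasing and measurable, and let f̂ : [0,1] → K be any measurable function, with K ⊂ ℝ bounded. Let f̂* be the increasing rearrangement of f̂. Then for every p ∈ [1,∞), (∫₀¹ |f̂*(x) - f₀(x)|^p dx)^{1/p} ≤ (∫₀¹ |f̂(x) - f₀(x)|^p dx)^{1/p}. -/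
open MeasureTheory Set
open scoped ENNReal

namespace RearrAux

noncomputable def Fd (f : ℝ → ℝ) (y : ℝ) : ℝ :=
  (volume (Set.Icc (0:ℝ) 1 ∩ {u : ℝ | f u ≤ y})).toReal

lemma rearr_eq (f : ℝ → ℝ) (x : ℝ) : rearr f x = sInf {y : ℝ | x ≤ Fd f y} := rfl

lemma meas_ne_top (S : Set ℝ) : volume (Set.Icc (0:ℝ) 1 ∩ S) ≠ ⊤ := by
  refine ne_of_lt (lt_of_le_of_lt (measure_mono inter_subset_left) ?_)
  simp [Real.volume_Icc]

lemma meas_ne_top' (S : Set ℝ) : volume (Set.Ioc (0:ℝ) 1 ∩ S) ≠ ⊤ := by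
  refine ne_of_lt (lt_of_le_of_lt (measure_mono inter_subset_left) ?_)
  simp [Real.volume_Ioc]

lemma vol_Icc_inter_eq_Ioc (S : Set ℝ) :
    volume (Set.Icc (0:ℝ) 1 ∩ S) = volume (Set.Ioc (0:ℝ) 1 ∩ S) := by
  refine measure_congr ?_
  exact Filter.EventuallyEq.inter (Ioc_ae_eq_Icc (μ := volume) (a := (0:ℝ)) (b := 1)).symm
    (by rfl)

lemma Fd_nonneg (f : ℝ → ℝ) (y : ℝ) : 0 ≤ Fd f y := ENNReal.toReal_nonneg

lemma Fd_mono (f : ℝ → ℝ) : Monotone (Fd f) := by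
  intro a b hab
  refine ENNReal.toReal_mono (meas_ne_top _) (measure_mono ?_)
  exact inter_subset_inter_right _ (fun u hu => le_trans hu hab)

lemma Fd_le_one (f : ℝ → ℝ) (y : ℝ) : Fd f y ≤ 1 := by
  have : volume (Set.Icc (0:ℝ) 1 ∩ {u : ℝ | f u ≤ y}) ≤ 1 := by
    refine le_trans (measure_mono inter_subset_left) ?_
    simp [Real.volume_Icc]
  simpa [Fd] using ENNReal.toReal_mono (by simp) this

lemma Fd_eq_one (f : ℝ → ℝ) {b₁ y : ℝ} (hb : ∀ x ∈ Set.Icc (0:ℝ) 1, f x ≤ b₁)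
    (hy : b₁ ≤ y) : Fd f y = 1 := by
  have : Set.Icc (0:ℝ) 1 ∩ {u : ℝ | f u ≤ y} = Set.Icc (0:ℝ) 1 := by
    refine inter_eq_left.2 (fun x hx => le_trans (hb x hx) hy)
  simp [Fd, this, Real.volume_Icc]

lemma Fd_eq_zero (f : ℝ → ℝ) {b₀ y : ℝ} (hb : ∀ x ∈ Set.Icc (0:ℝ) 1, b₀ ≤ f x)
    (hy : y < b₀) : Fd f y = 0 := by
  have : Set.Icc (0:ℝ) 1 ∩ {u : ℝ | f u ≤ y} = ∅ := by
    refine eq_empty_iff_forall_notMem.2 (fun x hx => ?_)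
    exact absurd (le_trans (hb x hx.1) hx.2) (not_le.2 hy)
  simp [Fd, this]

lemma Fd_right_cont (f : ℝ → ℝ) (hf : Measurable f) {x a : ℝ}
    (h : ∀ n : ℕ, x ≤ Fd f (a + ((n : ℝ) + 1)⁻¹)) : x ≤ Fd f a := by
  set E : ℕ → Set ℝ := fun n => Set.Icc (0:ℝ) 1 ∩ {u : ℝ | f u ≤ a + ((n : ℝ) + 1)⁻¹} with hE
  have hinter : ⋂ n, E n = Set.Icc (0:ℝ) 1 ∩ {u : ℝ | f u ≤ a} := by
    ext z
    simp only [hE, mem_iInter, mem_inter_iff, mem_setOf_eq]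
    constructor
    · rintro h1
      refine ⟨(h1 0).1, ?_⟩
      by_contra hz
      push_neg at hz
      obtain ⟨n, hn⟩ := exists_nat_one_div_lt (sub_pos.2 hz)
      have := (h1 n).2
      rw [one_div] at hn
      linarith
    · rintro ⟨h1, h2⟩ n
      refine ⟨h1, le_trans h2 (le_add_of_nonneg_right (by positivity))⟩
  have hmeas : ∀ n, NullMeasurableSet (E n) volume := fun n =>
    (measurableSet_Icc.inter (hf measurableSet_Iic)).nullMeasurableSet
  have hanti : Antitone E := by
    intro m n hmn
    refine inter_subset_inter_right _ (fun u hu => ?_)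
    simp only [mem_setOf_eq] at hu ⊢
    have hc : (m : ℝ) ≤ (n : ℝ) := Nat.cast_le.2 hmn
    have : ((n : ℝ) + 1)⁻¹ ≤ ((m : ℝ) + 1)⁻¹ := by
      apply inv_anti₀ (by positivity) (by linarith)
    linarith
  have htend := tendsto_measure_iInter_atTop hmeas hanti ⟨0, meas_ne_top _⟩
  rw [hinter] at htend
  have htoReal : Filter.Tendsto (fun n : ℕ => Fd f (a + ((n:ℝ)+1)⁻¹)) Filter.atTop
      (nhds (Fd f a)) := by
    have h2 := (ENNReal.tendsto_toReal (meas_ne_top ({u : ℝ | f u ≤ a}))).comp htend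
    simpa [Function.comp_def, Fd, hE] using h2
  exact ge_of_tendsto htoReal (Filter.Eventually.of_forall h)


section Quantile

variable {f : ℝ → ℝ} {b₀ b₁ : ℝ}

lemma Sx_bddBelow (hb₀ : ∀ x ∈ Set.Icc (0:ℝ) 1, b₀ ≤ f x) {x : ℝ} (hx : 0 < x) :
    BddBelow {y : ℝ | x ≤ Fd f y} := by
  refine ⟨b₀, fun y hy => ?_⟩
  by_contra hlt
  push_neg at hlt
  rw [mem_setOf_eq, Fd_eq_zero f hb₀ hlt] at hy
  linarith

lemma Sx_mem (hb₁ : ∀ x ∈ Set.Icc (0:ℝ) 1, f x ≤ b₁) {x y : ℝ} (hx : x ≤ 1) (hy : b₁ ≤ y) :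
    y ∈ {y : ℝ | x ≤ Fd f y} := by
  rw [mem_setOf_eq, Fd_eq_one f hb₁ hy]
  exact hx

lemma rearr_le_iff (hf : Measurable f)
    (hb₀ : ∀ x ∈ Set.Icc (0:ℝ) 1, b₀ ≤ f x) (hb₁ : ∀ x ∈ Set.Icc (0:ℝ) 1, f x ≤ b₁)
    {x a : ℝ} (hx : 0 < x) (hx1 : x ≤ 1) :
    rearr f x ≤ a ↔ x ≤ Fd f a := by
  constructor
  · intro h
    refine Fd_right_cont f hf (fun n => ?_)
    have hpos : (0:ℝ) < ((n:ℝ)+1)⁻¹ := by positivity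
    have hlt : sInf {y : ℝ | x ≤ Fd f y} < a + ((n:ℝ)+1)⁻¹ := by
      rw [← rearr_eq]; linarith
    obtain ⟨y, hy, hylt⟩ := exists_lt_of_csInf_lt ⟨b₁, Sx_mem hb₁ hx1 le_rfl⟩ hlt
    exact le_trans hy (Fd_mono f hylt.le)
  · intro h
    exact csInf_le (Sx_bddBelow hb₀ hx) h

lemma E1 (hf : Measurable f)
    (hb₀ : ∀ x ∈ Set.Icc (0:ℝ) 1, b₀ ≤ f x) (hb₁ : ∀ x ∈ Set.Icc (0:ℝ) 1, f x ≤ b₁)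
    (c : ℝ) :
    Set.Ioc (0:ℝ) 1 ∩ {x | c < rearr f x} = Set.Ioc (Fd f c) 1 := by
  ext x
  simp only [mem_inter_iff, mem_Ioc, mem_setOf_eq]
  constructor
  · rintro ⟨⟨hx0, hx1⟩, hc⟩
    refine ⟨?_, hx1⟩
    by_contra hle
    push_neg at hle
    exact absurd ((rearr_le_iff hf hb₀ hb₁ hx0 hx1).2 hle) (not_le.2 hc)
  · rintro ⟨h1, h2⟩
    have hx0 : 0 < x := lt_of_le_of_lt (Fd_nonneg f c) h1
    refine ⟨⟨hx0, h2⟩, ?_⟩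
    by_contra hle
    push_neg at hle
    exact absurd ((rearr_le_iff hf hb₀ hb₁ hx0 h2).1 hle) (not_le.2 h1)

lemma E2 (hb₀ : ∀ x ∈ Set.Icc (0:ℝ) 1, b₀ ≤ f x) (hb₁ : ∀ x ∈ Set.Icc (0:ℝ) 1, f x ≤ b₁)
    (c : ℝ) :
    Set.Ioc (0:ℝ) 1 ∩ {x | rearr f x < c} ⊆
      Set.Ioc 0 ((volume (Set.Ioc (0:ℝ) 1 ∩ {u | f u < c})).toReal) := by
  rintro x ⟨⟨hx0, hx1⟩, hc⟩
  refine ⟨hx0, ?_⟩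
  simp only [mem_setOf_eq, rearr_eq] at hc
  obtain ⟨y, hy, hyc⟩ := exists_lt_of_csInf_lt ⟨b₁, Sx_mem hb₁ hx1 le_rfl⟩ hc
  refine le_trans hy ?_
  rw [Fd, vol_Icc_inter_eq_Ioc]
  exact ENNReal.toReal_mono (meas_ne_top' _)
    (measure_mono (inter_subset_inter_right _ (fun u hu => lt_of_le_of_lt hu hyc)))

lemma rearr_monoOn (hb₀ : ∀ x ∈ Set.Icc (0:ℝ) 1, b₀ ≤ f x)
    (hb₁ : ∀ x ∈ Set.Icc (0:ℝ) 1, f x ≤ b₁) :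
    MonotoneOn (rearr f) (Set.Ioc (0:ℝ) 1) := by
  intro x hx x' hx' hxx'
  rw [rearr_eq, rearr_eq]
  exact csInf_le_csInf (Sx_bddBelow hb₀ hx.1) ⟨b₁, Sx_mem hb₁ hx'.2 le_rfl⟩
    (fun y hy => le_trans hxx' hy)

lemma rearr_aemeasurable (hb₀ : ∀ x ∈ Set.Icc (0:ℝ) 1, b₀ ≤ f x)
    (hb₁ : ∀ x ∈ Set.Icc (0:ℝ) 1, f x ≤ b₁) :
    AEMeasurable (rearr f) (volume.restrict (Set.Ioc (0:ℝ) 1)) := by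
  have hmemclamp : ∀ (n : ℕ) (x : ℝ), min (max x ((n:ℝ)+1)⁻¹) 1 ∈ Set.Ioc (0:ℝ) 1 := by
    intro n x
    constructor
    · have : (0:ℝ) < ((n:ℝ)+1)⁻¹ := by positivity
      simp only [lt_min_iff]
      exact ⟨lt_of_lt_of_le this (le_max_right _ _), one_pos⟩
    · exact min_le_right _ _
  have hG : ∀ n : ℕ, Measurable (fun x => rearr f (min (max x ((n:ℝ)+1)⁻¹) 1)) := by
    intro n
    apply Monotone.measurable
    intro a b hab
    exact rearr_monoOn hb₀ hb₁ (hmemclamp n a) (hmemclamp n b)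
      (min_le_min (max_le_max hab le_rfl) le_rfl)
  refine aemeasurable_of_tendsto_metrizable_ae Filter.atTop
    (fun n => (hG n).aemeasurable) ?_
  rw [ae_restrict_iff' measurableSet_Ioc]
  refine Filter.Eventually.of_forall (fun x hx => ?_)
  obtain ⟨N, hN⟩ := exists_nat_one_div_lt hx.1
  have hev : ∀ᶠ (n : ℕ) in Filter.atTop,
      rearr f x = (fun x' => rearr f (min (max x' ((n:ℝ)+1)⁻¹) 1)) x := by
    rw [Filter.eventually_atTop]
    refine ⟨N, fun n hn => ?_⟩
    have h1 : ((n:ℝ)+1)⁻¹ ≤ ((N:ℝ)+1)⁻¹ := by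
      have : (N:ℝ) ≤ (n:ℝ) := Nat.cast_le.2 hn
      apply inv_anti₀ (by positivity) (by linarith)
    rw [one_div] at hN
    have hmax : max x ((n:ℝ)+1)⁻¹ = x := max_eq_left (le_trans h1 hN.le)
    simp only [hmax, min_eq_left hx.2]
  exact Filter.Tendsto.congr' hev tendsto_const_nhds

end Quantile


section Compare

variable {f f₀ : ℝ → ℝ} {b₀ b₁ : ℝ}

lemma initial_subset (hmono : MonotoneOn f₀ (Set.Icc (0:ℝ) 1)) (s : ℝ) :
    Set.Ioc (0:ℝ) 1 ∩ {x | f₀ x < s} ⊆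
      Set.Ioc 0 ((volume (Set.Ioc (0:ℝ) 1 ∩ {x | f₀ x < s})).toReal) := by
  intro x₀ hx₀
  refine ⟨hx₀.1.1, ?_⟩
  have hsub : Set.Ioo (0:ℝ) x₀ ⊆ Set.Ioc (0:ℝ) 1 ∩ {x | f₀ x < s} := by
    intro z hz
    have hz1 : z ∈ Set.Icc (0:ℝ) 1 := ⟨hz.1.le, le_trans hz.2.le hx₀.1.2⟩
    exact ⟨⟨hz.1, hz1.2⟩,
      lt_of_le_of_lt (hmono hz1 ⟨hx₀.1.1.le, hx₀.1.2⟩ hz.2.le) hx₀.2⟩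
  have h1 := measure_mono (μ := (volume : Measure ℝ)) hsub
  rw [Real.volume_Ioo] at h1
  have h2 := ENNReal.toReal_mono (meas_ne_top' _) h1
  rw [ENNReal.toReal_ofReal (by linarith [hx₀.1.1.le] : (0:ℝ) ≤ x₀ - 0)] at h2
  linarith

lemma final_subset (hmono : MonotoneOn f₀ (Set.Icc (0:ℝ) 1)) (s : ℝ) :
    Set.Ioc (0:ℝ) 1 ∩ {x | s < f₀ x} ⊆
      Set.Icc (1 - (volume (Set.Ioc (0:ℝ) 1 ∩ {x | s < f₀ x})).toReal) 1 := by
  intro x₀ hx₀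
  refine ⟨?_, hx₀.1.2⟩
  have hsub : Set.Icc x₀ 1 ⊆ Set.Ioc (0:ℝ) 1 ∩ {x | s < f₀ x} := by
    intro z hz
    have hz1 : z ∈ Set.Icc (0:ℝ) 1 := ⟨le_trans hx₀.1.1.le hz.1, hz.2⟩
    exact ⟨⟨lt_of_lt_of_le hx₀.1.1 hz.1, hz.2⟩,
      lt_of_lt_of_le hx₀.2 (hmono ⟨hx₀.1.1.le, hx₀.1.2⟩ hz1 hz.1)⟩
  have h1 := measure_mono (μ := (volume : Measure ℝ)) hsub
  rw [Real.volume_Icc] at h1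
  have h2 := ENNReal.toReal_mono (meas_ne_top' _) h1
  rw [ENNReal.toReal_ofReal (by linarith [hx₀.1.2] : (0:ℝ) ≤ 1 - x₀)] at h2
  linarith

lemma vol_inter_ge {X Y : Set ℝ} (hX : X ⊆ Set.Ioc (0:ℝ) 1) (hY : Y ⊆ Set.Ioc (0:ℝ) 1)
    (hYm : MeasurableSet Y) :
    volume X + volume Y ≤ volume (X ∩ Y) + 1 := by
  have h1 : volume X ≤ volume (X ∩ Y) + volume (X \ Y) := measure_le_inter_add_diff _ _ _
  have h2 : volume (X \ Y) + volume Y ≤ 1 := by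
    rw [← measure_union disjoint_sdiff_left hYm]
    refine le_trans (measure_mono ?_) (by simp [Real.volume_Ioc] :
      volume (Set.Ioc (0:ℝ) 1) ≤ 1)
    exact union_subset (fun z hz => hX hz.1) hY
  calc volume X + volume Y ≤ volume (X ∩ Y) + volume (X \ Y) + volume Y :=
        add_le_add h1 le_rfl
    _ = volume (X ∩ Y) + (volume (X \ Y) + volume Y) := by ring
    _ ≤ volume (X ∩ Y) + 1 := add_le_add le_rfl h2

lemma compl_toReal (hf : Measurable f) (c : ℝ) :
    (volume (Set.Ioc (0:ℝ) 1 ∩ {x | c < f x})).toReal = 1 - Fd f c := by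
  have hpart := measure_inter_add_diff (μ := volume) (Set.Ioc (0:ℝ) 1)
    (hf measurableSet_Iic : MeasurableSet {x | f x ≤ c})
  have hdiff : Set.Ioc (0:ℝ) 1 \ (f ⁻¹' Set.Iic c) = Set.Ioc (0:ℝ) 1 ∩ {x | c < f x} := by
    ext z; simp [not_le]
  rw [hdiff] at hpart
  have hIic : Set.Ioc (0:ℝ) 1 ∩ (f ⁻¹' Set.Iic c) = Set.Ioc (0:ℝ) 1 ∩ {x | f x ≤ c} := rfl
  rw [hIic] at hpart
  rw [Real.volume_Ioc] at hpart
  have hfin1 := meas_ne_top' ({x | f x ≤ c})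
  have hfin2 := meas_ne_top' ({x | c < f x})
  have := congrArg ENNReal.toReal hpart
  rw [ENNReal.toReal_add hfin1 hfin2] at this
  rw [ENNReal.toReal_ofReal (by norm_num)] at this
  have hFd : Fd f c = (volume (Set.Ioc (0:ℝ) 1 ∩ {x | f x ≤ c})).toReal := by
    rw [Fd, vol_Icc_inter_eq_Ioc]
  rw [hFd]
  linarith

lemma key1 (hf : Measurable f) (hf₀ : Measurable f₀)
    (hb₀ : ∀ x ∈ Set.Icc (0:ℝ) 1, b₀ ≤ f x) (hb₁ : ∀ x ∈ Set.Icc (0:ℝ) 1, f x ≤ b₁)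
    (hmono : MonotoneOn f₀ (Set.Icc (0:ℝ) 1)) (s c : ℝ) :
    volume (Set.Ioc (0:ℝ) 1 ∩ {x | f₀ x < s} ∩ {x | c < rearr f x}) ≤
      volume (Set.Ioc (0:ℝ) 1 ∩ {x | f₀ x < s} ∩ {x | c < f x}) := by
  set A := Set.Ioc (0:ℝ) 1 ∩ {x | f₀ x < s} with hA
  set X := Set.Ioc (0:ℝ) 1 ∩ {x | c < f x} with hX
  set m := (volume A).toReal with hm
  have hAm : MeasurableSet A := measurableSet_Ioc.inter (hf₀ measurableSet_Iio)
  have hXm : MeasurableSet X := measurableSet_Ioc.inter (hf measurableSet_Ioi)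
  -- LHS bound
  have hLsub : A ∩ {x | c < rearr f x} ⊆ Set.Ioc (Fd f c) m := by
    intro z hz
    have hz1 : z ∈ Set.Ioc (0:ℝ) 1 ∩ {x | c < rearr f x} := ⟨hz.1.1, hz.2⟩
    rw [E1 hf hb₀ hb₁ c] at hz1
    exact ⟨hz1.1, (initial_subset hmono s ⟨hz.1.1, hz.1.2⟩).2⟩
  have hL : volume (A ∩ {x | c < rearr f x}) ≤ ENNReal.ofReal (m - Fd f c) := by
    refine le_trans (measure_mono hLsub) ?_
    rw [Real.volume_Ioc]
  -- RHS bound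
  have hIE := vol_inter_ge (inter_subset_left (t := {x | c < f x}))
    (inter_subset_left (t := {x | f₀ x < s})) hAm
  -- (volume X + volume A ≤ volume (X ∩ A) + 1)
  have hfinX : volume X ≠ ⊤ := meas_ne_top' _
  have hfinA : volume A ≠ ⊤ := meas_ne_top' _
  have hfinXA : volume (X ∩ A) ≠ ⊤ := by
    refine ne_of_lt (lt_of_le_of_lt (measure_mono (inter_subset_left)) ?_)
    exact lt_of_le_of_lt (le_of_eq rfl) hfinX.lt_top
  have hIE' := ENNReal.toReal_mono (by
      refine ENNReal.add_ne_top.2 ⟨hfinXA, by norm_num⟩) hIE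
  rw [ENNReal.toReal_add hfinX hfinA, ENNReal.toReal_add hfinXA (by norm_num)] at hIE'
  rw [compl_toReal hf c] at hIE'
  simp only [ENNReal.toReal_one] at hIE'
  -- hIE' : (1 - Fd f c) + m ≤ (volume (X ∩ A)).toReal + 1
  have hRHS : ENNReal.ofReal (m - Fd f c) ≤ volume (X ∩ A) := by
    rw [← ENNReal.ofReal_toReal hfinXA]
    exact ENNReal.ofReal_le_ofReal (by linarith)
  have hsets : X ∩ A = Set.Ioc (0:ℝ) 1 ∩ {x | f₀ x < s} ∩ {x | c < f x} := by
    rw [hX, hA]; ext z; simp only [mem_inter_iff, mem_setOf_eq]; tauto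
  calc volume (Set.Ioc (0:ℝ) 1 ∩ {x | f₀ x < s} ∩ {x | c < rearr f x})
      = volume (A ∩ {x | c < rearr f x}) := rfl
    _ ≤ ENNReal.ofReal (m - Fd f c) := hL
    _ ≤ volume (X ∩ A) := hRHS
    _ = _ := by rw [hsets]

lemma key2 (hf : Measurable f) (hf₀ : Measurable f₀)
    (hb₀ : ∀ x ∈ Set.Icc (0:ℝ) 1, b₀ ≤ f x) (hb₁ : ∀ x ∈ Set.Icc (0:ℝ) 1, f x ≤ b₁)
    (hmono : MonotoneOn f₀ (Set.Icc (0:ℝ) 1)) (s c : ℝ) :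
    volume (Set.Ioc (0:ℝ) 1 ∩ {x | s < f₀ x} ∩ {x | rearr f x < c}) ≤
      volume (Set.Ioc (0:ℝ) 1 ∩ {x | s < f₀ x} ∩ {x | f x < c}) := by
  set B := Set.Ioc (0:ℝ) 1 ∩ {x | s < f₀ x} with hB
  set X := Set.Ioc (0:ℝ) 1 ∩ {x | f x < c} with hX
  set t := 1 - (volume B).toReal with ht
  set m' := (volume X).toReal with hm'
  have hBm : MeasurableSet B := measurableSet_Ioc.inter (hf₀ measurableSet_Ioi)
  have hLsub : B ∩ {x | rearr f x < c} ⊆ Set.Icc t m' := by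
    intro z hz
    have hz1 : z ∈ Set.Ioc (0:ℝ) 1 ∩ {x | rearr f x < c} := ⟨hz.1.1, hz.2⟩
    have h2 := E2 hb₀ hb₁ c hz1
    exact ⟨(final_subset hmono s hz.1).1, h2.2⟩
  have hL : volume (B ∩ {x | rearr f x < c}) ≤ ENNReal.ofReal (m' - t) := by
    refine le_trans (measure_mono hLsub) ?_
    rw [Real.volume_Icc]
  have hIE := vol_inter_ge (inter_subset_left (t := {x | f x < c}))
    (inter_subset_left (t := {x | s < f₀ x})) hBm
  have hfinX : volume X ≠ ⊤ := meas_ne_top' _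
  have hfinB : volume B ≠ ⊤ := meas_ne_top' _
  have hfinXB : volume (X ∩ B) ≠ ⊤ := by
    refine ne_of_lt (lt_of_le_of_lt (measure_mono (inter_subset_left)) hfinX.lt_top)
  have hIE' := ENNReal.toReal_mono (by
      refine ENNReal.add_ne_top.2 ⟨hfinXB, by norm_num⟩) hIE
  rw [ENNReal.toReal_add hfinX hfinB, ENNReal.toReal_add hfinXB (by norm_num)] at hIE'
  simp only [ENNReal.toReal_one] at hIE'
  -- hIE' : m' + volB ≤ (vol (X∩B)).toReal + 1
  have hRHS : ENNReal.ofReal (m' - t) ≤ volume (X ∩ B) := by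
    rw [← ENNReal.ofReal_toReal hfinXB]
    exact ENNReal.ofReal_le_ofReal (by rw [ht]; linarith)
  have hsets : X ∩ B = Set.Ioc (0:ℝ) 1 ∩ {x | s < f₀ x} ∩ {x | f x < c} := by
    rw [hX, hB]; ext z; simp only [mem_inter_iff, mem_setOf_eq]; tauto
  calc volume (Set.Ioc (0:ℝ) 1 ∩ {x | s < f₀ x} ∩ {x | rearr f x < c})
      = volume (B ∩ {x | rearr f x < c}) := rfl
    _ ≤ ENNReal.ofReal (m' - t) := hL
    _ ≤ volume (X ∩ B) := hRHS
    _ = _ := by rw [hsets]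

end Compare


section Kernel

variable {p : ℝ}

lemma rpow_cont (hp : 1 ≤ p) (s : ℝ) : Continuous (fun t : ℝ => (t - s) ^ (p - 1)) :=
  Continuous.rpow_const (continuous_id.sub continuous_const) (fun _ => Or.inr (by linarith))

lemma rpow_cont' (hp : 1 ≤ p) (s : ℝ) : Continuous (fun t : ℝ => (s - t) ^ (p - 1)) :=
  Continuous.rpow_const (continuous_const.sub continuous_id) (fun _ => Or.inr (by linarith))

noncomputable def kfun (p v w s : ℝ) : ℝ≥0∞ :=
  ENNReal.ofReal (p * ((if w < s ∧ s < v then (v - s) ^ (p - 1) else 0)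
    + (if v < s ∧ s < w then (s - v) ^ (p - 1) else 0)))

noncomputable def jfun (p v w s u : ℝ) : ℝ≥0∞ :=
  ENNReal.ofReal p * ((if w < s ∧ s < v ∧ u < (v - s) ^ (p - 1) then (1:ℝ≥0∞) else 0)
    + (if v < s ∧ s < w ∧ u < (s - v) ^ (p - 1) then (1:ℝ≥0∞) else 0))

lemma bochner_aux (hp : 1 ≤ p) {a b : ℝ} (hab : a < b) :
    ∫ s in Set.Ioo a b, p * (b - s) ^ (p - 1) = (b - a) ^ p := by
  have h0 : ∫ s in Set.Ioo a b, p * (b - s) ^ (p - 1)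
      = ∫ s in Set.Ioc a b, p * (b - s) ^ (p - 1) := integral_Ioc_eq_integral_Ioo.symm
  rw [h0, ← intervalIntegral.integral_of_le hab.le]
  have h1 : (∫ s in a..b, p * (b - s) ^ (p - 1)) = p * ∫ s in a..b, (b - s) ^ (p - 1) :=
    intervalIntegral.integral_const_mul _ _
  rw [h1]
  have h2 : (∫ s in a..b, (b - s) ^ (p - 1)) = ∫ s in (b - b)..(b - a), s ^ (p - 1) :=
    intervalIntegral.integral_comp_sub_left (fun t => t ^ (p - 1)) b
  rw [h2, sub_self]
  rw [integral_rpow (Or.inl (by linarith))]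
  rw [sub_add_cancel]
  rw [Real.zero_rpow (by linarith : p ≠ 0)]
  field_simp
  rw [sub_zero]

lemma bochner_aux' (hp : 1 ≤ p) {a b : ℝ} (hab : a < b) :
    ∫ s in Set.Ioo a b, p * (s - a) ^ (p - 1) = (b - a) ^ p := by
  have h0 : ∫ s in Set.Ioo a b, p * (s - a) ^ (p - 1)
      = ∫ s in Set.Ioc a b, p * (s - a) ^ (p - 1) := integral_Ioc_eq_integral_Ioo.symm
  rw [h0, ← intervalIntegral.integral_of_le hab.le]
  have h1 : (∫ s in a..b, p * (s - a) ^ (p - 1)) = p * ∫ s in a..b, (s - a) ^ (p - 1) :=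
    intervalIntegral.integral_const_mul _ _
  rw [h1]
  have h2 : (∫ s in a..b, (s - a) ^ (p - 1)) = ∫ s in (a - a)..(b - a), s ^ (p - 1) :=
    intervalIntegral.integral_comp_sub_right (fun t => t ^ (p - 1)) a
  rw [h2, sub_self]
  rw [integral_rpow (Or.inl (by linarith))]
  rw [sub_add_cancel]
  rw [Real.zero_rpow (by linarith : p ≠ 0)]
  field_simp
  rw [sub_zero]

lemma lint_aux (hp : 1 ≤ p) {a b : ℝ} (hab : a < b) (g : ℝ → ℝ)
    (hg : Continuous g) (hgnn : ∀ s ∈ Set.Ioo a b, 0 ≤ g s)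
    (hgi : ∫ s in Set.Ioo a b, p * g s = (b - a) ^ p) :
    (∫⁻ s, ENNReal.ofReal (p * (if s ∈ Set.Ioo a b then g s else 0))) =
      ENNReal.ofReal ((b - a) ^ p) := by
  have hpos : 0 ≤ p := by linarith
  have hind : ∀ s, ENNReal.ofReal (p * (if s ∈ Set.Ioo a b then g s else 0))
      = (Set.Ioo a b).indicator (fun s => ENNReal.ofReal (p * g s)) s := by
    intro s
    by_cases hs : s ∈ Set.Ioo a b
    · simp [hs, Set.indicator_of_mem]
    · simp [hs, Set.indicator_of_notMem]
  rw [lintegral_congr hind, lintegral_indicator measurableSet_Ioo]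
  rw [← ofReal_integral_eq_lintegral_ofReal ?hint ?hnn]
  · rw [hgi]
  case hint =>
    have : IntegrableOn (fun s => p * g s) (Set.Icc a b) volume :=
      (continuous_const.mul hg).integrableOn_Icc
    exact this.mono_set Set.Ioo_subset_Icc_self
  case hnn =>
    rw [Filter.EventuallyLE, ae_restrict_iff' measurableSet_Ioo]
    exact Filter.Eventually.of_forall (fun s hs => mul_nonneg hpos (hgnn s hs))

lemma level1 (hp : 1 ≤ p) (v w : ℝ) :
    (∫⁻ s, kfun p v w s) = ENNReal.ofReal (|v - w| ^ p) := by
  rcases lt_trichotomy v w with hvw | hvw | hvw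
  · -- v < w : first if always false
    have hk : ∀ s, kfun p v w s
        = ENNReal.ofReal (p * (if s ∈ Set.Ioo v w then (s - v) ^ (p - 1) else 0)) := by
      intro s
      have h1 : ¬(w < s ∧ s < v) := by rintro ⟨h1, h2⟩; linarith
      simp only [kfun, h1, if_false, zero_add, Set.mem_Ioo]
    rw [lintegral_congr hk,
      lint_aux hp hvw _ (rpow_cont hp v) (fun s hs => Real.rpow_nonneg (by linarith [hs.1] : (0:ℝ) ≤ s - v) _) (bochner_aux' hp hvw)]
    rw [abs_of_neg (by linarith : v - w < 0), neg_sub]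
  · subst hvw
    have hk : ∀ s, kfun p v v s = 0 := by
      intro s
      have h1 : ¬(v < s ∧ s < v) := by rintro ⟨h1, h2⟩; linarith
      simp [kfun, h1]
    rw [lintegral_congr hk, lintegral_zero, sub_self, abs_zero,
      Real.zero_rpow (by linarith : p ≠ 0), ENNReal.ofReal_zero]
  · -- w < v
    have hk : ∀ s, kfun p v w s
        = ENNReal.ofReal (p * (if s ∈ Set.Ioo w v then (v - s) ^ (p - 1) else 0)) := by
      intro s
      have h2 : ¬(v < s ∧ s < w) := by rintro ⟨h1, h2⟩; linarith
      simp only [kfun, h2, if_false, add_zero, Set.mem_Ioo]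
    rw [lintegral_congr hk,
      lint_aux hp hvw _ (rpow_cont' hp v) (fun s hs => Real.rpow_nonneg (by linarith [hs.2] : (0:ℝ) ≤ v - s) _) (bochner_aux hp hvw)]
    rw [abs_of_pos (by linarith : 0 < v - w)]

end Kernel


section Level2

variable {p : ℝ}

lemma ind_lintegral (c : ℝ) :
    (∫⁻ u in Set.Ioi (0:ℝ), (if u < c then (1:ℝ≥0∞) else 0)) = ENNReal.ofReal c := by
  have h : ∀ u, (if u < c then (1:ℝ≥0∞) else 0)
      = (Set.Iio c).indicator (fun _ => (1:ℝ≥0∞)) u := by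
    intro u; by_cases hu : u < c <;> simp [hu, Set.indicator, Set.mem_Iio]
  rw [lintegral_congr h, lintegral_indicator measurableSet_Iio, setLIntegral_one,
    Measure.restrict_apply measurableSet_Iio, Set.inter_comm, Set.Ioi_inter_Iio,
    Real.volume_Ioo, sub_zero]

lemma ind_measurable (c : ℝ) :
    Measurable (fun u : ℝ => if u < c then (1:ℝ≥0∞) else 0) :=
  Measurable.ite measurableSet_Iio measurable_const measurable_const

lemma level2 (hp : 1 ≤ p) (v w s : ℝ) :
    (∫⁻ u in Set.Ioi (0:ℝ), jfun p v w s u) = kfun p v w s := by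
  have hp0 : (0:ℝ) ≤ p := by linarith
  by_cases h1 : w < s ∧ s < v
  · have h2 : ∀ X : Prop, (v < s ∧ s < w ∧ X) = False :=
      fun X => eq_false (fun hc => absurd hc.1 (lt_asymm h1.2))
    have hj : ∀ u, jfun p v w s u
        = ENNReal.ofReal p * (if u < (v - s) ^ (p - 1) then (1:ℝ≥0∞) else 0) := by
      intro u
      simp only [jfun, h1.1, h1.2, true_and, h2, if_false, add_zero]
    rw [lintegral_congr hj, lintegral_const_mul _ (ind_measurable _), ind_lintegral,
      ← ENNReal.ofReal_mul hp0]
    simp only [kfun, h1.1, h1.2, true_and, if_true, h2 (s < w), and_false]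
    have h3 : ¬(v < s ∧ s < w) := fun hc => absurd hc.1 (lt_asymm h1.2)
    simp [h3]
  · by_cases h2 : v < s ∧ s < w
    · have h1' : ∀ X : Prop, (w < s ∧ s < v ∧ X) = False :=
        fun X => eq_false (fun hc => absurd hc.1 (lt_asymm h2.2))
      have hj : ∀ u, jfun p v w s u
          = ENNReal.ofReal p * (if u < (s - v) ^ (p - 1) then (1:ℝ≥0∞) else 0) := by
        intro u
        simp only [jfun, h2.1, h2.2, true_and, h1', if_false, zero_add]
      rw [lintegral_congr hj, lintegral_const_mul _ (ind_measurable _), ind_lintegral,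
        ← ENNReal.ofReal_mul hp0]
      have h3 : ¬(w < s ∧ s < v) := fun hc => absurd hc.1 (lt_asymm h2.2)
      simp [kfun, h3, h2.1, h2.2]
    · have hj : ∀ u, jfun p v w s u = 0 := by
        intro u
        have e1 : ¬(w < s ∧ s < v ∧ u < (v - s) ^ (p - 1)) :=
          fun hc => h1 ⟨hc.1, hc.2.1⟩
        have e2 : ¬(v < s ∧ s < w ∧ u < (s - v) ^ (p - 1)) :=
          fun hc => h2 ⟨hc.1, hc.2.1⟩
        simp [jfun, e1, e2]
      rw [lintegral_congr hj, lintegral_zero]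
      simp [kfun, h1, h2]

end Level2

section Slice

variable {p : ℝ} {G f₀ : ℝ → ℝ}

lemma slice_eq (hG : Measurable G) (hf₀ : Measurable f₀) (hp : 1 ≤ p) (s u : ℝ) :
    (∫⁻ x in Set.Ioc (0:ℝ) 1, jfun p (G x) (f₀ x) s u)
      = ENNReal.ofReal p *
        (volume (Set.Ioc (0:ℝ) 1 ∩ {x | f₀ x < s} ∩ {x | s < G x ∧ u < (G x - s) ^ (p - 1)})
        + volume (Set.Ioc (0:ℝ) 1 ∩ {x | s < f₀ x} ∩ {x | G x < s ∧ u < (s - G x) ^ (p - 1)})) := by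
  set S1 : Set ℝ := {x | f₀ x < s ∧ s < G x ∧ u < (G x - s) ^ (p - 1)} with hS1def
  set S2 : Set ℝ := {x | G x < s ∧ s < f₀ x ∧ u < (s - G x) ^ (p - 1)} with hS2def
  have hS1 : MeasurableSet S1 := by
    refine ((hf₀ measurableSet_Iio).inter ((hG measurableSet_Ioi).inter ?_))
    exact ((rpow_cont hp s).measurable.comp hG) measurableSet_Ioi
  have hS2 : MeasurableSet S2 := by
    refine ((hG measurableSet_Iio).inter ((hf₀ measurableSet_Ioi).inter ?_))
    exact ((rpow_cont' hp s).measurable.comp hG) measurableSet_Ioi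
  have hj : ∀ x, jfun p (G x) (f₀ x) s u
      = ENNReal.ofReal p * (S1.indicator (fun _ => (1:ℝ≥0∞)) x
        + S2.indicator (fun _ => (1:ℝ≥0∞)) x) := by
    intro x
    rw [jfun, Set.indicator_apply, Set.indicator_apply]
    rfl
  have hm1 : Measurable (S1.indicator (fun _ : ℝ => (1:ℝ≥0∞))) :=
    measurable_const.indicator hS1
  have hm2 : Measurable (S2.indicator (fun _ : ℝ => (1:ℝ≥0∞))) :=
    measurable_const.indicator hS2
  rw [lintegral_congr hj,
    lintegral_const_mul (f := fun x => S1.indicator (fun _ => (1:ℝ≥0∞)) x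
      + S2.indicator (fun _ => (1:ℝ≥0∞)) x) _ (hm1.add hm2),
    lintegral_add_left hm1,
    lintegral_indicator hS1, lintegral_indicator hS2, setLIntegral_one, setLIntegral_one,
    Measure.restrict_apply hS1, Measure.restrict_apply hS2]
  have e1 : S1 ∩ Set.Ioc (0:ℝ) 1
      = Set.Ioc (0:ℝ) 1 ∩ {x | f₀ x < s} ∩ {x | s < G x ∧ u < (G x - s) ^ (p - 1)} := by
    ext z; simp only [hS1def, Set.mem_inter_iff, Set.mem_setOf_eq]; tauto
  have e2 : S2 ∩ Set.Ioc (0:ℝ) 1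
      = Set.Ioc (0:ℝ) 1 ∩ {x | s < f₀ x} ∩ {x | G x < s ∧ u < (s - G x) ^ (p - 1)} := by
    ext z; simp only [hS2def, Set.mem_inter_iff, Set.mem_setOf_eq]; tauto
  rw [e1, e2]

lemma upset_lemma (hp : 1 ≤ p) (s u : ℝ) :
    {t : ℝ | s < t ∧ u < (t - s) ^ (p - 1)} = ∅ ∨
      ∃ c, {t : ℝ | s < t ∧ u < (t - s) ^ (p - 1)} = Set.Ioi c := by
  set S := {t : ℝ | s < t ∧ u < (t - s) ^ (p - 1)} with hS
  rcases Set.eq_empty_or_nonempty S with h | h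
  · exact Or.inl h
  · refine Or.inr ⟨sInf S, ?_⟩
    have hbdd : BddBelow S := ⟨s, fun t ht => ht.1.le⟩
    have hup : ∀ t ∈ S, ∀ t', t ≤ t' → t' ∈ S := by
      intro t ht t' htt'
      refine ⟨lt_of_lt_of_le ht.1 htt', lt_of_lt_of_le ht.2 ?_⟩
      exact Real.rpow_le_rpow (by linarith [ht.1]) (by linarith) (by linarith)
    have hopen : IsOpen S := by
      have he : S = Set.Ioi s ∩ (fun t => (t - s) ^ (p - 1)) ⁻¹' Set.Ioi u := by
        ext t
        simp only [hS, Set.mem_setOf_eq, Set.mem_inter_iff, Set.mem_Ioi, Set.mem_preimage]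
      rw [he]
      exact isOpen_Ioi.inter ((rpow_cont hp s).isOpen_preimage _ isOpen_Ioi)
    ext t
    simp only [Set.mem_Ioi]
    constructor
    · intro ht
      rcases lt_or_eq_of_le (csInf_le hbdd ht) with h' | h'
      · exact h'
      · exfalso
        rw [Metric.isOpen_iff] at hopen
        obtain ⟨ε, hε, hball⟩ := hopen t ht
        have hmem : t - ε/2 ∈ S := by
          apply hball
          rw [Metric.mem_ball, Real.dist_eq]
          rw [show t - ε/2 - t = -(ε/2) by ring, abs_neg, abs_of_pos (by linarith)]
          linarith
        have := csInf_le hbdd hmem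
        rw [h'] at this
        linarith
    · intro ht
      obtain ⟨t', ht', htt'⟩ := exists_lt_of_csInf_lt h ht
      exact hup t' ht' t htt'.le

lemma downset_lemma (hp : 1 ≤ p) (s u : ℝ) :
    {t : ℝ | t < s ∧ u < (s - t) ^ (p - 1)} = ∅ ∨
      ∃ c, {t : ℝ | t < s ∧ u < (s - t) ^ (p - 1)} = Set.Iio c := by
  have he : {t : ℝ | t < s ∧ u < (s - t) ^ (p - 1)}
      = (fun t : ℝ => -t) ⁻¹' {r : ℝ | -s < r ∧ u < (r - (-s)) ^ (p - 1)} := by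
    ext t
    simp only [Set.mem_setOf_eq, Set.mem_preimage]
    constructor
    · rintro ⟨h1, h2⟩
      exact ⟨by linarith, by rw [show -t - -s = s - t by ring]; exact h2⟩
    · rintro ⟨h1, h2⟩
      rw [show -t - -s = s - t by ring] at h2
      exact ⟨by linarith, h2⟩
  rcases upset_lemma hp (-s) u with h | ⟨c, hc⟩
  · left; rw [he, h, Set.preimage_empty]
  · right
    refine ⟨-c, ?_⟩
    rw [he, hc]
    ext t
    simp only [Set.mem_preimage, Set.mem_Ioi, Set.mem_Iio]
    constructor <;> intro h <;> linarith

lemma vol_congr_pred {g h : ℝ → ℝ}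
    (hgh : g =ᵐ[volume.restrict (Set.Ioc (0:ℝ) 1)] h) (A : Set ℝ) (P : ℝ → Prop) :
    volume (Set.Ioc (0:ℝ) 1 ∩ A ∩ {x | P (g x)})
      = volume (Set.Ioc (0:ℝ) 1 ∩ A ∩ {x | P (h x)}) := by
  have hN : volume {x | x ∈ Set.Ioc (0:ℝ) 1 ∧ g x ≠ h x} = 0 := by
    have h1 := (ae_restrict_iff' measurableSet_Ioc).1 hgh
    rw [ae_iff] at h1
    refine measure_mono_null ?_ h1
    intro z hz
    simp only [Set.mem_setOf_eq] at hz ⊢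
    push_neg
    exact ⟨hz.1, hz.2⟩
  refine measure_congr ?_
  rw [MeasureTheory.ae_eq_set]
  constructor
  · refine measure_mono_null ?_ hN
    rintro z ⟨⟨⟨hz1, hz2⟩, hz3⟩, hz4⟩
    refine ⟨hz1, fun hc => ?_⟩
    exact hz4 ⟨⟨hz1, hz2⟩, by rwa [Set.mem_setOf_eq, hc] at hz3⟩
  · refine measure_mono_null ?_ hN
    rintro z ⟨⟨⟨hz1, hz2⟩, hz3⟩, hz4⟩
    refine ⟨hz1, fun hc => ?_⟩
    exact hz4 ⟨⟨hz1, hz2⟩, by rwa [Set.mem_setOf_eq, ← hc] at hz3⟩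

end Slice


section Main

variable {p : ℝ} {G f₀ : ℝ → ℝ}

lemma rpow_meas (hp : 1 ≤ p) : Measurable (fun t : ℝ => t ^ (p - 1)) :=
  (Continuous.rpow_const continuous_id (fun _ => Or.inr (by linarith))).measurable

lemma kfun_prod_measurable (hG : Measurable G) (hf₀ : Measurable f₀) (hp : 1 ≤ p) :
    Measurable (fun z : ℝ × ℝ => kfun p (G z.1) (f₀ z.1) z.2) := by
  simp only [kfun]
  apply ENNReal.measurable_ofReal.comp
  refine Measurable.const_mul (Measurable.add ?_ ?_) p
  · refine Measurable.ite ?_ ?_ measurable_const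
    · exact (measurableSet_lt (hf₀.comp measurable_fst) measurable_snd).inter
        (measurableSet_lt measurable_snd (hG.comp measurable_fst))
    · exact (rpow_meas hp).comp ((hG.comp measurable_fst).sub measurable_snd)
  · refine Measurable.ite ?_ ?_ measurable_const
    · exact (measurableSet_lt (hG.comp measurable_fst) measurable_snd).inter
        (measurableSet_lt measurable_snd (hf₀.comp measurable_fst))
    · exact (rpow_meas hp).comp (measurable_snd.sub (hG.comp measurable_fst))

lemma jfun_prod_measurable (hG : Measurable G) (hf₀ : Measurable f₀) (hp : 1 ≤ p) (s : ℝ) :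
    Measurable (fun z : ℝ × ℝ => jfun p (G z.1) (f₀ z.1) s z.2) := by
  simp only [jfun]
  refine Measurable.const_mul (Measurable.add ?_ ?_) _
  · refine Measurable.ite ?_ measurable_const measurable_const
    refine MeasurableSet.inter ((hf₀.comp measurable_fst) measurableSet_Iio) ?_
    refine MeasurableSet.inter ((hG.comp measurable_fst) measurableSet_Ioi) ?_
    exact measurableSet_lt measurable_snd
      ((rpow_meas hp).comp ((hG.comp measurable_fst).sub measurable_const))
  · refine Measurable.ite ?_ measurable_const measurable_const
    refine MeasurableSet.inter ((hG.comp measurable_fst) measurableSet_Iio) ?_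
    refine MeasurableSet.inter ((hf₀.comp measurable_fst) measurableSet_Ioi) ?_
    exact measurableSet_lt measurable_snd
      ((rpow_meas hp).comp (measurable_const.sub (hG.comp measurable_fst)))

lemma formula (hG : Measurable G) (hf₀ : Measurable f₀) (hp : 1 ≤ p) :
    (∫⁻ x in Set.Ioc (0:ℝ) 1, ENNReal.ofReal (|G x - f₀ x| ^ p))
      = ∫⁻ s, ∫⁻ u in Set.Ioi (0:ℝ), ENNReal.ofReal p *
          (volume (Set.Ioc (0:ℝ) 1 ∩ {x | f₀ x < s}
              ∩ {x | s < G x ∧ u < (G x - s) ^ (p - 1)})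
          + volume (Set.Ioc (0:ℝ) 1 ∩ {x | s < f₀ x}
              ∩ {x | G x < s ∧ u < (s - G x) ^ (p - 1)})) := by
  have h1 : ∀ x, ENNReal.ofReal (|G x - f₀ x| ^ p) = ∫⁻ s, kfun p (G x) (f₀ x) s :=
    fun x => (level1 hp _ _).symm
  rw [lintegral_congr h1,
    lintegral_lintegral_swap ((kfun_prod_measurable hG hf₀ hp).aemeasurable)]
  refine lintegral_congr (fun s => ?_)
  have h2 : ∀ x, kfun p (G x) (f₀ x) s = ∫⁻ u in Set.Ioi (0:ℝ), jfun p (G x) (f₀ x) s u :=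
    fun x => (level2 hp _ _ _).symm
  rw [lintegral_congr h2,
    lintegral_lintegral_swap ((jfun_prod_measurable hG hf₀ hp s).aemeasurable)]
  exact lintegral_congr (fun u => slice_eq hG hf₀ hp s u)

lemma slice_cmp1 {f g : ℝ → ℝ} {b₀ b₁ : ℝ} (hf : Measurable f) (hf₀ : Measurable f₀)
    (hb₀ : ∀ x ∈ Set.Icc (0:ℝ) 1, b₀ ≤ f x) (hb₁ : ∀ x ∈ Set.Icc (0:ℝ) 1, f x ≤ b₁)
    (hmono : MonotoneOn f₀ (Set.Icc (0:ℝ) 1))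
    (hg : g =ᵐ[volume.restrict (Set.Ioc (0:ℝ) 1)] rearr f) (hp : 1 ≤ p) (s u : ℝ) :
    volume (Set.Ioc (0:ℝ) 1 ∩ {x | f₀ x < s} ∩ {x | s < g x ∧ u < (g x - s) ^ (p - 1)}) ≤
      volume (Set.Ioc (0:ℝ) 1 ∩ {x | f₀ x < s}
        ∩ {x | s < f x ∧ u < (f x - s) ^ (p - 1)}) := by
  rcases upset_lemma hp s u with h | ⟨c, hc⟩
  · have e : {x | s < g x ∧ u < (g x - s) ^ (p - 1)}
        = g ⁻¹' {t | s < t ∧ u < (t - s) ^ (p - 1)} := rfl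
    rw [e, h]
    simp
  · have e1 : {x | s < g x ∧ u < (g x - s) ^ (p - 1)} = {x | c < g x} := by
      have e : {x | s < g x ∧ u < (g x - s) ^ (p - 1)}
          = g ⁻¹' {t | s < t ∧ u < (t - s) ^ (p - 1)} := rfl
      rw [e, hc]; rfl
    have e2 : {x | s < f x ∧ u < (f x - s) ^ (p - 1)} = {x | c < f x} := by
      have e : {x | s < f x ∧ u < (f x - s) ^ (p - 1)}
          = f ⁻¹' {t | s < t ∧ u < (t - s) ^ (p - 1)} := rfl
      rw [e, hc]; rfl
    rw [e1, e2]
    rw [vol_congr_pred hg {x | f₀ x < s} (fun t => c < t)]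
    exact key1 hf hf₀ hb₀ hb₁ hmono s c

lemma slice_cmp2 {f g : ℝ → ℝ} {b₀ b₁ : ℝ} (hf : Measurable f) (hf₀ : Measurable f₀)
    (hb₀ : ∀ x ∈ Set.Icc (0:ℝ) 1, b₀ ≤ f x) (hb₁ : ∀ x ∈ Set.Icc (0:ℝ) 1, f x ≤ b₁)
    (hmono : MonotoneOn f₀ (Set.Icc (0:ℝ) 1))
    (hg : g =ᵐ[volume.restrict (Set.Ioc (0:ℝ) 1)] rearr f) (hp : 1 ≤ p) (s u : ℝ) :
    volume (Set.Ioc (0:ℝ) 1 ∩ {x | s < f₀ x} ∩ {x | g x < s ∧ u < (s - g x) ^ (p - 1)}) ≤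
      volume (Set.Ioc (0:ℝ) 1 ∩ {x | s < f₀ x}
        ∩ {x | f x < s ∧ u < (s - f x) ^ (p - 1)}) := by
  rcases downset_lemma hp s u with h | ⟨c, hc⟩
  · have e : {x | g x < s ∧ u < (s - g x) ^ (p - 1)}
        = g ⁻¹' {t | t < s ∧ u < (s - t) ^ (p - 1)} := rfl
    rw [e, h]
    simp
  · have e1 : {x | g x < s ∧ u < (s - g x) ^ (p - 1)} = {x | g x < c} := by
      have e : {x | g x < s ∧ u < (s - g x) ^ (p - 1)}
          = g ⁻¹' {t | t < s ∧ u < (s - t) ^ (p - 1)} := rfl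
      rw [e, hc]; rfl
    have e2 : {x | f x < s ∧ u < (s - f x) ^ (p - 1)} = {x | f x < c} := by
      have e : {x | f x < s ∧ u < (s - f x) ^ (p - 1)}
          = f ⁻¹' {t | t < s ∧ u < (s - t) ^ (p - 1)} := rfl
      rw [e, hc]; rfl
    rw [e1, e2]
    rw [vol_congr_pred hg {x | s < f₀ x} (fun t => t < c)]
    exact key2 hf hf₀ hb₀ hb₁ hmono s c

lemma core {f f₀ : ℝ → ℝ} {b₀ b₁ : ℝ} (hf : Measurable f) (hf₀ : Measurable f₀)
    (hb₀ : ∀ x ∈ Set.Icc (0:ℝ) 1, b₀ ≤ f x) (hb₁ : ∀ x ∈ Set.Icc (0:ℝ) 1, f x ≤ b₁)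
    (hmono : MonotoneOn f₀ (Set.Icc (0:ℝ) 1)) (hp : 1 ≤ p) :
    (∫⁻ x in Set.Ioc (0:ℝ) 1, ENNReal.ofReal (|rearr f x - f₀ x| ^ p))
      ≤ ∫⁻ x in Set.Ioc (0:ℝ) 1, ENNReal.ofReal (|f x - f₀ x| ^ p) := by
  have ham := rearr_aemeasurable hb₀ hb₁
  set g := ham.mk (rearr f) with hgdef
  have hgmeas : Measurable g := ham.measurable_mk
  have hae : rearr f =ᵐ[volume.restrict (Set.Ioc (0:ℝ) 1)] g := ham.ae_eq_mk
  have h1 : (∫⁻ x in Set.Ioc (0:ℝ) 1, ENNReal.ofReal (|rearr f x - f₀ x| ^ p))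
      = ∫⁻ x in Set.Ioc (0:ℝ) 1, ENNReal.ofReal (|g x - f₀ x| ^ p) := by
    refine lintegral_congr_ae (hae.mono (fun x hx => ?_))
    simp only [hx]
  rw [h1, formula hgmeas hf₀ hp, formula hf hf₀ hp]
  refine lintegral_mono (fun s => ?_)
  refine lintegral_mono (fun u => ?_)
  exact mul_le_mul_right
    (add_le_add (slice_cmp1 hf hf₀ hb₀ hb₁ hmono hae.symm hp s u)
      (slice_cmp2 hf hf₀ hb₀ hb₁ hmono hae.symm hp s u)) _

end Main

end RearrAux

open RearrAux in
/-- Rearrangement weakly reduces the `L^p` estimation error against a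
weakly increasing target, for every `p ∈ [1, ∞)`. -/
theorem rearr_reduces_Lp_error (K : Set ℝ) (hK : Bornology.IsBounded K)
    (f₀ fhat : ℝ → ℝ)
    (hf₀K : ∀ x ∈ Set.Icc (0:ℝ) 1, f₀ x ∈ K)
    (hfhatK : ∀ x ∈ Set.Icc (0:ℝ) 1, fhat x ∈ K)
    (hf₀mono : MonotoneOn f₀ (Set.Icc (0:ℝ) 1))
    (hf₀meas : Measurable f₀) (hfhatmeas : Measurable fhat)
    (p : ℝ) (hp : 1 ≤ p) :
    (∫ x in Set.Icc (0:ℝ) 1, |rearr fhat x - f₀ x| ^ p) ^ (1 / p) ≤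
      (∫ x in Set.Icc (0:ℝ) 1, |fhat x - f₀ x| ^ p) ^ (1 / p) := by
  have hp0 : (0:ℝ) < p := by linarith
  obtain ⟨C, hC⟩ := hK.exists_norm_le
  have hb₀f : ∀ x ∈ Set.Icc (0:ℝ) 1, -C ≤ fhat x := fun x hx =>
    (abs_le.1 (hC (fhat x) (hfhatK x hx))).1
  have hb₁f : ∀ x ∈ Set.Icc (0:ℝ) 1, fhat x ≤ C := fun x hx =>
    (abs_le.1 (hC (fhat x) (hfhatK x hx))).2
  refine Real.rpow_le_rpow
    (integral_nonneg (fun x => Real.rpow_nonneg (abs_nonneg _) _)) ?_ (by positivity)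
  rw [← Measure.restrict_congr_set (Ioc_ae_eq_Icc (μ := volume) (a := (0:ℝ)) (b := 1))]
  have ham := rearr_aemeasurable hb₀f hb₁f
  have habs : Measurable (fun t : ℝ => |t| ^ p) :=
    (continuous_abs.rpow_const (fun _ => Or.inr hp0.le)).measurable
  have hsm1 : AEStronglyMeasurable (fun x => |rearr fhat x - f₀ x| ^ p)
      (volume.restrict (Set.Ioc (0:ℝ) 1)) :=
    (habs.comp_aemeasurable (ham.sub hf₀meas.aemeasurable)).aestronglyMeasurable
  have hsm2 : AEStronglyMeasurable (fun x => |fhat x - f₀ x| ^ p)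
      (volume.restrict (Set.Ioc (0:ℝ) 1)) :=
    ((habs.comp (hfhatmeas.sub hf₀meas)).aemeasurable).aestronglyMeasurable
  rw [integral_eq_lintegral_of_nonneg_ae
      (Filter.Eventually.of_forall (fun x => Real.rpow_nonneg (abs_nonneg _) _)) hsm1,
    integral_eq_lintegral_of_nonneg_ae
      (Filter.Eventually.of_forall (fun x => Real.rpow_nonneg (abs_nonneg _) _)) hsm2]
  refine ENNReal.toReal_mono ?_ (core hfhatmeas hf₀meas hb₀f hb₁f hf₀mono hp)
  -- finiteness of the RHS lintegral
  have hbdd : ∀ᵐ x ∂(volume.restrict (Set.Ioc (0:ℝ) 1)),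
      ENNReal.ofReal (|fhat x - f₀ x| ^ p) ≤ ENNReal.ofReal ((2*C) ^ p) := by
    rw [ae_restrict_iff' measurableSet_Ioc]
    refine Filter.Eventually.of_forall (fun x hx => ?_)
    have hx' : x ∈ Set.Icc (0:ℝ) 1 := ⟨hx.1.le, hx.2⟩
    have h1 : |fhat x| ≤ C := hC (fhat x) (hfhatK x hx')
    have h2 : |f₀ x| ≤ C := hC (f₀ x) (hf₀K x hx')
    refine ENNReal.ofReal_le_ofReal (Real.rpow_le_rpow (abs_nonneg _) ?_ hp0.le)
    calc |fhat x - f₀ x| ≤ |fhat x| + |f₀ x| := abs_sub _ _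
      _ ≤ 2 * C := by linarith
  refine ne_of_lt (lt_of_le_of_lt (lintegral_mono_ae hbdd) ?_)
  rw [lintegral_const, Measure.restrict_apply MeasurableSet.univ, Set.univ_inter,
    Real.volume_Ioc]
  exact ENNReal.mul_lt_top ENNReal.ofReal_lt_top ENNReal.ofReal_lt_top
end

section
/- Let f₀ : [0,1] → K be weakly increasing and measurable and f̂ : [0,1] → K measurable, K ⊂ ℝ bounded. The L^∞ error also weakly improves under rearrangement: ess sup_{x∈[0,1]} |f̂*(x) - f₀(x)| ≤ ess sup_{x∈[0,1]} |f̂(x) - f₀(x)|. -/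
open MeasureTheory

private lemma le_of_forall_eps {a b : ℝ} (h : ∀ ε : ℝ, 0 < ε → a ≤ b + ε) : a ≤ b := by
  by_contra h'
  push_neg at h'
  linarith [h ((a - b) / 2) (by linarith)]

/-- Rearrangement weakly reduces the `L^∞` (essential supremum) estimation error
against a weakly increasing target. -/
theorem rearr_reduces_Linfty_error (K : Set ℝ) (hK : Bornology.IsBounded K)
    (f₀ fhat : ℝ → ℝ)
    (hf₀K : ∀ x ∈ Set.Icc (0:ℝ) 1, f₀ x ∈ K)
    (hfhatK : ∀ x ∈ Set.Icc (0:ℝ) 1, fhat x ∈ K)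
    (hf₀mono : MonotoneOn f₀ (Set.Icc (0:ℝ) 1))
    (hf₀meas : Measurable f₀) (hfhatmeas : Measurable fhat) :
    essSup (fun x => |rearr fhat x - f₀ x|) (volume.restrict (Set.Icc (0:ℝ) 1)) ≤
      essSup (fun x => |fhat x - f₀ x|) (volume.restrict (Set.Icc (0:ℝ) 1)) := by
  classical
  set μ := volume.restrict (Set.Icc (0:ℝ) 1) with hμdef
  -- universal bound from boundedness of K
  obtain ⟨C, hC⟩ := hK.subset_closedBall 0
  have habsK : ∀ k ∈ K, |k| ≤ C := by
    intro k hk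
    have := hC hk
    simpa [Real.dist_eq] using this
  have hvol1 : volume (Set.Icc (0:ℝ) 1) = 1 := by
    simp [Real.volume_Icc]
  have hμuniv : μ Set.univ = 1 := by
    rw [hμdef, Measure.restrict_apply_univ, hvol1]
  haveI hne : (ae μ).NeBot := by
    rw [ae_neBot]
    intro h
    rw [h] at hμuniv
    simp at hμuniv
  have haeIcc : ∀ᵐ x ∂μ, x ∈ Set.Icc (0:ℝ) 1 := ae_restrict_mem measurableSet_Icc
  -- bound on the error function
  have herrbd : ∀ x ∈ Set.Icc (0:ℝ) 1, |fhat x - f₀ x| ≤ C + C := by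
    intro x hx
    calc |fhat x - f₀ x| ≤ |fhat x| + |f₀ x| := abs_sub _ _
    _ ≤ C + C := add_le_add (habsK _ (hfhatK x hx)) (habsK _ (hf₀K x hx))
  have hbdd : Filter.IsBoundedUnder (· ≤ ·) (ae μ) (fun x => |fhat x - f₀ x|) :=
    ⟨C + C, haeIcc.mono fun x hx => herrbd x hx⟩
  set M : ℝ := essSup (fun x => |fhat x - f₀ x|) μ with hMdef
  have hMae : ∀ᵐ x ∂μ, |fhat x - f₀ x| ≤ M := ae_le_essSup hbdd
  -- the null set where the error exceeds M, inside [0,1]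
  set N : Set ℝ := {x | ¬ |fhat x - f₀ x| ≤ M} ∩ Set.Icc (0:ℝ) 1 with hNdef
  have hNmeas : MeasurableSet {x | ¬ |fhat x - f₀ x| ≤ M} := by
    have : Measurable fun x => |fhat x - f₀ x| := (hfhatmeas.sub hf₀meas).abs
    exact (measurableSet_le this measurable_const).compl
  have hN0 : volume N = 0 := by
    have h2 : μ {x | ¬ |fhat x - f₀ x| ≤ M} = 0 := ae_iff.1 hMae
    rwa [hμdef, Measure.restrict_apply hNmeas] at h2
  -- convenient facts about N
  have hgood : ∀ u ∈ Set.Icc (0:ℝ) 1, u ∉ N → |fhat u - f₀ u| ≤ M := by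
    intro u hu huN
    by_contra h
    exact huN ⟨h, hu⟩
  -- monotone extension of f₀ to ℝ
  set proj : ℝ → ℝ := fun z => max 0 (min z 1) with hprojdef
  have hprojmem : ∀ z, proj z ∈ Set.Icc (0:ℝ) 1 :=
    fun z => ⟨le_max_left _ _, max_le zero_le_one (min_le_right _ _)⟩
  have hprojid : ∀ z ∈ Set.Icc (0:ℝ) 1, proj z = z := by
    intro z hz
    rw [hprojdef]
    simp only
    rw [min_eq_left hz.2, max_eq_right hz.1]
  set F : ℝ → ℝ := fun z => f₀ (proj z) with hFdef
  have hFmono : Monotone F := by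
    intro a b hab
    exact hf₀mono (hprojmem a) (hprojmem b)
      (max_le_max le_rfl (min_le_min hab le_rfl))
  have hFeq : ∀ z ∈ Set.Icc (0:ℝ) 1, F z = f₀ z := fun z hz => by
    rw [hFdef]; simp only; rw [hprojid z hz]
  have hD : volume {x | ¬ContinuousAt F x} = 0 :=
    hFmono.countable_not_continuousAt.measure_zero _
  -- the key pointwise claim
  have key : ∀ x ∈ Set.Ioo (0:ℝ) 1, ContinuousAt F x → |rearr fhat x - f₀ x| ≤ M := by
    intro x hx hcont
    have hxI : x ∈ Set.Icc (0:ℝ) 1 := ⟨hx.1.le, hx.2.le⟩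
    set S : Set ℝ := {y : ℝ | x ≤ (volume (Set.Icc (0:ℝ) 1 ∩ {u : ℝ | fhat u ≤ y})).toReal}
      with hSdef
    have hrearr : rearr fhat x = sInf S := rfl
    -- S is nonempty
    have hSne : S.Nonempty := by
      refine ⟨C, ?_⟩
      have hsub : Set.Icc (0:ℝ) 1 ⊆ {u : ℝ | fhat u ≤ C} := by
        intro u hu
        exact le_trans (le_abs_self _) (habsK _ (hfhatK u hu))
      rw [hSdef, Set.mem_setOf_eq, Set.inter_eq_self_of_subset_left hsub, hvol1]
      simpa using hx.2.le
    -- lower bounds for elements of S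
    have hlb : ∀ x' ∈ Set.Icc (0:ℝ) 1, x' < x → ∀ y ∈ S, f₀ x' - M ≤ y := by
      intro x' hx' hx'x y hy
      by_contra hcon
      push_neg at hcon
      have hsub : Set.Icc (0:ℝ) 1 ∩ {u : ℝ | fhat u ≤ y} ⊆ N ∪ Set.Icc 0 x' := by
        rintro u ⟨hu1, hu2⟩
        by_cases huN : u ∈ N
        · exact Or.inl huN
        · right
          have huM := hgood u hu1 huN
          have h1 := (abs_le.1 huM).1
          have hlt : f₀ u < f₀ x' := by
            simp only [Set.mem_setOf_eq] at hu2
            linarith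
          have : u ≤ x' := by
            by_contra h
            push_neg at h
            exact absurd (hf₀mono hx' hu1 h.le) (not_le.2 hlt)
          exact ⟨hu1.1, this⟩
      have hm : volume (Set.Icc (0:ℝ) 1 ∩ {u : ℝ | fhat u ≤ y}) ≤ ENNReal.ofReal x' := by
        calc volume (Set.Icc (0:ℝ) 1 ∩ {u : ℝ | fhat u ≤ y})
            ≤ volume (N ∪ Set.Icc 0 x') := measure_mono hsub
          _ ≤ volume N + volume (Set.Icc 0 x') := measure_union_le _ _
          _ = ENNReal.ofReal x' := by rw [hN0, Real.volume_Icc, zero_add, sub_zero]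
      have hxx' : x ≤ x' := by
        have h1 : (volume (Set.Icc (0:ℝ) 1 ∩ {u : ℝ | fhat u ≤ y})).toReal ≤ x' := by
          have := ENNReal.toReal_mono ENNReal.ofReal_ne_top hm
          rwa [ENNReal.toReal_ofReal hx'.1] at this
        exact le_trans hy h1
      linarith
    have hSbdd : BddBelow S :=
      ⟨f₀ 0 - M, fun y hy => hlb 0 ⟨le_refl _, zero_le_one⟩ hx.1 y hy⟩
    -- upper bound: rearr fhat x ≤ f₀ x + M
    have hupper : rearr fhat x ≤ f₀ x + M := by
      apply le_of_forall_eps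
      intro ε hε
      obtain ⟨δ, hδ, hδc⟩ := Metric.continuousAt_iff.1 hcont ε hε
      set x' : ℝ := min 1 (x + δ / 2) with hx'def
      have hxx' : x < x' := lt_min hx.2 (by linarith)
      have hx'I : x' ∈ Set.Icc (0:ℝ) 1 :=
        ⟨le_trans hx.1.le hxx'.le, min_le_left _ _⟩
      have hdist : dist x' x < δ := by
        rw [Real.dist_eq, abs_of_nonneg (by linarith : (0:ℝ) ≤ x' - x)]
        have : x' ≤ x + δ / 2 := min_le_right _ _
        linarith
      have hf₀x' : f₀ x' ≤ f₀ x + ε := by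
        have := hδc hdist
        rw [Real.dist_eq, hFeq x' hx'I, hFeq x hxI] at this
        have := (abs_lt.1 this).2
        linarith
      have hymem : (f₀ x' + M) ∈ S := by
        rw [hSdef, Set.mem_setOf_eq]
        have hsub : Set.Icc 0 x' \ N ⊆
            Set.Icc (0:ℝ) 1 ∩ {u : ℝ | fhat u ≤ f₀ x' + M} := by
          rintro u ⟨hu, huN⟩
          have huI : u ∈ Set.Icc (0:ℝ) 1 := ⟨hu.1, le_trans hu.2 hx'I.2⟩
          have huM := (abs_le.1 (hgood u huI huN)).2
          have hmon : f₀ u ≤ f₀ x' := hf₀mono huI hx'I hu.2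
          exact ⟨huI, by simp only [Set.mem_setOf_eq]; linarith⟩
        have h1 : volume (Set.Icc 0 x' \ N) = ENNReal.ofReal x' := by
          rw [measure_diff_null hN0, Real.volume_Icc, sub_zero]
        have hfin : volume (Set.Icc (0:ℝ) 1 ∩ {u : ℝ | fhat u ≤ f₀ x' + M}) ≠ ⊤ := by
          refine ne_top_of_le_ne_top ?_ (measure_mono Set.inter_subset_left)
          rw [hvol1]
          exact ENNReal.one_ne_top
        have h2 := ENNReal.toReal_mono hfin (h1 ▸ measure_mono hsub)
        rw [ENNReal.toReal_ofReal hx'I.1] at h2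
        exact le_trans hxx'.le h2
      calc rearr fhat x ≤ f₀ x' + M := csInf_le hSbdd hymem
        _ ≤ f₀ x + M + ε := by linarith
    -- lower bound: f₀ x - M ≤ rearr fhat x
    have hlower : f₀ x - M ≤ rearr fhat x := by
      apply le_of_forall_eps
      intro ε hε
      obtain ⟨δ, hδ, hδc⟩ := Metric.continuousAt_iff.1 hcont ε hε
      set x' : ℝ := max 0 (x - δ / 2) with hx'def
      have hx'x : x' < x := max_lt hx.1 (by linarith)
      have hx'I : x' ∈ Set.Icc (0:ℝ) 1 :=
        ⟨le_max_left _ _, le_trans hx'x.le hx.2.le⟩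
      have hdist : dist x' x < δ := by
        rw [Real.dist_eq, abs_of_nonpos (by linarith : x' - x ≤ 0)]
        have : x - δ / 2 ≤ x' := le_max_right _ _
        linarith
      have hf₀x' : f₀ x - ε ≤ f₀ x' := by
        have := hδc hdist
        rw [Real.dist_eq, hFeq x' hx'I, hFeq x hxI] at this
        have := (abs_lt.1 this).1
        linarith
      have : f₀ x' - M ≤ rearr fhat x := by
        rw [hrearr]
        exact le_csInf hSne fun y hy => hlb x' hx'I hx'x y hy
      linarith
    rw [abs_le]
    constructor <;> [skip; skip]
    · linarith
    · linarith
  -- assemble the a.e. bound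
  have haeIoo : ∀ᵐ x ∂μ, x ∈ Set.Ioo (0:ℝ) 1 := by
    have h01 : volume ({0, 1} : Set ℝ) = 0 :=
      ((Set.countable_singleton (1:ℝ)).insert 0).measure_zero _
    have h1 : ∀ᵐ x ∂μ, x ∉ ({0, 1} : Set ℝ) :=
      ae_restrict_of_ae ((measure_eq_zero_iff_ae_notMem).1 h01)
    filter_upwards [haeIcc, h1] with x hx hx01
    simp only [Set.mem_insert_iff, Set.mem_singleton_iff, not_or] at hx01
    exact ⟨lt_of_le_of_ne hx.1 (Ne.symm hx01.1), lt_of_le_of_ne hx.2 hx01.2⟩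
  have haeCont : ∀ᵐ x ∂μ, ContinuousAt F x := by
    have := ae_restrict_of_ae (μ := volume) (s := Set.Icc (0:ℝ) 1)
      ((measure_eq_zero_iff_ae_notMem).1 hD)
    filter_upwards [this] with x hx
    simpa using hx
  have hfinal : ∀ᵐ x ∂μ, |rearr fhat x - f₀ x| ≤ M := by
    filter_upwards [haeIoo, haeCont] with x hx hcont
    exact key x hx hcont
  have hco : Filter.IsCoboundedUnder (· ≤ ·) (ae μ)
      (fun x => |rearr fhat x - f₀ x|) :=
    Filter.isCoboundedUnder_le_of_eventually_le _
      (Filter.Eventually.of_forall fun x => abs_nonneg _)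
  exact Filter.limsup_le_of_le hco hfinal
end

section
/- Let f₀ : [0,1]^d → K be weakly increasing and measurable, and f̄ : [0,1]^d → K measurable. Then for any coordinate j and any p ∈ [1,∞), (∫_{[0,1]^d} |R_j f̄(x) − f₀(x)|^p dx)^{1/p} ≤ (∫_{[0,1]^d} |f̄(x) − f₀(x)|^p dx)^{1/p}, where R_j is the increasing rearrangement with respect to the j-th coordinate. -/
open MeasureTheory

/-- Increasing rearrangement with respect to the `j`-th coordinate. -/
noncomputable def rearrCoord {d : ℕ} (j : Fin d) (f : (Fin d → ℝ) → ℝ)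
    (x : Fin d → ℝ) : ℝ :=
  sInf {y : ℝ | x j ≤
    (volume (Set.Icc (0:ℝ) 1 ∩ {t : ℝ | f (Function.update x j t) ≤ y})).toReal}

namespace RearrAux

open Set Function
open scoped ENNReal

noncomputable def distF (g : ℝ → ℝ) (y : ℝ) : ℝ≥0∞ :=
  volume (Set.Icc (0:ℝ) 1 ∩ {t : ℝ | g t ≤ y})

noncomputable def rearr1 (g : ℝ → ℝ) (s : ℝ) : ℝ :=
  sInf {y : ℝ | s ≤ (distF g y).toReal}

lemma rearrCoord_eq {d : ℕ} (j : Fin d) (f : (Fin d → ℝ) → ℝ) (x : Fin d → ℝ) :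
    rearrCoord j f x = rearr1 (fun t => f (Function.update x j t)) (x j) := rfl

lemma distF_le_one (g : ℝ → ℝ) (y : ℝ) : distF g y ≤ 1 := by
  have := measure_mono (μ := volume) (Set.inter_subset_left (s := Set.Icc (0:ℝ) 1)
    (t := {t : ℝ | g t ≤ y}))
  simpa [distF, Real.volume_Icc] using this

lemma distF_ne_top (g : ℝ → ℝ) (y : ℝ) : distF g y ≠ ⊤ :=
  ((distF_le_one g y).trans_lt ENNReal.one_lt_top).ne

lemma distF_mono (g : ℝ → ℝ) : Monotone (distF g) := fun a b hab =>
  measure_mono fun t ht => ⟨ht.1, ht.2.trans hab⟩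

lemma distF_toReal_le_one (g : ℝ → ℝ) (y : ℝ) : (distF g y).toReal ≤ 1 := by
  have := ENNReal.toReal_mono (by simp) (distF_le_one g y)
  simpa using this

lemma upClosed {g : ℝ → ℝ} {s a b : ℝ} (ha : s ≤ (distF g a).toReal) (hab : a ≤ b) :
    s ≤ (distF g b).toReal :=
  ha.trans (ENNReal.toReal_mono (distF_ne_top g b) (distF_mono g hab))

lemma mem_S_csInf {g : ℝ → ℝ} (hg : Measurable g) {s : ℝ}
    (hne : {y : ℝ | s ≤ (distF g y).toReal}.Nonempty)
    (hbdd : BddBelow {y : ℝ | s ≤ (distF g y).toReal}) :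
    sInf {y : ℝ | s ≤ (distF g y).toReal} ∈ {y : ℝ | s ≤ (distF g y).toReal} := by
  set S := {y : ℝ | s ≤ (distF g y).toReal} with hS
  set c := sInf S with hc
  have hmem : ∀ n : ℕ, c + 1 / (n + 1) ∈ S := by
    intro n
    have hlt : c < c + 1 / (n + 1) := by
      have : (0:ℝ) < 1 / (n + 1) := by positivity
      linarith
    obtain ⟨b, hbS, hb⟩ := (csInf_lt_iff hbdd hne).mp hlt
    exact upClosed hbS hb.le
  set T : ℕ → Set ℝ := fun n => Set.Icc (0:ℝ) 1 ∩ {t : ℝ | g t ≤ c + 1 / (n + 1)} with hT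
  have hTmeas : ∀ n, MeasurableSet (T n) :=
    fun n => measurableSet_Icc.inter (hg measurableSet_Iic)
  have hTanti : Antitone T := by
    intro m n hmn
    refine Set.inter_subset_inter_right _ fun t ht => ?_
    simp only [Set.mem_setOf_eq] at ht ⊢
    have h1 : (1:ℝ) / (n + 1) ≤ 1 / (m + 1) := by
      apply one_div_le_one_div_of_le
      · positivity
      · have : (m:ℝ) ≤ n := Nat.cast_le.mpr hmn
        linarith
    linarith
  have hInter : ⋂ n, T n = Set.Icc (0:ℝ) 1 ∩ {t : ℝ | g t ≤ c} := by
    ext t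
    simp only [Set.mem_iInter, hT, Set.mem_inter_iff, Set.mem_setOf_eq]
    constructor
    · intro h
      refine ⟨(h 0).1, ?_⟩
      by_contra hgt
      push_neg at hgt
      obtain ⟨n, hn⟩ := exists_nat_one_div_lt (sub_pos.mpr hgt)
      have := (h n).2
      linarith
    · intro h n
      refine ⟨h.1, ?_⟩
      have : (0:ℝ) < 1 / (n + 1) := by positivity
      linarith [h.2]
  have hmeasInter : distF g c = ⨅ n, volume (T n) := by
    rw [distF, ← hInter]
    exact Directed.measure_iInter (fun n => (hTmeas n).nullMeasurableSet)
      (hTanti.directed_ge) ⟨0, by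
        have : volume (T 0) ≤ 1 := le_trans (measure_mono (Set.inter_subset_left)) (by simp [Real.volume_Icc])
        exact (this.trans_lt ENNReal.one_lt_top).ne⟩
  have hle : ENNReal.ofReal s ≤ distF g c := by
    rw [hmeasInter]
    refine le_iInf fun n => ?_
    have := hmem n
    exact (ENNReal.ofReal_le_iff_le_toReal (distF_ne_top g _)).mpr this
  exact (ENNReal.ofReal_le_iff_le_toReal (distF_ne_top g c)).mp hle

lemma rearr1_le_iff {g : ℝ → ℝ} (hg : Measurable g) {s : ℝ}
    (hne : {y : ℝ | s ≤ (distF g y).toReal}.Nonempty)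
    (hbdd : BddBelow {y : ℝ | s ≤ (distF g y).toReal}) (a : ℝ) :
    rearr1 g s ≤ a ↔ s ≤ (distF g a).toReal := by
  constructor
  · intro h
    exact upClosed (mem_S_csInf hg hne hbdd) h
  · intro h
    exact csInf_le hbdd h


section Bounded

variable {g : ℝ → ℝ} {m M : ℝ}

lemma distF_eq_one (hgm : ∀ t ∈ Set.Icc (0:ℝ) 1, g t ∈ Set.Icc m M) :
    distF g M = 1 := by
  have : Set.Icc (0:ℝ) 1 ∩ {t : ℝ | g t ≤ M} = Set.Icc (0:ℝ) 1 := by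
    apply Set.inter_eq_left.mpr
    intro t ht
    exact (hgm t ht).2
  rw [distF, this, Real.volume_Icc]
  norm_num

lemma distF_eq_zero (hgm : ∀ t ∈ Set.Icc (0:ℝ) 1, g t ∈ Set.Icc m M) :
    distF g (m - 1) = 0 := by
  have : Set.Icc (0:ℝ) 1 ∩ {t : ℝ | g t ≤ m - 1} = ∅ := by
    ext t
    simp only [Set.mem_inter_iff, Set.mem_setOf_eq, Set.mem_empty_iff_false, iff_false, not_and]
    intro ht h
    have := (hgm t ht).1
    linarith
  rw [distF, this, measure_empty]

lemma slice_ne (hgm : ∀ t ∈ Set.Icc (0:ℝ) 1, g t ∈ Set.Icc m M) {s : ℝ} (hs : s ≤ 1) :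
    {y : ℝ | s ≤ (distF g y).toReal}.Nonempty := by
  refine ⟨M, ?_⟩
  simp only [Set.mem_setOf_eq, distF_eq_one hgm]
  simpa using hs

lemma slice_bdd (hgm : ∀ t ∈ Set.Icc (0:ℝ) 1, g t ∈ Set.Icc m M) {s : ℝ} (hs : 0 < s) :
    BddBelow {y : ℝ | s ≤ (distF g y).toReal} := by
  refine ⟨m - 1, fun y hy => ?_⟩
  by_contra h
  push_neg at h
  have : s ≤ (distF g (m-1)).toReal := upClosed hy h.le
  rw [distF_eq_zero hgm] at this
  simp at this
  linarith

lemma rearr1_junk {s : ℝ} (hs : s ∉ Set.Ioc (0:ℝ) 1) : rearr1 g s = 0 := by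
  simp only [Set.mem_Ioc, not_and_or, not_lt, not_le] at hs
  rcases hs with hs | hs
  · have : {y : ℝ | s ≤ (distF g y).toReal} = Set.univ := by
      ext y; simp only [Set.mem_setOf_eq, Set.mem_univ, iff_true]
      exact hs.trans ENNReal.toReal_nonneg
    rw [rearr1, this]
    apply Real.sInf_of_not_bddBelow
    rintro ⟨b, hb⟩
    have := hb (Set.mem_univ (b - 1))
    linarith
  · have : {y : ℝ | s ≤ (distF g y).toReal} = ∅ := by
      ext y; simp only [Set.mem_setOf_eq, Set.mem_empty_iff_false, iff_false, not_le]
      exact lt_of_le_of_lt (distF_toReal_le_one g y) hs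
    rw [rearr1, this, Real.sInf_empty]

lemma rearr1_le_iff' (hg : Measurable g) (hgm : ∀ t ∈ Set.Icc (0:ℝ) 1, g t ∈ Set.Icc m M)
    {s : ℝ} (hs : s ∈ Set.Ioc (0:ℝ) 1) (a : ℝ) :
    rearr1 g s ≤ a ↔ s ≤ (distF g a).toReal :=
  rearr1_le_iff hg (slice_ne hgm hs.2) (slice_bdd hgm hs.1) a

lemma setIoc_rearr1_le (hg : Measurable g) (hgm : ∀ t ∈ Set.Icc (0:ℝ) 1, g t ∈ Set.Icc m M)
    (a : ℝ) :
    {s : ℝ | s ∈ Set.Ioc (0:ℝ) 1 ∧ rearr1 g s ≤ a} = Set.Ioc 0 ((distF g a).toReal) := by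
  have hr1 : (distF g a).toReal ≤ 1 := distF_toReal_le_one g a
  ext s
  simp only [Set.mem_setOf_eq, Set.mem_Ioc]
  constructor
  · rintro ⟨hs, hle⟩
    exact ⟨hs.1, (rearr1_le_iff' hg hgm hs a).mp hle⟩
  · rintro ⟨h0, hr⟩
    have hs : s ∈ Set.Ioc (0:ℝ) 1 := ⟨h0, hr.trans hr1⟩
    exact ⟨hs, (rearr1_le_iff' hg hgm hs a).mpr hr⟩

lemma measurable_rearr1 (hg : Measurable g) (hgm : ∀ t ∈ Set.Icc (0:ℝ) 1, g t ∈ Set.Icc m M) :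
    Measurable (rearr1 g) := by
  apply measurable_of_Iic
  intro a
  have hset : rearr1 g ⁻¹' Set.Iic a =
      (Set.Ioc (0:ℝ) 1 ∩ Set.Iic ((distF g a).toReal)) ∪
        ((Set.Ioc (0:ℝ) 1)ᶜ ∩ {s : ℝ | (0:ℝ) ≤ a}) := by
    ext s
    by_cases hs : s ∈ Set.Ioc (0:ℝ) 1
    · simp only [Set.mem_preimage, Set.mem_Iic, Set.mem_union, Set.mem_inter_iff, hs,
        Set.mem_compl_iff, not_true, false_and, or_false, true_and, Set.mem_setOf_eq]
      exact rearr1_le_iff' hg hgm hs a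
    · simp only [Set.mem_preimage, Set.mem_Iic, Set.mem_union, Set.mem_inter_iff, hs,
        Set.mem_compl_iff, not_false_iff, true_and, false_and, false_or, Set.mem_setOf_eq,
        rearr1_junk hs]
  rw [hset]
  exact (measurableSet_Ioc.inter measurableSet_Iic).union
    (measurableSet_Ioc.compl.inter (MeasurableSet.const _))

end Bounded

section Upset

lemma upset_bounds {B : Set ℝ} (hB : B ⊆ Set.Ioc 0 1)
    (hup : ∀ ⦃s : ℝ⦄, s ∈ B → ∀ ⦃s' : ℝ⦄, s ≤ s' → s' ≤ 1 → s' ∈ B) :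
    ∃ β : ℝ, 0 ≤ β ∧ β ≤ 1 ∧ Set.Ioc β 1 ⊆ B ∧ B ⊆ Set.Icc β 1 ∧
      volume B = ENNReal.ofReal (1 - β) := by
  set β := sInf (insert (1:ℝ) B) with hβ
  have hbdd : BddBelow (insert (1:ℝ) B) := by
    refine ⟨0, fun y hy => ?_⟩
    rcases hy with rfl | hy
    · norm_num
    · exact (hB hy).1.le
  have hne : (insert (1:ℝ) B).Nonempty := ⟨1, Set.mem_insert _ _⟩
  have h0β : 0 ≤ β := le_csInf hne (fun y hy => by
    rcases hy with rfl | hy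
    · norm_num
    · exact (hB hy).1.le)
  have hβ1 : β ≤ 1 := csInf_le hbdd (Set.mem_insert _ _)
  have hsub : Set.Ioc β 1 ⊆ B := by
    intro s hs
    obtain ⟨b, hb, hbs⟩ := (csInf_lt_iff hbdd hne).mp hs.1
    rcases hb with rfl | hb
    · exact absurd hs.2 (not_le.mpr hbs)
    · exact hup hb hbs.le hs.2
  have hsub2 : B ⊆ Set.Icc β 1 := fun b hb =>
    ⟨csInf_le hbdd (Set.mem_insert_of_mem _ hb), (hB hb).2⟩
  refine ⟨β, h0β, hβ1, hsub, hsub2, le_antisymm ?_ ?_⟩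
  · calc volume B ≤ volume (Set.Icc β 1) := measure_mono hsub2
    _ = ENNReal.ofReal (1 - β) := Real.volume_Icc
  · calc ENNReal.ofReal (1 - β) = volume (Set.Ioc β 1) := Real.volume_Ioc.symm
    _ ≤ volume B := measure_mono hsub

end Upset

section Keys

variable {g h : ℝ → ℝ} {m M : ℝ}

lemma vol_gt (hg : Measurable g) (v : ℝ) :
    volume {s : ℝ | s ∈ Set.Ioc (0:ℝ) 1 ∧ v < g s}
      = ENNReal.ofReal (1 - (distF g v).toReal) := by
  have hD : volume (Set.Ioc (0:ℝ) 1 ∩ {s : ℝ | g s ≤ v}) = distF g v := by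
    refine measure_congr ?_
    exact (Ioc_ae_eq_Icc (μ := volume) (a := (0:ℝ)) (b := 1)).inter
      (Filter.EventuallyEq.refl _ _)
  have hX : {s : ℝ | s ∈ Set.Ioc (0:ℝ) 1 ∧ v < g s}
      = Set.Ioc (0:ℝ) 1 \ (Set.Ioc (0:ℝ) 1 ∩ {s : ℝ | g s ≤ v}) := by
    ext s
    simp only [Set.mem_setOf_eq, Set.mem_diff, Set.mem_inter_iff, not_and, not_le]
    constructor
    · rintro ⟨hs, hv⟩; exact ⟨hs, fun _ => hv⟩
    · rintro ⟨hs, hv⟩; exact ⟨hs, hv hs⟩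
  have hmeasD : MeasurableSet (Set.Ioc (0:ℝ) 1 ∩ {s : ℝ | g s ≤ v}) :=
    measurableSet_Ioc.inter (hg measurableSet_Iic)
  rw [hX, measure_diff (Set.inter_subset_left) hmeasD.nullMeasurableSet
    (hD ▸ distF_ne_top g v), hD, Real.volume_Ioc]
  rw [ENNReal.ofReal_sub _ ENNReal.toReal_nonneg, ENNReal.ofReal_toReal (distF_ne_top g v)]
  norm_num

lemma key1_s12 (hg : Measurable g) (hgm : ∀ t ∈ Set.Icc (0:ℝ) 1, g t ∈ Set.Icc m M)
    (hmono : MonotoneOn h (Set.Icc (0:ℝ) 1)) (v u : ℝ) :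
    volume {s : ℝ | s ∈ Set.Ioc (0:ℝ) 1 ∧ v < rearr1 g s ∧ h s ≤ u}
      ≤ volume {s : ℝ | s ∈ Set.Ioc (0:ℝ) 1 ∧ v < g s ∧ h s ≤ u} := by
  set r := (distF g v).toReal with hr
  have hr0 : 0 ≤ r := ENNReal.toReal_nonneg
  have hr1 : r ≤ 1 := distF_toReal_le_one g v
  set B := {s : ℝ | s ∈ Set.Ioc (0:ℝ) 1 ∧ u < h s} with hBdef
  obtain ⟨β, h0β, hβ1, hIocB, hBIcc, hvolB⟩ := upset_bounds (B := B)
    (fun s hs => hs.1) (by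
      rintro s ⟨hs, hu⟩ s' hss' hs'1
      exact ⟨⟨lt_of_lt_of_le hs.1 hss', hs'1⟩,
        lt_of_lt_of_le hu (hmono ⟨hs.1.le, hs.2⟩ ⟨(hs.1.trans_le hss').le, hs'1⟩ hss')⟩)
  have hLHS : {s : ℝ | s ∈ Set.Ioc (0:ℝ) 1 ∧ v < rearr1 g s ∧ h s ≤ u}
      = Set.Ioc r 1 \ B := by
    ext s
    simp only [Set.mem_setOf_eq, Set.mem_diff, Set.mem_Ioc, hBdef]
    constructor
    · rintro ⟨hs, hv, hu⟩
      have : ¬ s ≤ r := fun hle => absurd ((rearr1_le_iff' hg hgm hs v).mpr hle) (not_le.mpr hv)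
      exact ⟨⟨not_le.mp this, hs.2⟩, fun hc => absurd hc.2 (not_lt.mpr hu)⟩
    · rintro ⟨⟨hrs, hs1⟩, hnB⟩
      have hs : s ∈ Set.Ioc (0:ℝ) 1 := ⟨lt_of_le_of_lt hr0 hrs, hs1⟩
      refine ⟨hs, ?_, ?_⟩
      · by_contra hv
        push_neg at hv
        exact absurd ((rearr1_le_iff' hg hgm hs v).mp hv) (not_le.mpr hrs)
      · by_contra hu
        push_neg at hu
        exact hnB ⟨hs, hu⟩
  rw [hLHS]
  rcases le_total β r with hβr | hrβ
  · have : Set.Ioc r 1 \ B = ∅ := by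
      apply Set.eq_empty_iff_forall_notMem.mpr
      rintro s ⟨hs, hnB⟩
      exact hnB (hIocB ⟨lt_of_le_of_lt hβr hs.1, hs.2⟩)
    rw [this]; simp
  · have hLHSle : volume (Set.Ioc r 1 \ B) ≤ ENNReal.ofReal (β - r) := by
      have : Set.Ioc r 1 \ B ⊆ Set.Ioc r β := by
        rintro s ⟨hs, hnB⟩
        refine ⟨hs.1, ?_⟩
        by_contra hb
        push_neg at hb
        exact hnB (hIocB ⟨hb, hs.2⟩)
      calc volume (Set.Ioc r 1 \ B) ≤ volume (Set.Ioc r β) := measure_mono this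
        _ = ENNReal.ofReal (β - r) := Real.volume_Ioc
    set X := {s : ℝ | s ∈ Set.Ioc (0:ℝ) 1 ∧ v < g s} with hXdef
    have hvolX : volume X = ENNReal.ofReal (1 - r) := vol_gt hg v
    have hRHSset : {s : ℝ | s ∈ Set.Ioc (0:ℝ) 1 ∧ v < g s ∧ h s ≤ u} = X \ B := by
      ext s
      simp only [hXdef, hBdef, Set.mem_setOf_eq, Set.mem_diff, not_and, not_lt]
      constructor
      · rintro ⟨hs, hv, hu⟩; exact ⟨⟨hs, hv⟩, fun _ => hu⟩
      · rintro ⟨⟨hs, hv⟩, hu⟩; exact ⟨hs, hv, hu hs⟩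
    have hXB : volume (X ∩ B) ≤ ENNReal.ofReal (1 - β) := hvolB ▸ measure_mono Set.inter_subset_right
    have hsub : volume X ≤ volume (X \ B) + volume (X ∩ B) :=
      le_trans (measure_mono (by intro s hs; by_cases hb : s ∈ B
                                 · exact Or.inr ⟨hs, hb⟩
                                 · exact Or.inl ⟨hs, hb⟩)) (measure_union_le _ _)
    have hlow : ENNReal.ofReal (1 - r) - ENNReal.ofReal (1 - β) ≤ volume (X \ B) := by
      refine le_trans (tsub_le_tsub (le_of_eq hvolX.symm) hXB) ?_
      exact tsub_le_iff_right.mpr hsub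
    rw [hRHSset]
    refine le_trans hLHSle (le_trans (le_of_eq ?_) hlow)
    rw [← ENNReal.ofReal_sub _ (by linarith : (0:ℝ) ≤ 1 - β)]
    ring_nf

lemma key2_s12 (hg : Measurable g) (hgm : ∀ t ∈ Set.Icc (0:ℝ) 1, g t ∈ Set.Icc m M)
    (hmono : MonotoneOn h (Set.Icc (0:ℝ) 1)) (w u : ℝ) :
    volume {s : ℝ | s ∈ Set.Ioc (0:ℝ) 1 ∧ w < h s ∧ rearr1 g s ≤ u}
      ≤ volume {s : ℝ | s ∈ Set.Ioc (0:ℝ) 1 ∧ w < h s ∧ g s ≤ u} := by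
  set r := (distF g u).toReal with hr
  have hr0 : 0 ≤ r := ENNReal.toReal_nonneg
  have hr1 : r ≤ 1 := distF_toReal_le_one g u
  set B := {s : ℝ | s ∈ Set.Ioc (0:ℝ) 1 ∧ w < h s} with hBdef
  obtain ⟨β, h0β, hβ1, hIocB, hBIcc, hvolB⟩ := upset_bounds (B := B)
    (fun s hs => hs.1) (by
      rintro s ⟨hs, hw⟩ s' hss' hs'1
      exact ⟨⟨lt_of_lt_of_le hs.1 hss', hs'1⟩,
        lt_of_lt_of_le hw (hmono ⟨hs.1.le, hs.2⟩ ⟨(hs.1.trans_le hss').le, hs'1⟩ hss')⟩)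
  have hLHSle : volume {s : ℝ | s ∈ Set.Ioc (0:ℝ) 1 ∧ w < h s ∧ rearr1 g s ≤ u}
      ≤ ENNReal.ofReal (r - β) := by
    have hsub : {s : ℝ | s ∈ Set.Ioc (0:ℝ) 1 ∧ w < h s ∧ rearr1 g s ≤ u} ⊆ Set.Icc β r := by
      rintro s ⟨hs, hw, hu⟩
      refine ⟨(hBIcc ⟨hs, hw⟩).1, (rearr1_le_iff' hg hgm hs u).mp hu⟩
    calc volume _ ≤ volume (Set.Icc β r) := measure_mono hsub
      _ = ENNReal.ofReal (r - β) := Real.volume_Icc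
  rcases le_total r β with hrβ | hβr
  · refine le_trans hLHSle (le_trans (le_of_eq ?_) zero_le)
    exact ENNReal.ofReal_eq_zero.mpr (by linarith)
  · set X := {s : ℝ | s ∈ Set.Ioc (0:ℝ) 1 ∧ u < g s} with hXdef
    have hvolX : volume X = ENNReal.ofReal (1 - r) := vol_gt hg u
    have hRHSset : {s : ℝ | s ∈ Set.Ioc (0:ℝ) 1 ∧ w < h s ∧ g s ≤ u} = B \ X := by
      ext s
      simp only [hXdef, hBdef, Set.mem_setOf_eq, Set.mem_diff, not_and, not_lt]
      constructor
      · rintro ⟨hs, hw, hu⟩; exact ⟨⟨hs, hw⟩, fun _ => hu⟩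
      · rintro ⟨⟨hs, hw⟩, hu⟩; exact ⟨hs, hw, hu hs⟩
    have hBX : volume (B ∩ X) ≤ ENNReal.ofReal (1 - r) := hvolX ▸ measure_mono Set.inter_subset_right
    have hsub : volume B ≤ volume (B \ X) + volume (B ∩ X) :=
      le_trans (measure_mono (by intro s hs; by_cases hb : s ∈ X
                                 · exact Or.inr ⟨hs, hb⟩
                                 · exact Or.inl ⟨hs, hb⟩)) (measure_union_le _ _)
    have hlow : ENNReal.ofReal (1 - β) - ENNReal.ofReal (1 - r) ≤ volume (B \ X) := by
      refine le_trans (tsub_le_tsub (le_of_eq hvolB.symm) hBX) ?_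
      exact tsub_le_iff_right.mpr hsub
    rw [hRHSset]
    refine le_trans hLHSle (le_trans (le_of_eq ?_) hlow)
    rw [← ENNReal.ofReal_sub _ (by linarith : (0:ℝ) ≤ 1 - r)]
    ring_nf

end Keys


section Layer

lemma layer {φ ψ : ℝ → ℝ} (hφ : Measurable φ) (hψ : Measurable ψ) (c : ℝ) :
    ∫⁻ s in Set.Ioc (0:ℝ) 1, ENNReal.ofReal (φ s - ψ s - c)
      = ∫⁻ u : ℝ, volume {s : ℝ | s ∈ Set.Ioc (0:ℝ) 1 ∧ u + c < φ s ∧ ψ s ≤ u} := by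
  have h1 : ∀ s : ℝ, ENNReal.ofReal (φ s - ψ s - c)
      = ∫⁻ u : ℝ, (Set.Ico (ψ s) (φ s - c)).indicator 1 u := by
    intro s
    rw [lintegral_indicator_one measurableSet_Ico, Real.volume_Ico]
    ring_nf
  simp_rw [h1]
  rw [lintegral_lintegral_swap]
  · congr 1
    ext u
    have h2 : ∀ s : ℝ, (Set.Ico (ψ s) (φ s - c)).indicator (1 : ℝ → ℝ≥0∞) u
        = ({s : ℝ | ψ s ≤ u ∧ u + c < φ s}).indicator (1 : ℝ → ℝ≥0∞) s := by
      intro s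
      rw [Set.indicator_apply, Set.indicator_apply]
      refine if_congr ?_ rfl rfl
      simp only [Set.mem_Ico, Set.mem_setOf_eq, lt_sub_iff_add_lt]
    simp_rw [h2]
    have hms : MeasurableSet {s : ℝ | ψ s ≤ u ∧ u + c < φ s} := by
      rw [Set.setOf_and]
      exact (measurableSet_le hψ measurable_const).inter (measurableSet_lt measurable_const hφ)
    rw [lintegral_indicator_one hms, Measure.restrict_apply hms]
    congr 1
    ext s
    simp only [Set.mem_inter_iff, Set.mem_setOf_eq, Set.mem_Ioc]
    tauto
  · have : (Function.uncurry fun s u => (Set.Ico (ψ s) (φ s - c)).indicator (1 : ℝ → ℝ≥0∞) u)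
        = ({p : ℝ × ℝ | ψ p.1 ≤ p.2 ∧ p.2 < φ p.1 - c}).indicator 1 := by
      ext p
      rcases p with ⟨s, u⟩
      rw [Function.uncurry_apply_pair, Set.indicator_apply, Set.indicator_apply]
      refine if_congr ?_ rfl rfl
      simp only [Set.mem_Ico, Set.mem_setOf_eq]
    rw [this]
    refine (Measurable.indicator measurable_const ?_).aemeasurable
    rw [Set.setOf_and]
    exact (measurableSet_le (hψ.comp measurable_fst) measurable_snd).inter
      (measurableSet_lt measurable_snd ((hφ.comp measurable_fst).sub measurable_const))

variable {g h : ℝ → ℝ} {m M : ℝ}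

lemma hinge1 (hg : Measurable g) (hgm : ∀ t ∈ Set.Icc (0:ℝ) 1, g t ∈ Set.Icc m M)
    (hh : Measurable h) (hmono : MonotoneOn h (Set.Icc (0:ℝ) 1)) (c : ℝ) :
    ∫⁻ s in Set.Ioc (0:ℝ) 1, ENNReal.ofReal (rearr1 g s - h s - c)
      ≤ ∫⁻ s in Set.Ioc (0:ℝ) 1, ENNReal.ofReal (g s - h s - c) := by
  rw [layer (measurable_rearr1 hg hgm) hh c, layer hg hh c]
  exact lintegral_mono fun u => key1_s12 hg hgm hmono (u + c) u

lemma hinge2 (hg : Measurable g) (hgm : ∀ t ∈ Set.Icc (0:ℝ) 1, g t ∈ Set.Icc m M)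
    (hh : Measurable h) (hmono : MonotoneOn h (Set.Icc (0:ℝ) 1)) (c : ℝ) :
    ∫⁻ s in Set.Ioc (0:ℝ) 1, ENNReal.ofReal (h s - rearr1 g s - c)
      ≤ ∫⁻ s in Set.Ioc (0:ℝ) 1, ENNReal.ofReal (h s - g s - c) := by
  rw [layer hh (measurable_rearr1 hg hgm) c, layer hh hg c]
  exact lintegral_mono fun u => key2_s12 hg hgm hmono (u + c) u

end Layer


section Rpow

open intervalIntegral

lemma abs_rpow_layer {p : ℝ} (hp : 1 < p) (x : ℝ) :
    ENNReal.ofReal (|x| ^ p) = ∫⁻ c in Set.Ioi (0:ℝ),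
      ENNReal.ofReal (p * (p - 1) * c ^ (p - 2)) *
        (ENNReal.ofReal (x - c) + ENNReal.ofReal (-x - c)) := by
  set A := |x| with hA
  have hA0 : 0 ≤ A := abs_nonneg x
  have hstep : ∀ c ∈ Set.Ioi (0:ℝ),
      ENNReal.ofReal (p * (p - 1) * c ^ (p - 2)) *
        (ENNReal.ofReal (x - c) + ENNReal.ofReal (-x - c))
      = ENNReal.ofReal ((p * (p - 1) * c ^ (p - 2)) * (A - c)) := by
    intro c hc
    rw [Set.mem_Ioi] at hc
    have hw : 0 ≤ p * (p - 1) * c ^ (p - 2) :=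
      mul_nonneg (mul_nonneg (by linarith) (by linarith)) (Real.rpow_nonneg hc.le _)
    have hval : ENNReal.ofReal (x - c) + ENNReal.ofReal (-x - c) = ENNReal.ofReal (A - c) := by
      rcases abs_cases x with ⟨h1, h2⟩ | ⟨h1, h2⟩
      · rw [hA, h1, ENNReal.ofReal_eq_zero.mpr (by linarith : -x - c ≤ 0), add_zero]
      · rw [hA, h1, ENNReal.ofReal_eq_zero.mpr (by linarith : x - c ≤ 0), zero_add]
    rw [hval, ← ENNReal.ofReal_mul hw]
  rw [setLIntegral_congr_fun_ae measurableSet_Ioi (Filter.Eventually.of_forall hstep)]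
  rw [← Set.Ioc_union_Ioi_eq_Ioi hA0, lintegral_union measurableSet_Ioi (Set.Ioc_disjoint_Ioi le_rfl)]
  have hIoiA : ∫⁻ c in Set.Ioi A, ENNReal.ofReal ((p * (p - 1) * c ^ (p - 2)) * (A - c)) = 0 := by
    rw [setLIntegral_congr_fun_ae measurableSet_Ioi (Filter.Eventually.of_forall
      (fun c hc => ?_)), lintegral_zero]
    rw [Set.mem_Ioi] at hc
    have hc0 : (0:ℝ) < c := lt_of_le_of_lt hA0 hc
    have hw : 0 ≤ p * (p - 1) * c ^ (p - 2) :=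
      mul_nonneg (mul_nonneg (by linarith) (by linarith)) (Real.rpow_nonneg hc0.le _)
    exact ENNReal.ofReal_eq_zero.mpr (mul_nonpos_of_nonneg_of_nonpos hw (by linarith))
  rw [hIoiA, add_zero]
  have hint : IntegrableOn (fun c : ℝ => (p * (p - 1) * c ^ (p - 2)) * (A - c))
      (Set.Ioc 0 A) volume := by
    have h1 : IntervalIntegrable (fun c : ℝ => c ^ (p - 2)) volume 0 A :=
      intervalIntegral.intervalIntegrable_rpow' (by linarith)
    have h2 : IntervalIntegrable (fun c : ℝ => c ^ (p - 2) * (p * (p - 1) * (A - c)))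
        volume 0 A := h1.mul_continuousOn (by fun_prop)
    have h3 := (intervalIntegrable_iff_integrableOn_Ioc_of_le hA0).mp h2
    refine h3.congr_fun (fun c _ => by ring) measurableSet_Ioc
  have hnonneg : 0 ≤ᵐ[volume.restrict (Set.Ioc 0 A)]
      fun c : ℝ => (p * (p - 1) * c ^ (p - 2)) * (A - c) := by
    refine (ae_restrict_iff' measurableSet_Ioc).mpr (Filter.Eventually.of_forall ?_)
    intro c hc
    simp only [Pi.zero_apply]
    have hw : 0 ≤ p * (p - 1) * c ^ (p - 2) :=
      mul_nonneg (mul_nonneg (by linarith) (by linarith)) (Real.rpow_nonneg hc.1.le _)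
    exact mul_nonneg hw (by linarith [hc.2])
  rw [← MeasureTheory.ofReal_integral_eq_lintegral_ofReal hint hnonneg]
  congr 1
  have heval : ∫ c in Set.Ioc (0:ℝ) A, (p * (p - 1) * c ^ (p - 2)) * (A - c) = A ^ p := by
    rw [← intervalIntegral.integral_of_le hA0]
    have heq : Set.EqOn (fun c : ℝ => (p * (p - 1) * c ^ (p - 2)) * (A - c))
        (fun c : ℝ => (p * (p - 1) * A) * c ^ (p - 2) - (p * (p - 1)) * c ^ (p - 1))
        (Set.uIcc 0 A) := by
      intro c hc
      rw [Set.uIcc_of_le hA0] at hc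
      rcases eq_or_lt_of_le hc.1 with hc0 | hc0
      · simp only [← hc0]
        rw [Real.zero_rpow (by linarith : p - 1 ≠ 0)]
        ring
      · have hcc : c ^ (p - 1) = c ^ (p - 2) * c := by
          rw [show p - 1 = p - 2 + 1 by ring, Real.rpow_add_one (ne_of_gt hc0)]
        simp only [hcc]
        ring
    rw [intervalIntegral.integral_congr heq]
    have hi1 : IntervalIntegrable (fun c : ℝ => (p * (p - 1) * A) * c ^ (p - 2)) volume 0 A :=
      (intervalIntegral.intervalIntegrable_rpow' (by linarith : (-1:ℝ) < p - 2)).const_mul _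
    have hi2 : IntervalIntegrable (fun c : ℝ => (p * (p - 1)) * c ^ (p - 1)) volume 0 A :=
      (intervalIntegral.intervalIntegrable_rpow' (by linarith : (-1:ℝ) < p - 1)).const_mul _
    rw [intervalIntegral.integral_sub hi1 hi2, intervalIntegral.integral_const_mul,
      intervalIntegral.integral_const_mul,
      integral_rpow (Or.inl (by linarith : (-1:ℝ) < p - 2)),
      integral_rpow (Or.inl (by linarith : (-1:ℝ) < p - 1))]
    have e1 : p - 2 + 1 = p - 1 := by ring
    have e2 : p - 1 + 1 = p := by ring
    rw [e1, e2, Real.zero_rpow (by linarith : p - 1 ≠ 0), Real.zero_rpow (by linarith : p ≠ 0)]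
    rcases eq_or_lt_of_le hA0 with hA0' | hA0'
    · rw [← hA0', Real.zero_rpow (by linarith : p - 1 ≠ 0),
        Real.zero_rpow (by linarith : p ≠ 0)]
      ring
    · have hAp : A ^ p = A * A ^ (p - 1) := by
        have h' := Real.rpow_add hA0' 1 (p - 1)
        rw [show (1:ℝ) + (p - 1) = p by ring, Real.rpow_one] at h'
        exact h'
      have hp0 : p ≠ 0 := by linarith
      have hp1' : p - 1 ≠ 0 := by linarith
      rw [hAp]
      field_simp
      ring
  rw [heval]

end Rpow


section OneDim

variable {g h : ℝ → ℝ} {m M : ℝ}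

lemma oneDim (hg : Measurable g) (hgm : ∀ t ∈ Set.Icc (0:ℝ) 1, g t ∈ Set.Icc m M)
    (hh : Measurable h) (hmono : MonotoneOn h (Set.Icc (0:ℝ) 1)) {p : ℝ} (hp : 1 ≤ p) :
    ∫⁻ s in Set.Ioc (0:ℝ) 1, ENNReal.ofReal (|rearr1 g s - h s| ^ p)
      ≤ ∫⁻ s in Set.Ioc (0:ℝ) 1, ENNReal.ofReal (|g s - h s| ^ p) := by
  have hr : Measurable (rearr1 g) := measurable_rearr1 hg hgm
  rcases eq_or_lt_of_le hp with hp1 | hp1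
  · -- p = 1
    have habs : ∀ a b : ℝ, ENNReal.ofReal (|a - b| ^ p) =
        ENNReal.ofReal (a - b - 0) + ENNReal.ofReal (b - a - 0) := by
      intro a b
      rw [← hp1, Real.rpow_one, sub_zero, sub_zero]
      rcases le_total a b with hab | hab
      · rw [abs_of_nonpos (by linarith),
          ENNReal.ofReal_eq_zero.mpr (by linarith : a - b ≤ 0), zero_add, neg_sub]
      · rw [abs_of_nonneg (by linarith),
          ENNReal.ofReal_eq_zero.mpr (by linarith : b - a ≤ 0), add_zero]
    simp_rw [habs]
    rw [lintegral_add_left (by fun_prop), lintegral_add_left (by fun_prop)]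
    exact add_le_add (hinge1 hg hgm hh hmono 0) (hinge2 hg hgm hh hmono 0)
  · -- 1 < p
    simp_rw [abs_rpow_layer hp1, neg_sub]
    have key : ∀ φ ψ : ℝ → ℝ, Measurable φ → Measurable ψ →
        (∫⁻ s in Set.Ioc (0:ℝ) 1, ∫⁻ c in Set.Ioi (0:ℝ),
          ENNReal.ofReal (p * (p - 1) * c ^ (p - 2)) *
            (ENNReal.ofReal (φ s - ψ s - c) + ENNReal.ofReal (ψ s - φ s - c)))
        = ∫⁻ c in Set.Ioi (0:ℝ),
            ENNReal.ofReal (p * (p - 1) * c ^ (p - 2)) *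
              ((∫⁻ s in Set.Ioc (0:ℝ) 1, ENNReal.ofReal (φ s - ψ s - c)) +
               (∫⁻ s in Set.Ioc (0:ℝ) 1, ENNReal.ofReal (ψ s - φ s - c))) := by
      intro φ ψ hφ hψ
      rw [lintegral_lintegral_swap (by fun_prop)]
      refine lintegral_congr fun c => ?_
      rw [lintegral_const_mul' _ _ ENNReal.ofReal_ne_top,
        lintegral_add_left (by fun_prop)]
    have hL := key (rearr1 g) h hr hh
    have hR := key g h hg hh
    rw [hL, hR]
    refine lintegral_mono fun c => ?_
    exact mul_le_mul_right
      (add_le_add (hinge1 hg hgm hh hmono c) (hinge2 hg hgm hh hmono c)) _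

end OneDim


section Global

lemma measurable_rearrCoord {d : ℕ} (j : Fin d) (f : (Fin d → ℝ) → ℝ) (hf : Measurable f) :
    Measurable (rearrCoord j f) := by
  classical
  have hGx : ∀ y : ℝ, Measurable fun x : Fin d → ℝ => distF (fun t => f (Function.update x j t)) y := by
    intro y
    have hA : MeasurableSet {q : (Fin d → ℝ) × ℝ |
        q.2 ∈ Set.Icc (0:ℝ) 1 ∧ f (Function.update q.1 j q.2) ≤ y} := by
      rw [Set.setOf_and]
      exact (measurable_snd measurableSet_Icc).inter
        ((hf.comp measurable_update') measurableSet_Iic)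
    exact measurable_measure_prodMk_left hA
  set S : (Fin d → ℝ) → Set ℝ := fun x =>
    {y : ℝ | x j ≤ (distF (fun t => f (Function.update x j t)) y).toReal} with hSdef
  set E : Set (Fin d → ℝ) := {x | (∃ q : ℚ, x j ≤ (distF (fun t => f (Function.update x j t)) (q:ℝ)).toReal)
      ∧ (∃ q : ℚ, (distF (fun t => f (Function.update x j t)) (q:ℝ)).toReal < x j)} with hEdef
  have hEmeas : MeasurableSet E := by
    rw [hEdef, Set.setOf_and]
    refine MeasurableSet.inter ?_ ?_
    · rw [Set.setOf_exists]
      exact MeasurableSet.iUnion fun q =>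
        measurableSet_le (measurable_pi_apply j) (hGx (q:ℝ)).ennreal_toReal
    · rw [Set.setOf_exists]
      exact MeasurableSet.iUnion fun q =>
        measurableSet_lt (hGx (q:ℝ)).ennreal_toReal (measurable_pi_apply j)
  have hE_iff : ∀ x, x ∈ E ↔ (S x).Nonempty ∧ BddBelow (S x) := by
    intro x
    constructor
    · rintro ⟨⟨q1, h1⟩, ⟨q2, h2⟩⟩
      refine ⟨⟨(q1:ℝ), h1⟩, ⟨(q2:ℝ), fun y hy => ?_⟩⟩
      by_contra hlt
      push_neg at hlt
      exact absurd (upClosed hy hlt.le) (not_le.mpr h2)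
    · rintro ⟨⟨y0, hy0⟩, ⟨b, hb⟩⟩
      constructor
      · obtain ⟨q, hq⟩ := exists_rat_gt y0
        exact ⟨q, upClosed hy0 hq.le⟩
      · obtain ⟨q, hq⟩ := exists_rat_lt b
        refine ⟨q, ?_⟩
        by_contra hle
        push_neg at hle
        exact absurd (hb hle) (not_le.mpr hq)
  apply measurable_of_Iic
  intro a
  have hset : rearrCoord j f ⁻¹' Set.Iic a =
      (E ∩ {x | x j ≤ (distF (fun t => f (Function.update x j t)) a).toReal}) ∪
        (Eᶜ ∩ {x : Fin d → ℝ | (0:ℝ) ≤ a}) := by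
    ext x
    have hco : rearrCoord j f x = rearr1 (fun t => f (Function.update x j t)) (x j) :=
      rearrCoord_eq j f x
    by_cases hx : x ∈ E
    · obtain ⟨hne, hbdd⟩ := (hE_iff x).mp hx
      simp only [Set.mem_preimage, Set.mem_Iic, Set.mem_union, Set.mem_inter_iff, hx,
        Set.mem_compl_iff, not_true, false_and, or_false, true_and, Set.mem_setOf_eq, hco]
      exact rearr1_le_iff (hf.comp (measurable_update x)) hne hbdd a
    · have hjunk : rearr1 (fun t => f (Function.update x j t)) (x j) = 0 := by
        rcases (not_and_or.mp (fun hc => hx ((hE_iff x).mpr hc))) with hne | hbdd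
        · rw [rearr1]
          show sInf (S x) = 0
          rw [Set.not_nonempty_iff_eq_empty.mp hne, Real.sInf_empty]
        · exact Real.sInf_of_not_bddBelow hbdd
      simp only [Set.mem_preimage, Set.mem_Iic, Set.mem_union, Set.mem_inter_iff, hx,
        Set.mem_compl_iff, not_false_iff, true_and, false_and, false_or, Set.mem_setOf_eq,
        hco, hjunk]
  rw [hset]
  exact (hEmeas.inter (measurableSet_le (measurable_pi_apply j) (hGx a).ennreal_toReal)).union
    (hEmeas.compl.inter (MeasurableSet.const _))

end Global

end RearrAux

open scoped ENNReal in
open RearrAux in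
/-- Rearrangement along the `j`-th coordinate weakly reduces the `L^p` estimation
error against a weakly increasing target, for `p ∈ [1,∞)`. -/
theorem rearrCoord_reduces_Lp_error {d : ℕ} (j : Fin d) (K : Set ℝ)
    (hK : Bornology.IsBounded K)
    (f₀ fbar : (Fin d → ℝ) → ℝ)
    (hf₀K : ∀ x ∈ Set.Icc (0 : Fin d → ℝ) 1, f₀ x ∈ K)
    (hfbarK : ∀ x ∈ Set.Icc (0 : Fin d → ℝ) 1, fbar x ∈ K)
    (hf₀mono : MonotoneOn f₀ (Set.Icc (0 : Fin d → ℝ) 1))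
    (hf₀meas : Measurable f₀) (hfbarmeas : Measurable fbar)
    (p : ℝ) (hp : 1 ≤ p) :
    (∫ x in Set.Icc (0 : Fin d → ℝ) 1, |rearrCoord j fbar x - f₀ x| ^ p) ^ (1 / p) ≤
      (∫ x in Set.Icc (0 : Fin d → ℝ) 1, |fbar x - f₀ x| ^ p) ^ (1 / p) := by
  classical
  obtain ⟨C, hC⟩ : ∃ C : ℝ, K ⊆ Set.Icc (-C) C := by
    obtain ⟨r, hr⟩ := hK.subset_closedBall 0
    refine ⟨r, ?_⟩
    intro y hy
    have := hr hy
    rw [Real.closedBall_eq_Icc] at this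
    simpa using this
  set Q := Set.Icc (0 : Fin d → ℝ) 1 with hQdef
  have hQmeas : MeasurableSet Q := measurableSet_Icc
  have h0Q : (0 : Fin d → ℝ) ∈ Q := by
    rw [hQdef, Set.mem_Icc]
    exact ⟨le_refl _, fun i => zero_le_one⟩
  have hC0 : 0 ≤ C := by
    have := hC (hf₀K 0 h0Q)
    rw [Set.mem_Icc] at this
    linarith [this.1, this.2]
  have hrmeas : Measurable (rearrCoord j fbar) := measurable_rearrCoord j fbar hfbarmeas
  have hmeas1 : Measurable fun x => |rearrCoord j fbar x - f₀ x| ^ p := by fun_prop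
  have hmeas2 : Measurable fun x => |fbar x - f₀ x| ^ p := by fun_prop
  have hnn1 : (0 : (Fin d → ℝ) → ℝ) ≤ᵐ[volume.restrict Q]
      fun x => |rearrCoord j fbar x - f₀ x| ^ p :=
    Filter.Eventually.of_forall fun x => Real.rpow_nonneg (abs_nonneg _) _
  have hnn2 : (0 : (Fin d → ℝ) → ℝ) ≤ᵐ[volume.restrict Q] fun x => |fbar x - f₀ x| ^ p :=
    Filter.Eventually.of_forall fun x => Real.rpow_nonneg (abs_nonneg _) _
  rw [integral_eq_lintegral_of_nonneg_ae hnn1 hmeas1.aestronglyMeasurable,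
    integral_eq_lintegral_of_nonneg_ae hnn2 hmeas2.aestronglyMeasurable]
  have hfin : (∫⁻ x in Q, ENNReal.ofReal (|fbar x - f₀ x| ^ p)) ≠ ⊤ := by
    have hb : ∀ x ∈ Q, ENNReal.ofReal (|fbar x - f₀ x| ^ p)
        ≤ ENNReal.ofReal ((2 * C) ^ p) := by
      intro x hx
      apply ENNReal.ofReal_le_ofReal
      apply Real.rpow_le_rpow (abs_nonneg _) ?_ (by linarith)
      have h1 := hC (hfbarK x hx); have h2 := hC (hf₀K x hx)
      rw [Set.mem_Icc] at h1 h2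
      rw [abs_le]
      constructor <;> [linarith [h1.1, h2.2]; linarith [h1.2, h2.1]]
    have hlt : (∫⁻ x in Q, ENNReal.ofReal (|fbar x - f₀ x| ^ p)) < ⊤ :=
      calc (∫⁻ x in Q, ENNReal.ofReal (|fbar x - f₀ x| ^ p))
          ≤ ∫⁻ _ in Q, ENNReal.ofReal ((2 * C) ^ p) := setLIntegral_mono measurable_const hb
        _ = ENNReal.ofReal ((2 * C) ^ p) * volume Q := setLIntegral_const _ _
        _ < ⊤ := ENNReal.mul_lt_top ENNReal.ofReal_lt_top (isCompact_Icc.measure_lt_top)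
    exact hlt.ne
  refine Real.rpow_le_rpow ENNReal.toReal_nonneg (ENNReal.toReal_mono hfin ?_)
    (div_nonneg zero_le_one (by linarith))
  -- main lintegral inequality via marginals
  set F : (Fin d → ℝ) → ℝ≥0∞ :=
    Q.indicator (fun x => ENNReal.ofReal (|rearrCoord j fbar x - f₀ x| ^ p)) with hFdef
  set G : (Fin d → ℝ) → ℝ≥0∞ :=
    Q.indicator (fun x => ENNReal.ofReal (|fbar x - f₀ x| ^ p)) with hGdef
  have hFmeas : Measurable F := (hmeas1.ennreal_ofReal).indicator hQmeas
  have hGmeas : Measurable G := (hmeas2.ennreal_ofReal).indicator hQmeas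
  have hslice : ∀ x : Fin d → ℝ,
      (∫⁻ t, F (Function.update x j t) ∂volume) ≤ ∫⁻ t, G (Function.update x j t) ∂volume := by
    intro x
    by_cases hx : ∀ i, i ≠ j → x i ∈ Set.Icc (0:ℝ) 1
    · have hmem : ∀ t : ℝ, Function.update x j t ∈ Q ↔ t ∈ Set.Icc (0:ℝ) 1 := by
        intro t
        rw [hQdef, Set.mem_Icc]
        constructor
        · intro hmemQ
          have h1 := hmemQ.1 j
          have h2 := hmemQ.2 j
          rw [Function.update_self] at h1 h2
          exact ⟨h1, h2⟩
        · intro ht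
          constructor <;> intro i <;> rcases eq_or_ne i j with rfl | hij
          · rw [Function.update_self]; exact ht.1
          · rw [Function.update_of_ne hij]; exact (hx i hij).1
          · rw [Function.update_self]; exact ht.2
          · rw [Function.update_of_ne hij]; exact (hx i hij).2
      set gs : ℝ → ℝ := fun t => fbar (Function.update x j t) with hgsdef
      set hs : ℝ → ℝ := fun t => f₀ (Function.update x j t) with hhsdef
      have hgs : Measurable gs := hfbarmeas.comp (measurable_update x)
      have hhs : Measurable hs := hf₀meas.comp (measurable_update x)
      have hrs : ∀ t : ℝ, rearrCoord j fbar (Function.update x j t) = rearr1 gs t := by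
        intro t
        rw [rearrCoord_eq]
        simp only [Function.update_self, Function.update_idem]
        rfl
      have hFeq : (fun t : ℝ => F (Function.update x j t))
          = (Set.Icc (0:ℝ) 1).indicator (fun t => ENNReal.ofReal (|rearr1 gs t - hs t| ^ p)) := by
        funext t
        by_cases ht : t ∈ Set.Icc (0:ℝ) 1
        · rw [hFdef, Set.indicator_of_mem ((hmem t).mpr ht), Set.indicator_of_mem ht, hrs t]
        · rw [hFdef, Set.indicator_of_notMem (fun hc => ht ((hmem t).mp hc)),
            Set.indicator_of_notMem ht]
      have hGeq : (fun t : ℝ => G (Function.update x j t))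
          = (Set.Icc (0:ℝ) 1).indicator (fun t => ENNReal.ofReal (|gs t - hs t| ^ p)) := by
        funext t
        by_cases ht : t ∈ Set.Icc (0:ℝ) 1
        · rw [hGdef, Set.indicator_of_mem ((hmem t).mpr ht), Set.indicator_of_mem ht]
        · rw [hGdef, Set.indicator_of_notMem (fun hc => ht ((hmem t).mp hc)),
            Set.indicator_of_notMem ht]
      rw [hFeq, hGeq, lintegral_indicator measurableSet_Icc, lintegral_indicator measurableSet_Icc,
        ← Measure.restrict_congr_set Ioc_ae_eq_Icc]
      refine oneDim (m := -C) (M := C) hgs ?_ hhs ?_ hp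
      · intro t ht
        exact hC (hfbarK _ ((hmem t).mpr ht))
      · intro t ht t' ht' htt'
        refine hf₀mono ((hmem t).mpr ht) ((hmem t').mpr ht') ?_
        intro i
        rcases eq_or_ne i j with rfl | hij
        · rw [Function.update_self, Function.update_self]; exact htt'
        · rw [Function.update_of_ne hij, Function.update_of_ne hij]
    · push_neg at hx
      obtain ⟨i, hij, hxi⟩ := hx
      have hzero : ∀ t : ℝ, F (Function.update x j t) = 0 := by
        intro t
        rw [hFdef]
        apply Set.indicator_of_notMem
        intro hmemQ
        rw [hQdef, Set.mem_Icc] at hmemQ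
        have h1 := hmemQ.1 i
        have h2 := hmemQ.2 i
        rw [Function.update_of_ne hij] at h1 h2
        exact hxi ⟨h1, h2⟩
      simp only [hzero, lintegral_zero]
      exact zero_le
  have calcF : (∫⁻ x in Q, ENNReal.ofReal (|rearrCoord j fbar x - f₀ x| ^ p))
      = (∫⋯∫⁻_(Finset.univ.erase j),
          (fun x => ∫⁻ t, F (Function.update x j t) ∂volume)
          ∂(fun _ : Fin d => (volume : Measure ℝ))) 0 := by
    rw [← lintegral_indicator hQmeas, ← hFdef, volume_pi,
      lintegral_eq_lmarginal_univ (0 : Fin d → ℝ),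
      lmarginal_erase' _ hFmeas (Finset.mem_univ j)]
  have calcG : (∫⁻ x in Q, ENNReal.ofReal (|fbar x - f₀ x| ^ p))
      = (∫⋯∫⁻_(Finset.univ.erase j),
          (fun x => ∫⁻ t, G (Function.update x j t) ∂volume)
          ∂(fun _ : Fin d => (volume : Measure ℝ))) 0 := by
    rw [← lintegral_indicator hQmeas, ← hGdef, volume_pi,
      lintegral_eq_lmarginal_univ (0 : Fin d → ℝ),
      lmarginal_erase' _ hGmeas (Finset.mem_univ j)]
  rw [calcF, calcG]
  exact lmarginal_mono (fun x => hslice x) 0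
end

section
/- Let f₀ : [0,1]^d → K be weakly increasing and measurable, f̂ : [0,1]^d → K measurable, and π a permutation of {1,…,d}. Then the π-rearranged estimate f̂*_π = R_{π₁} ⋯ R_{π_d} f̂ satisfies, for every p ∈ [1,∞): (∫ |f̂*_π(x) − f₀(x)|^p dx)^{1/p} ≤ (∫ |f̂(x) − f₀(x)|^p dx)^{1/p}. -/
open MeasureTheory

/-- The `π`-rearrangement `R_{π₁} ∘ ⋯ ∘ R_{π_d}`. -/
noncomputable def rearrPerm {d : ℕ} (π : Equiv.Perm (Fin d))
    (f : (Fin d → ℝ) → ℝ) : (Fin d → ℝ) → ℝ :=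
  (List.ofFn (fun i => π i)).foldr (fun j g => rearrCoord j g) f

namespace Rearr

open Set ENNReal Filter Topology

/-! ### One-dimensional theory: cdf and quantile -/

noncomputable def ecdf (g : ℝ → ℝ) (y : ℝ) : ℝ≥0∞ :=
  volume (Set.Icc (0:ℝ) 1 ∩ {t | g t ≤ y})

noncomputable def cdf (g : ℝ → ℝ) (y : ℝ) : ℝ := (ecdf g y).toReal

noncomputable def Q (g : ℝ → ℝ) (s : ℝ) : ℝ := sInf {y | s ≤ cdf g y}

lemma rearrCoord_eq_Q {d} (j : Fin d) (f : (Fin d → ℝ) → ℝ) (x : Fin d → ℝ) :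
    rearrCoord j f x = Q (fun t => f (Function.update x j t)) (x j) := rfl

lemma ecdf_ne_top (g : ℝ → ℝ) (y : ℝ) : ecdf g y ≠ ∞ :=
  ((measure_mono inter_subset_left).trans_lt
    (by rw [Real.volume_Icc]; exact ofReal_lt_top)).ne

lemma ecdf_le_one (g : ℝ → ℝ) (y : ℝ) : ecdf g y ≤ 1 := by
  refine (measure_mono inter_subset_left).trans ?_
  rw [Real.volume_Icc]
  simp

lemma ecdf_mono (g : ℝ → ℝ) : Monotone (ecdf g) := fun y z hyz =>
  measure_mono (inter_subset_inter_right _ fun t ht => le_trans ht hyz)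

lemma cdf_nonneg (g : ℝ → ℝ) (y : ℝ) : 0 ≤ cdf g y := toReal_nonneg

lemma cdf_le_one (g : ℝ → ℝ) (y : ℝ) : cdf g y ≤ 1 := by
  have := ENNReal.toReal_mono one_ne_top (ecdf_le_one g y)
  simpa [cdf] using this

lemma le_cdf_iff {g : ℝ → ℝ} {s y : ℝ} :
    s ≤ cdf g y ↔ ENNReal.ofReal s ≤ ecdf g y :=
  (ENNReal.ofReal_le_iff_le_toReal (ecdf_ne_top g y)).symm

variable {C : ℝ} {g h : ℝ → ℝ}

lemma ecdf_eq_one (hgB : ∀ t ∈ Set.Icc (0:ℝ) 1, g t ∈ Set.Icc (-C) C)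
    {y : ℝ} (hy : C ≤ y) : ecdf g y = 1 := by
  have h1 : Set.Icc (0:ℝ) 1 ∩ {t | g t ≤ y} = Set.Icc (0:ℝ) 1 :=
    inter_eq_left.mpr fun t ht => le_trans (hgB t ht).2 hy
  rw [ecdf, h1, Real.volume_Icc]
  simp

lemma cdf_eq_one (hgB : ∀ t ∈ Set.Icc (0:ℝ) 1, g t ∈ Set.Icc (-C) C)
    {y : ℝ} (hy : C ≤ y) : cdf g y = 1 := by
  rw [cdf, ecdf_eq_one hgB hy]
  simp

lemma ecdf_eq_zero (hgB : ∀ t ∈ Set.Icc (0:ℝ) 1, g t ∈ Set.Icc (-C) C)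
    {y : ℝ} (hy : y < -C) : ecdf g y = 0 := by
  rw [ecdf]
  convert measure_empty (μ := (volume : Measure ℝ))
  ext t
  simp only [mem_inter_iff, mem_setOf_eq, mem_empty_iff_false, iff_false, not_and]
  intro ht hgt
  exact absurd hgt (not_le.2 (lt_of_lt_of_le hy (hgB t ht).1))

lemma tendsto_ecdf (hg : Measurable g) (y : ℝ) :
    Tendsto (fun n : ℕ => ecdf g (y + ((n : ℝ) + 1)⁻¹)) atTop (𝓝 (ecdf g y)) := by
  have hiter : ⋂ n : ℕ, (Icc (0:ℝ) 1 ∩ {t | g t ≤ y + ((n : ℝ) + 1)⁻¹})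
      = Icc (0:ℝ) 1 ∩ {t | g t ≤ y} := by
    ext t
    simp only [mem_iInter, mem_inter_iff, mem_setOf_eq]
    constructor
    · intro H
      refine ⟨(H 0).1, ?_⟩
      by_contra hlt
      push_neg at hlt
      obtain ⟨n, hn⟩ := exists_nat_one_div_lt (sub_pos.mpr hlt)
      have h2 := (H n).2
      rw [one_div] at hn
      linarith
    · rintro ⟨ht, hgt⟩ n
      exact ⟨ht, le_trans hgt (le_add_of_nonneg_right (by positivity))⟩
  have h := tendsto_measure_iInter_atTop (μ := (volume : Measure ℝ))
    (s := fun n : ℕ => Icc (0:ℝ) 1 ∩ {t | g t ≤ y + ((n : ℝ) + 1)⁻¹})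
    (fun n => (measurableSet_Icc.inter (measurableSet_le hg measurable_const)).nullMeasurableSet)
    (fun n m hnm => inter_subset_inter_right _ fun t ht => by
      simp only [mem_setOf_eq] at ht ⊢
      have hmn : ((m : ℝ) + 1)⁻¹ ≤ ((n : ℝ) + 1)⁻¹ := by
        apply inv_anti₀ (by positivity)
        exact_mod_cast Nat.add_le_add_right hnm 1
      linarith)
    ⟨0, ecdf_ne_top g _⟩
  rw [hiter] at h
  exact h

lemma Qset_nonempty (hgB : ∀ t ∈ Set.Icc (0:ℝ) 1, g t ∈ Set.Icc (-C) C)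
    {s : ℝ} (hs1 : s ≤ 1) : C ∈ {y | s ≤ cdf g y} := by
  simp only [mem_setOf_eq]
  rw [cdf_eq_one hgB le_rfl]
  exact hs1

lemma Qset_bddBelow (hgB : ∀ t ∈ Set.Icc (0:ℝ) 1, g t ∈ Set.Icc (-C) C)
    {s : ℝ} (hs : 0 < s) : {y | s ≤ cdf g y} ⊆ Ici (-C) := by
  intro y hy
  simp only [mem_setOf_eq] at hy
  by_contra hlt
  rw [mem_Ici, not_le] at hlt
  rw [cdf, ecdf_eq_zero hgB hlt] at hy
  simp at hy
  linarith

lemma Q_le_iff (hg : Measurable g) (hgB : ∀ t ∈ Set.Icc (0:ℝ) 1, g t ∈ Set.Icc (-C) C)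
    {s y : ℝ} (hs : 0 < s) (hs1 : s ≤ 1) : Q g s ≤ y ↔ s ≤ cdf g y := by
  have hne : Set.Nonempty {y | s ≤ cdf g y} := ⟨C, Qset_nonempty hgB hs1⟩
  have hbb : BddBelow {y | s ≤ cdf g y} := ⟨-C, fun y hy => Qset_bddBelow hgB hs hy⟩
  constructor
  · intro hQ
    rw [le_cdf_iff]
    refine ge_of_tendsto (tendsto_ecdf hg y) (Eventually.of_forall fun n => ?_)
    have hpos : (0:ℝ) < ((n : ℝ) + 1)⁻¹ := by positivity
    have hlt : Q g s < y + ((n : ℝ) + 1)⁻¹ := lt_of_le_of_lt hQ (by linarith)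
    obtain ⟨y', hy'S, hy'lt⟩ := (csInf_lt_iff hbb hne).1 hlt
    exact le_trans (le_cdf_iff.1 hy'S) (ecdf_mono g (le_of_lt hy'lt))
  · intro hcdf
    exact csInf_le hbb hcdf

lemma Q_mem (hgB : ∀ t ∈ Set.Icc (0:ℝ) 1, g t ∈ Set.Icc (-C) C)
    {s : ℝ} (hs : 0 < s) (hs1 : s ≤ 1) : Q g s ∈ Set.Icc (-C) C := by
  have hne : Set.Nonempty {y | s ≤ cdf g y} := ⟨C, Qset_nonempty hgB hs1⟩
  have hbb : BddBelow {y | s ≤ cdf g y} := ⟨-C, fun y hy => Qset_bddBelow hgB hs hy⟩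
  constructor
  · exact le_csInf hne fun b hb => Qset_bddBelow hgB hs hb
  · exact csInf_le hbb (Qset_nonempty hgB hs1)

lemma Q_of_nonpos {g : ℝ → ℝ} {s : ℝ} (hs : s ≤ 0) : Q g s = 0 := by
  rw [Q]
  have hU : {y | s ≤ cdf g y} = univ := eq_univ_of_forall fun y => le_trans hs (cdf_nonneg g y)
  rw [hU]
  apply Real.sInf_of_not_bddBelow
  rintro ⟨b, hb⟩
  have := hb (mem_univ (b - 1))
  linarith

lemma Q_of_gt_one {g : ℝ → ℝ} {s : ℝ} (hs : 1 < s) : Q g s = 0 := by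
  rw [Q]
  have hE : {y | s ≤ cdf g y} = ∅ := eq_empty_iff_forall_notMem.2 fun y hy =>
    absurd (le_trans hy (cdf_le_one g y)) (not_le.2 hs)
  rw [hE, Real.sInf_empty]

/-- A globally-defined monotone version of the quantile function. -/
noncomputable def Qext (C : ℝ) (g : ℝ → ℝ) : ℝ → ℝ := fun s =>
  if s ≤ 0 then -C else Q g (min s 1)

lemma Qext_eq {s : ℝ} (hs : s ∈ Ioc (0:ℝ) 1) : Qext C g s = Q g s := by
  rw [Qext, if_neg (not_le.2 hs.1), min_eq_left hs.2]

lemma Qext_monotone (hgB : ∀ t ∈ Set.Icc (0:ℝ) 1, g t ∈ Set.Icc (-C) C) :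
    Monotone (Qext C g) := by
  intro a b hab
  rcases le_or_gt a 0 with ha | ha
  · rcases le_or_gt b 0 with hb | hb
    · rw [Qext, Qext, if_pos ha, if_pos hb]
    · rw [Qext, Qext, if_pos ha, if_neg (not_le.2 hb)]
      exact (Q_mem hgB (lt_min hb one_pos) (min_le_right _ _)).1
  · have hb : 0 < b := lt_of_lt_of_le ha hab
    rw [Qext, if_neg (not_le.2 ha), Qext, if_neg (not_le.2 hb)]
    apply csInf_le_csInf ⟨-C, fun y hy => Qset_bddBelow hgB (lt_min ha one_pos) hy⟩
      ⟨C, Qset_nonempty hgB (min_le_right _ _)⟩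
    intro y hy
    simp only [mem_setOf_eq] at hy ⊢
    exact le_trans (min_le_min hab le_rfl) hy

lemma Qext_measurable (hgB : ∀ t ∈ Set.Icc (0:ℝ) 1, g t ∈ Set.Icc (-C) C) :
    Measurable (Qext C g) := (Qext_monotone hgB).measurable

lemma Qext_mem (hC : 0 ≤ C) (hgB : ∀ t ∈ Set.Icc (0:ℝ) 1, g t ∈ Set.Icc (-C) C)
    (s : ℝ) : Qext C g s ∈ Set.Icc (-C) C := by
  rcases le_or_gt s 0 with hs | hs
  · rw [Qext, if_pos hs]
    exact ⟨le_refl _, by linarith⟩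
  · rw [Qext, if_neg (not_le.2 hs)]
    exact Q_mem hgB (lt_min hs one_pos) (min_le_right _ _)

lemma Qext_preim (hg : Measurable g) (hgB : ∀ t ∈ Set.Icc (0:ℝ) 1, g t ∈ Set.Icc (-C) C)
    (y : ℝ) : {s | Qext C g s ≤ y} ∩ Ioc (0:ℝ) 1 = Ioc 0 (cdf g y) := by
  ext s
  simp only [mem_inter_iff, mem_setOf_eq, mem_Ioc]
  constructor
  · rintro ⟨hQ, hs0, hs1⟩
    rw [Qext_eq ⟨hs0, hs1⟩] at hQ
    exact ⟨hs0, (Q_le_iff hg hgB hs0 hs1).1 hQ⟩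
  · rintro ⟨hs0, hscdf⟩
    have hs1 : s ≤ 1 := le_trans hscdf (cdf_le_one g y)
    refine ⟨?_, hs0, hs1⟩
    rw [Qext_eq ⟨hs0, hs1⟩]
    exact (Q_le_iff hg hgB hs0 hs1).2 hscdf

/-- Sub-level sets of a monotone function are sandwiched between intervals. -/
lemma mono_sandwich (hmono : MonotoneOn h (Set.Icc (0:ℝ) 1)) (y : ℝ) :
    Ioo 0 (cdf h y) ⊆ {t ∈ Set.Icc (0:ℝ) 1 | h t ≤ y} ∧
    {t ∈ Set.Icc (0:ℝ) 1 | h t ≤ y} ⊆ Icc 0 (cdf h y) := by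
  set D := {t ∈ Set.Icc (0:ℝ) 1 | h t ≤ y} with hD
  have hDsub : D ⊆ Icc (0:ℝ) 1 := fun t ht => ht.1
  have hdown : ∀ t ∈ D, ∀ t' ∈ Set.Icc (0:ℝ) 1, t' ≤ t → t' ∈ D := by
    rintro t ⟨ht, hty⟩ t' ht' htt'
    exact ⟨ht', le_trans (hmono ht' ht htt') hty⟩
  have hvol : volume D = ecdf h y := rfl
  constructor
  · intro t ht
    by_contra htD
    have hsub : D ⊆ Ico 0 t := by
      intro u hu
      refine ⟨(hDsub hu).1, ?_⟩
      by_contra hut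
      push_neg at hut
      exact htD (hdown u hu t ⟨le_of_lt ht.1, le_trans (le_of_lt ht.2) (cdf_le_one h y)⟩ hut)
    have hle : ecdf h y ≤ ENNReal.ofReal t := by
      rw [← hvol]
      refine (measure_mono hsub).trans ?_
      rw [Real.volume_Ico]
      simp
    have ht2 := ht.2
    rw [cdf] at ht2
    have := ENNReal.toReal_mono ofReal_ne_top hle
    rw [ENNReal.toReal_ofReal (le_of_lt ht.1)] at this
    linarith
  · intro t ht
    refine ⟨(hDsub ht).1, ?_⟩
    have hsub : Icc 0 t ⊆ D := by
      intro u hu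
      exact hdown t ht u ⟨hu.1, le_trans hu.2 (hDsub ht).2⟩ hu.2
    have hle : ENNReal.ofReal t ≤ ecdf h y := by
      rw [← hvol]
      refine le_trans ?_ (measure_mono hsub)
      rw [Real.volume_Icc]
      simp
    have := ENNReal.toReal_mono (ecdf_ne_top h y) hle
    rw [ENNReal.toReal_ofReal (hDsub ht).1] at this
    exact this

/-! ### Measures of joint sublevel/superlevel sets -/

lemma sandwich_meas {S : Set ℝ} {c a : ℝ} (hsub : Ioo c a ⊆ S) (hsup : S ⊆ Icc c a) :
    volume S = ENNReal.ofReal (a - c) := by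
  apply le_antisymm
  · refine (measure_mono hsup).trans ?_
    rw [Real.volume_Icc]
  · refine le_trans ?_ (measure_mono hsub)
    rw [Real.volume_Ioo]

lemma ofReal_toReal_sub {x y : ℝ≥0∞} (hx : x ≠ ∞) (hy : y ≠ ∞) :
    ENNReal.ofReal (x.toReal - y.toReal) = x - y := by
  rcases le_total y x with hxy | hxy
  · rw [ENNReal.ofReal_sub _ toReal_nonneg, ENNReal.ofReal_toReal hx, ENNReal.ofReal_toReal hy]
  · rw [tsub_eq_zero_of_le hxy, ENNReal.ofReal_eq_zero.2]
    have := ENNReal.toReal_mono hy hxy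
    linarith

lemma restrict_inter_Ioc (S : Set ℝ) :
    (volume.restrict (Set.Icc (0:ℝ) 1)) S = volume (S ∩ Ioc (0:ℝ) 1) := by
  rw [Measure.restrict_apply' measurableSet_Icc]
  apply le_antisymm
  · refine le_trans (measure_mono ?_) ((measure_union_le (S ∩ Ioc (0:ℝ) 1) {(0:ℝ)}).trans ?_)
    · rintro t ⟨htS, ht0, ht1⟩
      rcases eq_or_lt_of_le ht0 with h0 | h0
      · exact Or.inr (mem_singleton_iff.2 h0.symm)
      · exact Or.inl ⟨htS, h0, ht1⟩
    · rw [Real.volume_singleton, add_zero]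
  · exact measure_mono (inter_subset_inter_right _ Ioc_subset_Icc_self)

lemma meas_Q_h (hg : Measurable g) (hgB : ∀ t ∈ Set.Icc (0:ℝ) 1, g t ∈ Set.Icc (-C) C)
    (hmono : MonotoneOn h (Set.Icc (0:ℝ) 1)) (y z : ℝ) :
    (volume.restrict (Set.Icc (0:ℝ) 1)) {t | Qext C g t ≤ y ∧ z < h t}
      = ecdf g y - ecdf h z := by
  have hvol : volume ({t | Qext C g t ≤ y ∧ z < h t} ∩ Ioc (0:ℝ) 1)
      = ENNReal.ofReal (cdf g y - cdf h z) := by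
    apply sandwich_meas
    · rintro t ⟨htc, hta⟩
      have ht0 : 0 < t := lt_of_le_of_lt (cdf_nonneg h z) htc
      have ht1 : t ≤ 1 := le_trans hta.le (cdf_le_one g y)
      refine ⟨⟨?_, ?_⟩, ht0, ht1⟩
      · have hmem : t ∈ Ioc (0:ℝ) (cdf g y) := ⟨ht0, hta.le⟩
        rw [← Qext_preim hg hgB y] at hmem
        exact hmem.1
      · by_contra hzh
        push_neg at hzh
        exact absurd ((mono_sandwich hmono z).2 ⟨⟨ht0.le, ht1⟩, hzh⟩).2 (not_le.2 htc)
    · rintro t ⟨⟨hQ, hzh⟩, ht0, ht1⟩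
      constructor
      · by_contra htc
        push_neg at htc
        exact absurd ((mono_sandwich hmono z).1 ⟨ht0, htc⟩).2 (not_le.2 hzh)
      · have hmem : t ∈ {s | Qext C g s ≤ y} ∩ Ioc (0:ℝ) 1 := ⟨hQ, ht0, ht1⟩
        rw [Qext_preim hg hgB y] at hmem
        exact hmem.2
  rw [restrict_inter_Ioc, hvol]
  simp only [cdf]
  exact ofReal_toReal_sub (ecdf_ne_top g y) (ecdf_ne_top h z)

lemma meas_h_Q (hg : Measurable g) (hgB : ∀ t ∈ Set.Icc (0:ℝ) 1, g t ∈ Set.Icc (-C) C)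
    (hmono : MonotoneOn h (Set.Icc (0:ℝ) 1)) (y z : ℝ) :
    (volume.restrict (Set.Icc (0:ℝ) 1)) {t | h t ≤ y ∧ z < Qext C g t}
      = ecdf h y - ecdf g z := by
  have hvol : volume ({t | h t ≤ y ∧ z < Qext C g t} ∩ Ioc (0:ℝ) 1)
      = ENNReal.ofReal (cdf h y - cdf g z) := by
    apply sandwich_meas
    · rintro t ⟨hta, htc⟩
      have ht0 : 0 < t := lt_of_le_of_lt (cdf_nonneg g z) hta
      have ht1 : t ≤ 1 := le_trans htc.le (cdf_le_one h y)
      refine ⟨⟨?_, ?_⟩, ht0, ht1⟩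
      · exact ((mono_sandwich hmono y).1 ⟨ht0, htc⟩).2
      · by_contra hzQ
        push_neg at hzQ
        have hmem : t ∈ {s | Qext C g s ≤ z} ∩ Ioc (0:ℝ) 1 := ⟨hzQ, ht0, ht1⟩
        rw [Qext_preim hg hgB z] at hmem
        exact absurd hmem.2 (not_le.2 hta)
    · rintro t ⟨⟨hhy, hzQ⟩, ht0, ht1⟩
      constructor
      · by_contra hta
        push_neg at hta
        have hmem : t ∈ Ioc (0:ℝ) (cdf g z) := ⟨ht0, hta.le⟩
        rw [← Qext_preim hg hgB z] at hmem
        exact absurd hzQ (not_lt.2 hmem.1)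
      · exact ((mono_sandwich hmono y).2 ⟨⟨ht0.le, ht1⟩, hhy⟩).2
  rw [restrict_inter_Ioc, hvol]
  simp only [cdf]
  exact ofReal_toReal_sub (ecdf_ne_top h y) (ecdf_ne_top g z)

lemma meas_pair_ge (g h : ℝ → ℝ) (y z : ℝ) :
    ecdf g y - ecdf h z ≤ (volume.restrict (Set.Icc (0:ℝ) 1)) {t | g t ≤ y ∧ z < h t} := by
  rw [tsub_le_iff_right]
  have h1 : ecdf g y = (volume.restrict (Set.Icc (0:ℝ) 1)) {t | g t ≤ y} := by
    rw [Measure.restrict_apply' measurableSet_Icc, ecdf, inter_comm]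
  have h2 : ecdf h z = (volume.restrict (Set.Icc (0:ℝ) 1)) {t | h t ≤ z} := by
    rw [Measure.restrict_apply' measurableSet_Icc, ecdf, inter_comm]
  rw [h1, h2]
  refine le_trans (measure_mono ?_) (measure_union_le _ _)
  intro t ht
  simp only [mem_setOf_eq, mem_union] at ht ⊢
  rcases le_or_gt (h t) z with hht | hht
  · exact Or.inr hht
  · exact Or.inl ⟨ht, hht⟩

/-! ### The level-set measure `ν` -/

def Tri (a b : ℝ) : Set (ℝ × ℝ) := {q | a ≤ q.1 ∧ q.1 ≤ q.2 ∧ q.2 < b}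

noncomputable def wfn (p : ℝ) : ℝ × ℝ → ℝ≥0∞ := fun q =>
  ENNReal.ofReal ((p * (p-1)) * (q.2 - q.1) ^ (p-2))

lemma Tri_measurableSet (a b : ℝ) : MeasurableSet (Tri a b) :=
  (measurableSet_le measurable_const measurable_fst).inter
    ((measurableSet_le measurable_fst measurable_snd).inter
      (measurableSet_lt measurable_snd measurable_const))

lemma wfn_measurable (p : ℝ) : Measurable (wfn p) :=
  ENNReal.measurable_ofReal.comp
    (measurable_const.mul ((measurable_snd.sub measurable_fst).pow measurable_const))

lemma rpow_lint {q u v : ℝ} (hq : 0 < q) (huv : u ≤ v) :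
    ∫⁻ z in Ioo u v, ENNReal.ofReal ((z - u) ^ (q-1)) = ENNReal.ofReal ((v-u)^q / q) := by
  have hexp : (-1:ℝ) < q - 1 := by linarith
  have hint : IntervalIntegrable (fun z => (z - u) ^ (q-1)) volume u v := by
    have := (intervalIntegral.intervalIntegrable_rpow' (a := 0) (b := v - u) hexp).comp_sub_right u
    simpa using this
  have hIOn : IntegrableOn (fun z => (z - u) ^ (q-1)) (Ioo u v) volume :=
    ((intervalIntegrable_iff_integrableOn_Ioc_of_le huv).1 hint).mono_set Ioo_subset_Ioc_self
  rw [← ofReal_integral_eq_lintegral_ofReal hIOn ?nn]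
  case nn =>
    filter_upwards [ae_restrict_mem measurableSet_Ioo] with z hz
    exact Real.rpow_nonneg (by linarith [hz.1]) _
  congr 1
  have h1 : ∫ z in Ioo u v, (z - u) ^ (q-1) = ∫ z in Ioc u v, (z - u) ^ (q-1) :=
    setIntegral_congr_set Ioo_ae_eq_Ioc
  rw [h1, ← intervalIntegral.integral_of_le huv,
    intervalIntegral.integral_comp_sub_right (fun x => x ^ (q-1)) u]
  simp only [sub_self]
  rw [integral_rpow (Or.inl hexp)]
  have hq1 : q - 1 + 1 = q := by ring
  rw [hq1, Real.zero_rpow (ne_of_gt hq)]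
  ring

lemma rpow_lint' {q u v : ℝ} (hq : 0 < q) (huv : u ≤ v) :
    ∫⁻ z in Ioo u v, ENNReal.ofReal ((v - z) ^ (q-1)) = ENNReal.ofReal ((v-u)^q / q) := by
  have hexp : (-1:ℝ) < q - 1 := by linarith
  have hint : IntervalIntegrable (fun z => (v - z) ^ (q-1)) volume u v := by
    have := ((intervalIntegral.intervalIntegrable_rpow' (a := 0) (b := v - u) hexp).comp_sub_left v).symm
    simpa using this
  have hIOn : IntegrableOn (fun z => (v - z) ^ (q-1)) (Ioo u v) volume :=
    ((intervalIntegrable_iff_integrableOn_Ioc_of_le huv).1 hint).mono_set Ioo_subset_Ioc_self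
  rw [← ofReal_integral_eq_lintegral_ofReal hIOn ?nn]
  case nn =>
    filter_upwards [ae_restrict_mem measurableSet_Ioo] with z hz
    exact Real.rpow_nonneg (by linarith [hz.2]) _
  congr 1
  have h1 : ∫ z in Ioo u v, (v - z) ^ (q-1) = ∫ z in Ioc u v, (v - z) ^ (q-1) :=
    setIntegral_congr_set Ioo_ae_eq_Ioc
  rw [h1, ← intervalIntegral.integral_of_le huv,
    intervalIntegral.integral_comp_sub_left (fun x => x ^ (q-1)) v]
  simp only [sub_self]
  rw [integral_rpow (Or.inl hexp)]
  have hq1 : q - 1 + 1 = q := by ring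
  rw [hq1, Real.zero_rpow (ne_of_gt hq)]
  ring

lemma tri_lint {p : ℝ} (hp1 : 1 < p) {a b : ℝ} (hab : a ≤ b) :
    ∫⁻ q : ℝ × ℝ, (Tri a b).indicator (wfn p) q = ENNReal.ofReal ((b - a) ^ p) := by
  have hp0 : (0:ℝ) < p := lt_trans one_pos hp1
  have hp10 : (0:ℝ) < p - 1 := by linarith
  have hmeas : Measurable ((Tri a b).indicator (wfn p)) :=
    (wfn_measurable p).indicator (Tri_measurableSet a b)
  rw [Measure.volume_eq_prod, lintegral_prod _ hmeas.aemeasurable]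
  have inner : ∀ y : ℝ, (∫⁻ z, (Tri a b).indicator (wfn p) (y, z)) =
      (Ico a b).indicator (fun y => ENNReal.ofReal (p * (b - y) ^ (p-1))) y := by
    intro y
    by_cases hy : a ≤ y ∧ y < b
    · have hset : (fun z => (Tri a b).indicator (wfn p) (y, z))
          = (Ico y b).indicator (fun z => ENNReal.ofReal ((p * (p-1)) * (z - y) ^ (p-2))) := by
        funext z
        rcases Classical.em (y ≤ z ∧ z < b) with hz | hz
        · rw [Set.indicator_of_mem (show (y, z) ∈ Tri a b from ⟨hy.1, hz.1, hz.2⟩) (wfn p),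
            Set.indicator_of_mem (Set.mem_Ico.2 hz)]
          rfl
        · rw [Set.indicator_of_notMem (fun hmem => hz ⟨hmem.2.1, hmem.2.2⟩),
            Set.indicator_of_notMem (fun hmem => hz (Set.mem_Ico.1 hmem))]
      rw [hset, lintegral_indicator measurableSet_Ico,
        ← Measure.restrict_congr_set Ioo_ae_eq_Ico, Set.indicator_of_mem (Set.mem_Ico.2 hy)]
      simp_rw [ENNReal.ofReal_mul (by positivity : (0:ℝ) ≤ p * (p-1))]
      have hm1 : Measurable fun z : ℝ => ENNReal.ofReal ((z - y) ^ (p - 2)) :=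
        ENNReal.measurable_ofReal.comp ((measurable_id.sub measurable_const).pow measurable_const)
      rw [lintegral_const_mul _ hm1]
      have hexp : p - 2 = (p - 1) - 1 := by ring
      calc ENNReal.ofReal (p * (p-1)) * ∫⁻ z in Ioo y b, ENNReal.ofReal ((z - y) ^ (p-2))
          = ENNReal.ofReal (p * (p-1)) * ENNReal.ofReal ((b - y) ^ (p-1) / (p-1)) := by
            rw [hexp, rpow_lint hp10 hy.2.le]
        _ = ENNReal.ofReal (p * (b - y) ^ (p-1)) := by
            rw [← ENNReal.ofReal_mul (by positivity : (0:ℝ) ≤ p * (p-1))]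
            congr 1
            field_simp
    · rw [Set.indicator_of_notMem (fun hmem => hy (Set.mem_Ico.1 hmem))]
      have hset : (fun z => (Tri a b).indicator (wfn p) (y, z)) = fun _ => 0 := by
        funext z
        rw [Set.indicator_of_notMem]
        rintro ⟨h1, h2, h3⟩
        exact hy ⟨h1, lt_of_le_of_lt h2 h3⟩
      rw [hset]
      exact lintegral_zero
  rw [lintegral_congr inner, lintegral_indicator measurableSet_Ico,
    ← Measure.restrict_congr_set Ioo_ae_eq_Ico]
  simp_rw [ENNReal.ofReal_mul hp0.le]
  have hm2 : Measurable fun y : ℝ => ENNReal.ofReal ((b - y) ^ (p - 1)) :=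
    ENNReal.measurable_ofReal.comp ((measurable_const.sub measurable_id).pow measurable_const)
  rw [lintegral_const_mul _ hm2]
  rw [rpow_lint' hp0 hab, ← ENNReal.ofReal_mul hp0.le]
  congr 1
  field_simp

noncomputable def nu (p C : ℝ) : Measure (ℝ × ℝ) :=
  if p = 1 then Measure.map (fun y => (y, y)) (volume.restrict (Ico (-C) C))
  else volume.withDensity ((Tri (-C) C).indicator (wfn p))

lemma hdiag : Measurable fun y : ℝ => (y, y) := measurable_id.prodMk measurable_id

lemma rect_measurableSet (a b : ℝ) : MeasurableSet {q : ℝ × ℝ | a ≤ q.1 ∧ q.2 < b} :=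
  (measurableSet_le measurable_const measurable_fst).inter
    (measurableSet_lt measurable_snd measurable_const)

lemma nu_rect_le {p C : ℝ} (hp : 1 ≤ p) {a b : ℝ} (ha : -C ≤ a) (hb : b ≤ C)
    (hab : a ≤ b) : nu p C {q : ℝ × ℝ | a ≤ q.1 ∧ q.2 < b} = ENNReal.ofReal ((b - a) ^ p) := by
  have hR := rect_measurableSet a b
  rcases eq_or_lt_of_le hp with hp1 | hp1
  · rw [nu, if_pos hp1.symm]
    rw [Measure.map_apply hdiag hR]
    have hpre : (fun y : ℝ => (y, y)) ⁻¹' {q : ℝ × ℝ | a ≤ q.1 ∧ q.2 < b} = Ico a b := by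
      ext y
      simp [Set.mem_Ico]
    rw [hpre, Measure.restrict_apply measurableSet_Ico]
    have hsub : Ico a b ∩ Ico (-C) C = Ico a b :=
      inter_eq_left.mpr fun y hy => ⟨le_trans ha hy.1, lt_of_lt_of_le hy.2 hb⟩
    rw [hsub, Real.volume_Ico, ← hp1, Real.rpow_one]
  · rw [nu, if_neg (by linarith : p ≠ 1)]
    rw [withDensity_apply _ hR, ← lintegral_indicator hR, Set.indicator_indicator]
    have hRT : {q : ℝ × ℝ | a ≤ q.1 ∧ q.2 < b} ∩ Tri (-C) C = Tri a b := by
      ext q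
      simp only [Tri, mem_inter_iff, mem_setOf_eq]
      constructor
      · rintro ⟨⟨h1, h2⟩, _, h4, _⟩
        exact ⟨h1, h4, h2⟩
      · rintro ⟨h1, h2, h3⟩
        exact ⟨⟨h1, h3⟩, le_trans ha h1, h2, lt_of_lt_of_le h3 hb⟩
    rw [hRT]
    exact tri_lint hp1 hab

lemma nu_rect_ge {p C : ℝ} {a b : ℝ} (hba : b ≤ a) :
    nu p C {q : ℝ × ℝ | a ≤ q.1 ∧ q.2 < b} = 0 := by
  have hR := rect_measurableSet a b
  by_cases hp1 : p = 1
  · rw [nu, if_pos hp1, Measure.map_apply hdiag hR]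
    have hpre : (fun y : ℝ => (y, y)) ⁻¹' {q : ℝ × ℝ | a ≤ q.1 ∧ q.2 < b} = ∅ := by
      ext y
      simp only [mem_preimage, mem_setOf_eq, mem_empty_iff_false, iff_false, not_and, not_lt]
      intro hy
      linarith
    rw [hpre]
    simp
  · rw [nu, if_neg hp1, withDensity_apply _ hR, ← lintegral_indicator hR, Set.indicator_indicator]
    have hRT : {q : ℝ × ℝ | a ≤ q.1 ∧ q.2 < b} ∩ Tri (-C) C = ∅ :=
      eq_empty_iff_forall_notMem.2 (by
        rintro ⟨y, z⟩ ⟨⟨h1, h2⟩, _, h4, _⟩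
        simp only at h1 h2 h4
        linarith)
    rw [hRT]
    simp

lemma nu_finite {p C : ℝ} (hp : 1 ≤ p) (hC : 0 ≤ C) : IsFiniteMeasure (nu p C) := by
  constructor
  by_cases hp1 : p = 1
  · rw [nu, if_pos hp1, Measure.map_apply hdiag MeasurableSet.univ,
      Set.preimage_univ, Measure.restrict_apply_univ, Real.volume_Ico]
    exact ofReal_lt_top
  · rw [nu, if_neg hp1, withDensity_apply _ MeasurableSet.univ, Measure.restrict_univ,
      tri_lint (lt_of_le_of_ne hp (Ne.symm hp1)) (by linarith : -C ≤ C)]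
    exact ofReal_lt_top

lemma I_finite : IsFiniteMeasure (volume.restrict (Set.Icc (0:ℝ) 1)) := by
  constructor
  rw [Measure.restrict_apply_univ, Real.volume_Icc]
  exact ofReal_lt_top

/-! ### The layer-cake representation -/

lemma layer_repr {p C : ℝ} (hp : 1 ≤ p) (hC : 0 ≤ C) {u v : ℝ → ℝ}
    (hu : Measurable u) (hv : Measurable v)
    (huB : ∀ t ∈ Set.Icc (0:ℝ) 1, u t ∈ Set.Icc (-C) C)
    (hvB : ∀ t ∈ Set.Icc (0:ℝ) 1, v t ∈ Set.Icc (-C) C) :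
    ∫⁻ t in Set.Icc (0:ℝ) 1, ENNReal.ofReal (|u t - v t| ^ p)
      = ∫⁻ q, ((volume.restrict (Set.Icc (0:ℝ) 1)) {t | u t ≤ q.1 ∧ q.2 < v t}
          + (volume.restrict (Set.Icc (0:ℝ) 1)) {t | v t ≤ q.1 ∧ q.2 < u t}) ∂(nu p C) := by
  haveI := I_finite
  haveI := nu_finite hp hC
  have swap : ∀ (a b : ℝ → ℝ), Measurable a → Measurable b →
      ∫⁻ q, (volume.restrict (Set.Icc (0:ℝ) 1)) {t | a t ≤ q.1 ∧ q.2 < b t} ∂(nu p C)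
        = ∫⁻ t in Set.Icc (0:ℝ) 1, nu p C {q : ℝ × ℝ | a t ≤ q.1 ∧ q.2 < b t} := by
    intro a b ha hb
    have hE : MeasurableSet {w : (ℝ × ℝ) × ℝ | a w.2 ≤ w.1.1 ∧ w.1.2 < b w.2} :=
      (measurableSet_le (ha.comp measurable_snd) measurable_fst.fst).inter
        (measurableSet_lt measurable_fst.snd (hb.comp measurable_snd))
    have h1 : ∀ q : ℝ × ℝ, (volume.restrict (Set.Icc (0:ℝ) 1)) {t | a t ≤ q.1 ∧ q.2 < b t}
        = ∫⁻ t in Set.Icc (0:ℝ) 1,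
            ({w : (ℝ × ℝ) × ℝ | a w.2 ≤ w.1.1 ∧ w.1.2 < b w.2}).indicator 1 (q, t) := by
      intro q
      have hslice : MeasurableSet {t : ℝ | a t ≤ q.1 ∧ q.2 < b t} :=
        (measurableSet_le ha measurable_const).inter (measurableSet_lt measurable_const hb)
      rw [← lintegral_indicator_one hslice]
      apply lintegral_congr
      intro t
      simp only [Set.indicator_apply, Set.mem_setOf_eq, Pi.one_apply]
    have h2 : ∀ t : ℝ, nu p C {q : ℝ × ℝ | a t ≤ q.1 ∧ q.2 < b t}
        = ∫⁻ q, ({w : (ℝ × ℝ) × ℝ | a w.2 ≤ w.1.1 ∧ w.1.2 < b w.2}).indicator 1 (q, t)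
            ∂(nu p C) := by
      intro t
      have hslice : MeasurableSet {q : ℝ × ℝ | a t ≤ q.1 ∧ q.2 < b t} :=
        rect_measurableSet _ _
      rw [← lintegral_indicator_one hslice]
      apply lintegral_congr
      intro q
      simp only [Set.indicator_apply, Set.mem_setOf_eq, Pi.one_apply]
    calc ∫⁻ q, (volume.restrict (Set.Icc (0:ℝ) 1)) {t | a t ≤ q.1 ∧ q.2 < b t} ∂(nu p C)
        = ∫⁻ q, (∫⁻ t in Set.Icc (0:ℝ) 1,
            ({w : (ℝ × ℝ) × ℝ | a w.2 ≤ w.1.1 ∧ w.1.2 < b w.2}).indicator 1 (q, t)) ∂(nu p C) :=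
          lintegral_congr h1
      _ = ∫⁻ t in Set.Icc (0:ℝ) 1, ∫⁻ q,
            ({w : (ℝ × ℝ) × ℝ | a w.2 ≤ w.1.1 ∧ w.1.2 < b w.2}).indicator 1 (q, t) ∂(nu p C) :=
          lintegral_lintegral_swap ((measurable_one.indicator hE).aemeasurable)
      _ = ∫⁻ t in Set.Icc (0:ℝ) 1, nu p C {q : ℝ × ℝ | a t ≤ q.1 ∧ q.2 < b t} :=
          (lintegral_congr h2).symm
  have hE1 : MeasurableSet {w : (ℝ × ℝ) × ℝ | u w.2 ≤ w.1.1 ∧ w.1.2 < v w.2} :=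
    (measurableSet_le (hu.comp measurable_snd) measurable_fst.fst).inter
      (measurableSet_lt measurable_fst.snd (hv.comp measurable_snd))
  have hE2 : MeasurableSet {w : (ℝ × ℝ) × ℝ | v w.2 ≤ w.1.1 ∧ w.1.2 < u w.2} :=
    (measurableSet_le (hv.comp measurable_snd) measurable_fst.fst).inter
      (measurableSet_lt measurable_fst.snd (hu.comp measurable_snd))
  have hm1 : Measurable fun q : ℝ × ℝ =>
      (volume.restrict (Set.Icc (0:ℝ) 1)) {t | u t ≤ q.1 ∧ q.2 < v t} :=
    measurable_measure_prodMk_left hE1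
  rw [lintegral_add_left hm1, swap u v hu hv, swap v u hv hu]
  have hmt1 : Measurable fun t : ℝ => nu p C {q : ℝ × ℝ | u t ≤ q.1 ∧ q.2 < v t} :=
    measurable_measure_prodMk_right hE1
  rw [← lintegral_add_left hmt1]
  apply lintegral_congr_ae
  filter_upwards [ae_restrict_mem measurableSet_Icc] with t ht
  rcases le_total (u t) (v t) with huv | huv
  · rw [nu_rect_le hp (huB t ht).1 (hvB t ht).2 huv, nu_rect_ge huv, add_zero,
      abs_sub_comm, abs_of_nonneg (sub_nonneg.2 huv)]
  · rw [nu_rect_ge huv, nu_rect_le hp (hvB t ht).1 (huB t ht).2 huv, zero_add,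
      abs_of_nonneg (sub_nonneg.2 huv)]

/-! ### The one-dimensional contraction -/

lemma oneDim {p C : ℝ} (hp : 1 ≤ p) (hC : 0 ≤ C) {g h : ℝ → ℝ}
    (hg : Measurable g) (hgB : ∀ t ∈ Set.Icc (0:ℝ) 1, g t ∈ Set.Icc (-C) C)
    (hh : Measurable h) (hhB : ∀ t ∈ Set.Icc (0:ℝ) 1, h t ∈ Set.Icc (-C) C)
    (hmono : MonotoneOn h (Set.Icc (0:ℝ) 1)) :
    ∫⁻ s in Set.Icc (0:ℝ) 1, ENNReal.ofReal (|Q g s - h s| ^ p)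
      ≤ ∫⁻ t in Set.Icc (0:ℝ) 1, ENNReal.ofReal (|g t - h t| ^ p) := by
  have hae : ∀ᵐ s ∂(volume.restrict (Set.Icc (0:ℝ) 1)), s ≠ 0 := by
    rw [ae_iff]
    have hset : {a : ℝ | ¬a ≠ 0} = {0} := by ext a; simp
    rw [hset, Measure.restrict_apply' measurableSet_Icc]
    exact measure_mono_null inter_subset_left Real.volume_singleton
  have hcongr : ∫⁻ s in Set.Icc (0:ℝ) 1, ENNReal.ofReal (|Q g s - h s| ^ p)
      = ∫⁻ s in Set.Icc (0:ℝ) 1, ENNReal.ofReal (|Qext C g s - h s| ^ p) := by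
    apply lintegral_congr_ae
    filter_upwards [ae_restrict_mem measurableSet_Icc, hae] with s hs hs0
    rw [Qext_eq ⟨lt_of_le_of_ne hs.1 (Ne.symm hs0), hs.2⟩]
  rw [hcongr,
    layer_repr hp hC (Qext_measurable hgB) hh (fun s _ => Qext_mem hC hgB s) hhB,
    layer_repr hp hC hg hh hgB hhB]
  apply lintegral_mono
  intro q
  dsimp only
  rw [meas_Q_h hg hgB hmono q.1 q.2, meas_h_Q hg hgB hmono q.1 q.2]
  exact add_le_add (meas_pair_ge g h q.1 q.2) (meas_pair_ge h g q.1 q.2)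

/-! ### Multi-dimensional lemmas -/

lemma update_mem_cube {d : ℕ} {x : Fin d → ℝ} {j : Fin d} {t : ℝ}
    (hx : x ∈ Set.Icc (0 : Fin d → ℝ) 1) (ht : t ∈ Set.Icc (0:ℝ) 1) :
    Function.update x j t ∈ Set.Icc (0 : Fin d → ℝ) 1 := by
  simp only [Set.mem_Icc, Pi.le_def] at hx ⊢
  constructor <;> intro i <;> by_cases hij : i = j
  · subst hij; simpa using ht.1
  · simpa [Function.update_of_ne hij] using hx.1 i
  · subst hij; simpa using ht.2
  · simpa [Function.update_of_ne hij] using hx.2 i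

lemma measurable_update_pair {d : ℕ} (j : Fin d) :
    Measurable fun q : (Fin d → ℝ) × ℝ => Function.update q.1 j q.2 := by
  apply measurable_pi_lambda
  intro i
  by_cases hij : i = j
  · subst hij
    simp only [Function.update_self]
    exact measurable_snd
  · simp only [Function.update_of_ne hij]
    exact (measurable_pi_apply i).comp measurable_fst

lemma measurable_cdf_fiber {d : ℕ} (j : Fin d) {f : (Fin d → ℝ) → ℝ} (hf : Measurable f)
    (c : ℝ) :
    Measurable fun x : Fin d → ℝ => cdf (fun t => f (Function.update x j t)) c := by
  have hE : MeasurableSet {q : (Fin d → ℝ) × ℝ |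
      q.2 ∈ Set.Icc (0:ℝ) 1 ∧ f (Function.update q.1 j q.2) ≤ c} :=
    (measurable_snd measurableSet_Icc).inter
      (measurableSet_le (hf.comp (measurable_update_pair j)) measurable_const)
  have hkey : (fun x : Fin d → ℝ => ecdf (fun t => f (Function.update x j t)) c)
      = fun x => volume (Prod.mk x ⁻¹' {q : (Fin d → ℝ) × ℝ |
          q.2 ∈ Set.Icc (0:ℝ) 1 ∧ f (Function.update q.1 j q.2) ≤ c}) := rfl
  simp only [cdf]
  apply ENNReal.measurable_toReal.comp
  rw [hkey]
  exact measurable_measure_prodMk_left hE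

lemma rearrCoord_measurable {C : ℝ} {d : ℕ} (j : Fin d) {f : (Fin d → ℝ) → ℝ}
    (hf : Measurable f) (hfB : ∀ x, f x ∈ Set.Icc (-C) C) :
    Measurable (rearrCoord j f) := by
  apply measurable_of_Iic
  intro c
  have hfib : ∀ x : Fin d → ℝ, ∀ t ∈ Set.Icc (0:ℝ) 1,
      f (Function.update x j t) ∈ Set.Icc (-C) C := fun x t _ => hfB _
  have hfibm : ∀ x : Fin d → ℝ, Measurable fun t => f (Function.update x j t) :=
    fun x => hf.comp (measurable_update x)
  have hkey : rearrCoord j f ⁻¹' Iic c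
      = ({x : Fin d → ℝ | (x j ≤ 0 ∨ 1 < x j) ∧ 0 ≤ c}
        ∪ {x | 0 < x j ∧ x j ≤ 1 ∧ x j ≤ cdf (fun t => f (Function.update x j t)) c}) := by
    ext x
    simp only [mem_preimage, mem_Iic, mem_union, mem_setOf_eq]
    rcases le_or_gt (x j) 0 with h0 | h0
    · rw [rearrCoord_eq_Q, Q_of_nonpos h0]
      constructor
      · intro hc
        exact Or.inl ⟨Or.inl h0, hc⟩
      · rintro (⟨_, hc⟩ | ⟨hpos, _⟩)
        · exact hc
        · linarith
    · rcases le_or_gt (x j) 1 with h1 | h1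
      · rw [rearrCoord_eq_Q, Q_le_iff (hfibm x) (hfib x) h0 h1]
        constructor
        · intro hcdf
          exact Or.inr ⟨h0, h1, hcdf⟩
        · rintro (⟨hd, _⟩ | ⟨_, _, hcdf⟩)
          · rcases hd with hd | hd <;> linarith
          · exact hcdf
      · rw [rearrCoord_eq_Q, Q_of_gt_one h1]
        constructor
        · intro hc
          exact Or.inl ⟨Or.inr h1, hc⟩
        · rintro (⟨_, hc⟩ | ⟨_, h1', _⟩)
          · exact hc
          · linarith
  rw [hkey]
  apply MeasurableSet.union
  · by_cases hc : 0 ≤ c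
    · have hset : {x : Fin d → ℝ | (x j ≤ 0 ∨ 1 < x j) ∧ 0 ≤ c}
          = {x | x j ≤ 0} ∪ {x | 1 < x j} := by
        ext x; simp [hc]
      rw [hset]
      exact ((measurable_pi_apply j) measurableSet_Iic).union
        ((measurable_pi_apply j) measurableSet_Ioi)
    · have hset : {x : Fin d → ℝ | (x j ≤ 0 ∨ 1 < x j) ∧ 0 ≤ c} = ∅ := by
        ext x; simp [hc]
      rw [hset]
      exact MeasurableSet.empty
  · exact ((measurable_pi_apply j) measurableSet_Ioi).inter
      (((measurable_pi_apply j) measurableSet_Iic).inter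
        (measurableSet_le (measurable_pi_apply j) (measurable_cdf_fiber j hf c)))

lemma rearrCoord_mem {C : ℝ} {d : ℕ} (j : Fin d) {f : (Fin d → ℝ) → ℝ} (hC : 0 ≤ C)
    (hf : Measurable f) (hfB : ∀ x, f x ∈ Set.Icc (-C) C) (x : Fin d → ℝ) :
    rearrCoord j f x ∈ Set.Icc (-C) C := by
  rw [rearrCoord_eq_Q]
  rcases le_or_gt (x j) 0 with h0 | h0
  · rw [Q_of_nonpos h0]
    exact ⟨by linarith, hC⟩
  rcases le_or_gt (x j) 1 with h1 | h1
  · exact Q_mem (fun t ht => hfB _) h0 h1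
  · rw [Q_of_gt_one h1]
    exact ⟨by linarith, hC⟩

lemma insertNth_mem_cube {n : ℕ} (j : Fin (n+1)) {t : ℝ} {xh : Fin n → ℝ}
    (ht : t ∈ Set.Icc (0:ℝ) 1) (hxh : xh ∈ Set.Icc (0 : Fin n → ℝ) 1) :
    j.insertNth t xh ∈ Set.Icc (0 : Fin (n+1) → ℝ) 1 := by
  simp only [Set.mem_Icc, Pi.le_def] at hxh ⊢
  constructor
  · refine (Fin.forall_iff_succAbove j).2 ⟨?_, fun k => ?_⟩
    · simpa using ht.1
    · simpa using hxh.1 k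
  · refine (Fin.forall_iff_succAbove j).2 ⟨?_, fun k => ?_⟩
    · simpa using ht.2
    · simpa using hxh.2 k

lemma insertNth_le_insertNth {n : ℕ} (j : Fin (n+1)) {t t' : ℝ} (htt' : t ≤ t')
    (xh : Fin n → ℝ) :
    (j.insertNth t xh : Fin (n+1) → ℝ) ≤ (j.insertNth t' xh : Fin (n+1) → ℝ) := by
  rw [Pi.le_def]
  refine (Fin.forall_iff_succAbove j).2 ⟨?_, fun k => ?_⟩
  · simpa using htt'
  · simp

lemma measurable_insertNth {n : ℕ} (j : Fin (n+1)) (xh : Fin n → ℝ) :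
    Measurable fun t : ℝ => (j.insertNth t xh : Fin (n+1) → ℝ) := by
  have hrw : (fun t : ℝ => (j.insertNth t xh : Fin (n+1) → ℝ))
      = fun t => Function.update (j.insertNth (0:ℝ) xh : Fin (n+1) → ℝ) j t := by
    funext t
    rw [Fin.update_insertNth]
  rw [hrw]
  exact measurable_update _

lemma lintegral_cube_succ {n : ℕ} (j : Fin (n+1)) {F : (Fin (n+1) → ℝ) → ℝ≥0∞}
    (hF : Measurable F) :
    ∫⁻ x in Set.Icc (0 : Fin (n+1) → ℝ) 1, F x
      = ∫⁻ xh in Set.Icc (0 : Fin n → ℝ) 1, ∫⁻ t in Set.Icc (0:ℝ) 1, F (j.insertNth t xh) := by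
  set e := MeasurableEquiv.piFinSuccAbove (fun _ : Fin (n+1) => ℝ) j with he
  have hmp : MeasurePreserving e volume volume := volume_preserving_piFinSuccAbove _ j
  have hS : MeasurableSet (Set.Icc (0:ℝ) 1 ×ˢ Set.Icc (0 : Fin n → ℝ) 1) :=
    measurableSet_Icc.prod measurableSet_Icc
  have hex : ∀ x, e x = (x j, fun k => x (j.succAbove k)) := fun x => rfl
  have hsymm : ∀ (t : ℝ) (xh : Fin n → ℝ), e.symm (t, xh) = j.insertNth t xh :=
    fun t xh => rfl
  have hpre : e ⁻¹' (Set.Icc (0:ℝ) 1 ×ˢ Set.Icc (0 : Fin n → ℝ) 1)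
      = Set.Icc (0 : Fin (n+1) → ℝ) 1 := by
    ext x
    simp only [Set.mem_preimage, hex, Set.mem_prod, Set.mem_Icc, Pi.le_def]
    constructor
    · rintro ⟨⟨h1, h2⟩, h3, h4⟩
      constructor
      · exact (Fin.forall_iff_succAbove j).2 ⟨h1, h3⟩
      · exact (Fin.forall_iff_succAbove j).2 ⟨h2, h4⟩
    · rintro ⟨h1, h2⟩
      exact ⟨⟨h1 j, h2 j⟩, fun k => h1 _, fun k => h2 _⟩
  have hmap : Measure.map e (volume.restrict
      (e ⁻¹' (Set.Icc (0:ℝ) 1 ×ˢ Set.Icc (0 : Fin n → ℝ) 1)))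
      = volume.restrict (Set.Icc (0:ℝ) 1 ×ˢ Set.Icc (0 : Fin n → ℝ) 1) := by
    rw [← hmp.map_eq, Measure.restrict_map e.measurable hS]
  calc ∫⁻ x in Set.Icc (0 : Fin (n+1) → ℝ) 1, F x
      = ∫⁻ x in e ⁻¹' (Set.Icc (0:ℝ) 1 ×ˢ Set.Icc (0 : Fin n → ℝ) 1),
          F (e.symm (e x)) := by
        rw [hpre]
        exact lintegral_congr fun x => by rw [e.symm_apply_apply]
    _ = ∫⁻ z, F (e.symm z) ∂(Measure.map e (volume.restrict
          (e ⁻¹' (Set.Icc (0:ℝ) 1 ×ˢ Set.Icc (0 : Fin n → ℝ) 1)))) :=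
        (lintegral_map (hF.comp e.symm.measurable) e.measurable).symm
    _ = ∫⁻ z in Set.Icc (0:ℝ) 1 ×ˢ Set.Icc (0 : Fin n → ℝ) 1, F (e.symm z) := by
        rw [hmap]
    _ = ∫⁻ xh in Set.Icc (0 : Fin n → ℝ) 1, ∫⁻ t in Set.Icc (0:ℝ) 1,
          F (j.insertNth t xh) := by
        have hcm : Measurable fun z : ℝ × (Fin n → ℝ) => F (e.symm z) :=
          hF.comp e.symm.measurable
        rw [Measure.volume_eq_prod, ← Measure.prod_restrict,
          lintegral_prod_symm _ hcm.aemeasurable]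
        exact lintegral_congr fun xh => lintegral_congr fun t => by rw [hsymm]

lemma step {p C : ℝ} (hp : 1 ≤ p) (hC : 0 ≤ C) {n : ℕ} (j : Fin (n+1))
    {f f₀ : (Fin (n+1) → ℝ) → ℝ}
    (hf : Measurable f) (hfB : ∀ x, f x ∈ Set.Icc (-C) C)
    (hf₀ : Measurable f₀)
    (hf₀B : ∀ x ∈ Set.Icc (0 : Fin (n+1) → ℝ) 1, f₀ x ∈ Set.Icc (-C) C)
    (hf₀mono : MonotoneOn f₀ (Set.Icc (0 : Fin (n+1) → ℝ) 1)) :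
    ∫⁻ x in Set.Icc (0 : Fin (n+1) → ℝ) 1, ENNReal.ofReal (|rearrCoord j f x - f₀ x| ^ p)
      ≤ ∫⁻ x in Set.Icc (0 : Fin (n+1) → ℝ) 1, ENNReal.ofReal (|f x - f₀ x| ^ p) := by
  have hrm : Measurable (rearrCoord j f) := rearrCoord_measurable j hf hfB
  have hmeas1 : Measurable fun x => ENNReal.ofReal (|rearrCoord j f x - f₀ x| ^ p) :=
    ENNReal.measurable_ofReal.comp (((hrm.sub hf₀).abs).pow measurable_const)
  have hmeas2 : Measurable fun x => ENNReal.ofReal (|f x - f₀ x| ^ p) :=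
    ENNReal.measurable_ofReal.comp (((hf.sub hf₀).abs).pow measurable_const)
  rw [lintegral_cube_succ j hmeas1, lintegral_cube_succ j hmeas2]
  apply lintegral_mono_ae
  filter_upwards [ae_restrict_mem measurableSet_Icc] with xh hxh
  have hins : Measurable fun t : ℝ => (j.insertNth t xh : Fin (n+1) → ℝ) := measurable_insertNth j xh
  have hQr : ∀ t : ℝ, rearrCoord j f (j.insertNth t xh)
      = Q (fun u => f (j.insertNth u xh)) t := by
    intro t
    simp only [rearrCoord_eq_Q, Fin.update_insertNth, Fin.insertNth_apply_same]
  have hrw : ∀ t : ℝ, ENNReal.ofReal (|rearrCoord j f (j.insertNth t xh)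
        - f₀ (j.insertNth t xh)| ^ p)
      = ENNReal.ofReal (|Q (fun u => f (j.insertNth u xh)) t
        - f₀ (j.insertNth t xh)| ^ p) := fun t => by rw [hQr t]
  rw [lintegral_congr hrw]
  exact oneDim hp hC (hf.comp hins) (fun t _ => hfB _) (hf₀.comp hins)
    (fun t ht => hf₀B _ (insertNth_mem_cube j ht hxh))
    (fun t ht t' ht' htt' => hf₀mono (insertNth_mem_cube j ht hxh)
      (insertNth_mem_cube j ht' hxh) (insertNth_le_insertNth j htt' xh))

lemma rearrCoord_congr {d : ℕ} (j : Fin d) {f f' : (Fin d → ℝ) → ℝ}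
    (hff' : Set.EqOn f f' (Set.Icc 0 1)) :
    Set.EqOn (rearrCoord j f) (rearrCoord j f') (Set.Icc 0 1) := by
  intro x hx
  unfold rearrCoord
  congr 1
  ext y
  simp only [mem_setOf_eq]
  have hset : Set.Icc (0:ℝ) 1 ∩ {t | f (Function.update x j t) ≤ y}
      = Set.Icc (0:ℝ) 1 ∩ {t | f' (Function.update x j t) ≤ y} := by
    ext t
    simp only [mem_inter_iff, mem_setOf_eq]
    constructor
    · rintro ⟨ht, hle⟩
      exact ⟨ht, by rwa [← hff' (update_mem_cube hx ht)]⟩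
    · rintro ⟨ht, hle⟩
      exact ⟨ht, by rwa [hff' (update_mem_cube hx ht)]⟩
  rw [hset]

lemma foldr_congr {d : ℕ} {f f' : (Fin d → ℝ) → ℝ} (L : List (Fin d))
    (hff' : Set.EqOn f f' (Set.Icc 0 1)) :
    Set.EqOn (L.foldr (fun j g => rearrCoord j g) f)
      (L.foldr (fun j g => rearrCoord j g) f') (Set.Icc 0 1) := by
  induction L with
  | nil => exact hff'
  | cons j L ih =>
      intro x hx
      simp only [List.foldr_cons]
      exact rearrCoord_congr j ih hx

lemma chain {p C : ℝ} (hp : 1 ≤ p) (hC : 0 ≤ C) {n : ℕ}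
    {f₀ : (Fin (n+1) → ℝ) → ℝ} (hf₀ : Measurable f₀)
    (hf₀B : ∀ x ∈ Set.Icc (0 : Fin (n+1) → ℝ) 1, f₀ x ∈ Set.Icc (-C) C)
    (hf₀mono : MonotoneOn f₀ (Set.Icc (0 : Fin (n+1) → ℝ) 1))
    {f : (Fin (n+1) → ℝ) → ℝ} (hf : Measurable f) (hfB : ∀ x, f x ∈ Set.Icc (-C) C)
    (L : List (Fin (n+1))) :
    Measurable (L.foldr (fun j g => rearrCoord j g) f)
    ∧ (∀ x, L.foldr (fun j g => rearrCoord j g) f x ∈ Set.Icc (-C) C)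
    ∧ ∫⁻ x in Set.Icc (0 : Fin (n+1) → ℝ) 1,
        ENNReal.ofReal (|L.foldr (fun j g => rearrCoord j g) f x - f₀ x| ^ p)
      ≤ ∫⁻ x in Set.Icc (0 : Fin (n+1) → ℝ) 1, ENNReal.ofReal (|f x - f₀ x| ^ p) := by
  induction L with
  | nil => exact ⟨hf, hfB, le_rfl⟩
  | cons j L ih =>
      obtain ⟨hm, hB, hle⟩ := ih
      refine ⟨rearrCoord_measurable j hm hB, rearrCoord_mem j hC hm hB, ?_⟩
      simp only [List.foldr_cons]
      exact le_trans (step hp hC j hm hB hf₀ hf₀B hf₀mono) hle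

end Rearr

/-- The `π`-rearranged estimate weakly reduces the `L^p` estimation error against
a weakly increasing target, for every `p ∈ [1,∞)`. -/
theorem rearrPerm_reduces_Lp_error {d : ℕ} (π : Equiv.Perm (Fin d)) (K : Set ℝ)
    (hK : Bornology.IsBounded K)
    (f₀ fhat : (Fin d → ℝ) → ℝ)
    (hf₀K : ∀ x ∈ Set.Icc (0 : Fin d → ℝ) 1, f₀ x ∈ K)
    (hfhatK : ∀ x ∈ Set.Icc (0 : Fin d → ℝ) 1, fhat x ∈ K)
    (hf₀mono : MonotoneOn f₀ (Set.Icc (0 : Fin d → ℝ) 1))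
    (hf₀meas : Measurable f₀) (hfhatmeas : Measurable fhat)
    (p : ℝ) (hp : 1 ≤ p) :
    (∫ x in Set.Icc (0 : Fin d → ℝ) 1, |rearrPerm π fhat x - f₀ x| ^ p) ^ (1 / p) ≤
      (∫ x in Set.Icc (0 : Fin d → ℝ) 1, |fhat x - f₀ x| ^ p) ^ (1 / p) := by
  open Rearr Set ENNReal in
  cases d with
  | zero =>
      have hrp : rearrPerm π fhat = fhat := by
        simp [rearrPerm]
      rw [hrp]
  | succ n =>
      -- a uniform bound on K
      obtain ⟨r, hr⟩ := hK.subset_closedBall 0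
      set C : ℝ := max r 0 with hCdef
      have hC : 0 ≤ C := le_max_right r 0
      have hKC : K ⊆ Set.Icc (-C) C := by
        intro z hz
        have := hr hz
        rw [Metric.mem_closedBall, Real.dist_eq, sub_zero] at this
        have habs := abs_le.1 this
        constructor
        · have : -(max r 0) ≤ -r := neg_le_neg (le_max_left r 0)
          linarith [habs.1]
        · exact le_trans habs.2 (le_max_left r 0)
      -- clamped estimate
      set f' : (Fin (n+1) → ℝ) → ℝ := fun x => max (-C) (min C (fhat x)) with hf'def
      have hf'meas : Measurable f' := measurable_const.max (measurable_const.min hfhatmeas)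
      have hf'B : ∀ x, f' x ∈ Set.Icc (-C) C := fun x =>
        ⟨le_max_left _ _, max_le (by linarith) (min_le_left _ _)⟩
      have hf'eq : Set.EqOn fhat f' (Set.Icc 0 1) := by
        intro x hx
        have hm := hKC (hfhatK x hx)
        rw [hf'def]
        simp only
        rw [min_eq_right hm.2, max_eq_right hm.1]
      have hf₀B : ∀ x ∈ Set.Icc (0 : Fin (n+1) → ℝ) 1, f₀ x ∈ Set.Icc (-C) C :=
        fun x hx => hKC (hf₀K x hx)
      set L : List (Fin (n+1)) := List.ofFn (fun i => π i) with hLdef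
      obtain ⟨hGm, hGB, hGle⟩ := chain hp hC hf₀meas hf₀B hf₀mono hf'meas hf'B L
      set G : (Fin (n+1) → ℝ) → ℝ := L.foldr (fun j g => rearrCoord j g) f' with hGdef
      have hRP : Set.EqOn (rearrPerm π fhat) G (Set.Icc 0 1) := foldr_congr L hf'eq
      have key : ∫⁻ x in Set.Icc (0 : Fin (n+1) → ℝ) 1,
            ENNReal.ofReal (|rearrPerm π fhat x - f₀ x| ^ p)
          ≤ ∫⁻ x in Set.Icc (0 : Fin (n+1) → ℝ) 1,
            ENNReal.ofReal (|fhat x - f₀ x| ^ p) := by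
        have e1 : ∫⁻ x in Set.Icc (0 : Fin (n+1) → ℝ) 1,
              ENNReal.ofReal (|rearrPerm π fhat x - f₀ x| ^ p)
            = ∫⁻ x in Set.Icc (0 : Fin (n+1) → ℝ) 1,
              ENNReal.ofReal (|G x - f₀ x| ^ p) := by
          apply lintegral_congr_ae
          filter_upwards [ae_restrict_mem measurableSet_Icc] with x hx
          rw [hRP hx]
        have e2 : ∫⁻ x in Set.Icc (0 : Fin (n+1) → ℝ) 1,
              ENNReal.ofReal (|f' x - f₀ x| ^ p)
            = ∫⁻ x in Set.Icc (0 : Fin (n+1) → ℝ) 1,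
              ENNReal.ofReal (|fhat x - f₀ x| ^ p) := by
          apply lintegral_congr_ae
          filter_upwards [ae_restrict_mem measurableSet_Icc] with x hx
          rw [hf'eq hx]
        rw [e1, ← e2]
        exact hGle
      have hfin : ∫⁻ x in Set.Icc (0 : Fin (n+1) → ℝ) 1,
          ENNReal.ofReal (|fhat x - f₀ x| ^ p) < ∞ := by
        have hb : ∀ᵐ x ∂(volume.restrict (Set.Icc (0 : Fin (n+1) → ℝ) 1)),
            ENNReal.ofReal (|fhat x - f₀ x| ^ p) ≤ ENNReal.ofReal ((2*C) ^ p) := by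
          filter_upwards [ae_restrict_mem measurableSet_Icc] with x hx
          apply ENNReal.ofReal_le_ofReal
          apply Real.rpow_le_rpow (abs_nonneg _) ?_ (by linarith)
          have h1 := hKC (hfhatK x hx)
          have h2 := hf₀B x hx
          rw [abs_le]
          constructor
          · linarith [h1.1, h2.2]
          · linarith [h1.2, h2.1]
        calc ∫⁻ x in Set.Icc (0 : Fin (n+1) → ℝ) 1, ENNReal.ofReal (|fhat x - f₀ x| ^ p)
            ≤ ∫⁻ _x in Set.Icc (0 : Fin (n+1) → ℝ) 1, ENNReal.ofReal ((2*C) ^ p) :=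
              lintegral_mono_ae hb
          _ = ENNReal.ofReal ((2*C) ^ p) * volume (Set.Icc (0 : Fin (n+1) → ℝ) 1) :=
              setLIntegral_const _ _
          _ < ∞ := ENNReal.mul_lt_top ofReal_lt_top isCompact_Icc.measure_lt_top
      have hGaem : AEMeasurable (rearrPerm π fhat)
          (volume.restrict (Set.Icc (0 : Fin (n+1) → ℝ) 1)) := by
        refine hGm.aemeasurable.congr ?_
        filter_upwards [ae_restrict_mem measurableSet_Icc] with x hx
        exact (hRP hx).symm
      have conv : ∀ u : (Fin (n+1) → ℝ) → ℝ,
          AEMeasurable u (volume.restrict (Set.Icc (0 : Fin (n+1) → ℝ) 1)) →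
          ∫ x in Set.Icc (0 : Fin (n+1) → ℝ) 1, |u x - f₀ x| ^ p
            = (∫⁻ x in Set.Icc (0 : Fin (n+1) → ℝ) 1,
                ENNReal.ofReal (|u x - f₀ x| ^ p)).toReal := by
        intro u hu
        rw [integral_eq_lintegral_of_nonneg_ae]
        · exact ae_of_all _ fun x => Real.rpow_nonneg (abs_nonneg _) p
        · exact ((measurable_id.pow measurable_const).comp_aemeasurable
            (continuous_abs.measurable.comp_aemeasurable
              (hu.sub hf₀meas.aemeasurable))).aestronglyMeasurable
      rw [conv (rearrPerm π fhat) hGaem, conv fhat hfhatmeas.aemeasurable]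
      exact Real.rpow_le_rpow ENNReal.toReal_nonneg (ENNReal.toReal_mono hfin.ne key)
        (div_nonneg zero_le_one (by linarith))
end
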